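/- arXiv:1804.02897 — 16 statements merged into one kernel-verified Lean document; each statement's English description precedes it below -/
import Mathlib

section
/- Let n ≥ 2 be a natural number and α, β real numbers with β > 0 and α² = n·β. Then every real n×n matrix M whose sum of entries equals n·α and whose sum of squared entries equals n·β satisfies det M = 0. -/
theorem det_eq_zero_of_sq_sum_eq (n : ℕ) (hn : 2 ≤ n) (α β : ℝ)
    (hβ : 0 < β) (h : α ^ 2 = n * β) :
    ∀ M : Matrix (Fin n) (Fin n) ℝ,
      (∑ i, ∑ j, M i j) = n * α → (∑ i, ∑ j, (M i j) ^ 2) = n * β →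
        M.det = 0 := by
  intro M h1 h2
  have hn0 : (n : ℝ) ≠ 0 := by positivity
  set a : ℝ := α / n with ha
  have expand : ∀ i : Fin n, ∑ j, (M i j - a) ^ 2
      = (∑ j, (M i j) ^ 2) - 2 * a * (∑ j, M i j) + n * a ^ 2 := by
    intro i
    have : ∀ j : Fin n, (M i j - a) ^ 2 = (M i j) ^ 2 - 2 * a * (M i j) + a ^ 2 := by
      intro j; ring
    simp only [this, Finset.sum_add_distrib, Finset.sum_sub_distrib,
      Finset.mul_sum, Finset.sum_const, Finset.card_fin, nsmul_eq_mul]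
  have key : ∑ i, ∑ j, (M i j - a) ^ 2 = 0 := by
    simp only [expand, Finset.sum_add_distrib, Finset.sum_sub_distrib,
      ← Finset.mul_sum, Finset.sum_const, Finset.card_fin, nsmul_eq_mul]
    rw [h1, h2]
    field_simp [ha]
    ring_nf
    have h3 : (n:ℝ)^3 * α^2 = (n:ℝ)^4 * β := by rw [h]; ring
    have hna : (n:ℝ) * a = α := by rw [ha]; field_simp
    linear_combination ((n:ℝ) * a - α) * hna - h
  have hall : ∀ i j, M i j = a := by
    intro i j
    have h0 : ∀ i ∈ (Finset.univ : Finset (Fin n)), (0:ℝ) ≤ ∑ j, (M i j - a) ^ 2 := by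
      intro i _; positivity
    have hi : ∑ j, (M i j - a) ^ 2 = 0 := by
      have := (Finset.sum_eq_zero_iff_of_nonneg h0).mp key i (Finset.mem_univ i)
      exact this
    have h0' : ∀ j ∈ (Finset.univ : Finset (Fin n)), (0:ℝ) ≤ (M i j - a) ^ 2 := by
      intro j _; positivity
    have := (Finset.sum_eq_zero_iff_of_nonneg h0').mp hi j (Finset.mem_univ j)
    have := pow_eq_zero_iff (n := 2) (by norm_num) |>.mp this
    linarith
  have hrow : M ⟨0, by omega⟩ = M ⟨1, by omega⟩ := by
    funext j; rw [hall, hall]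
  exact Matrix.det_zero_of_row_eq (by simp [Fin.ext_iff]) hrow
end

section
/- Let n ≥ 2 be a natural number and α, β real numbers with β > 0 and α² ≤ n·β. Then there exists a real n×n matrix M with sum of entries n·α and sum of squared entries n·β such that det M = α·((n·β − α²)/(n−1))^((n−1)/2). -/
theorem exists_matrix_det_eq_gasper (n : ℕ) (hn : 2 ≤ n) (α β : ℝ)
    (hβ : 0 < β) (h : α ^ 2 ≤ n * β) :
    ∃ M : Matrix (Fin n) (Fin n) ℝ,
      (∑ i, ∑ j, M i j) = n * α ∧ (∑ i, ∑ j, (M i j) ^ 2) = n * β ∧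
        M.det = α * ((n * β - α ^ 2) / (n - 1)) ^ (((n : ℝ) - 1) / 2) := by
  have hn1 : (2:ℝ) ≤ (n:ℝ) := by exact_mod_cast hn
  have hn0 : (n:ℝ) ≠ 0 := by positivity
  set t : ℝ := (n * β - α ^ 2) / (n - 1) with ht_def
  have ht : 0 ≤ t := div_nonneg (by linarith) (by linarith)
  set r : ℝ := Real.sqrt t with hr_def
  have hr2 : r ^ 2 = t := Real.sq_sqrt ht
  have hr0 : 0 ≤ r := Real.sqrt_nonneg t
  set x : ℝ := (α - r) / n with hx_def
  have hnx : (n:ℝ) * x = α - r := by rw [hx_def]; field_simp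
  refine ⟨Matrix.of fun i j => x + if i = j then r else 0, ?_, ?_, ?_⟩
  · simp only [Matrix.of_apply, Finset.sum_add_distrib, Finset.sum_ite_eq,
      Finset.mem_univ, if_true, Finset.sum_const, Finset.card_univ,
      Fintype.card_fin, nsmul_eq_mul]
    push_cast
    nlinarith [hnx]
  · have key : ∀ i j : Fin n, (x + if i = j then r else 0) ^ 2
        = x ^ 2 + if i = j then 2 * x * r + r ^ 2 else 0 := by
      intro i j; split_ifs <;> ring
    simp only [Matrix.of_apply, key, Finset.sum_add_distrib, Finset.sum_ite_eq,
      Finset.mem_univ, if_true, Finset.sum_const, Finset.card_univ,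
      Fintype.card_fin, nsmul_eq_mul]
    have hnt : ((n:ℝ) - 1) * t = n * β - α ^ 2 := by
      rw [ht_def]
      field_simp
      rw [mul_comm, mul_div_assoc, div_self (ne_of_gt (by linarith : (0:ℝ) < (n:ℝ) - 1)), mul_one]
    linear_combination ((n:ℝ) * x + α + r) * hnx + ((n:ℝ) - 1) * hr2 + hnt
  · have hpow : r ^ (n - 1) = t ^ (((n : ℝ) - 1) / 2) := by
      rw [hr_def, Real.sqrt_eq_rpow, ← Real.rpow_natCast (t ^ ((1:ℝ)/2)) (n-1),
        ← Real.rpow_mul ht]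
      congr 1
      have : ((n - 1 : ℕ) : ℝ) = (n:ℝ) - 1 := by
        push_cast [Nat.cast_sub (by omega : 1 ≤ n)]; ring
      rw [this]; ring
    rw [← hpow]
    rcases eq_or_lt_of_le hr0 with hr | hr
    · -- r = 0 : constant matrix, det = 0
      have hrz : r = 0 := hr.symm
      have : Matrix.det (Matrix.of fun i j : Fin n => x + if i = j then r else 0) = 0 := by
        apply Matrix.det_zero_of_row_eq (i := ⟨0, by omega⟩) (j := ⟨1, by omega⟩)
        · simp [Fin.ext_iff]
        · funext k; simp [hrz, Fin.ext_iff]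
      rw [this, hrz]
      rw [zero_pow (by omega)]
      ring
    · have hrne : r ≠ 0 := ne_of_gt hr
      have hM : (Matrix.of fun i j : Fin n => x + if i = j then r else 0)
          = r • (1 + Matrix.replicateCol Unit (fun _ => x / r) * Matrix.replicateRow Unit (fun _ => (1:ℝ))) := by
        ext i j
        simp [Matrix.one_apply, Matrix.mul_apply, mul_add]
        split_ifs <;> field_simp <;> ring
      rw [hM, Matrix.det_smul, Matrix.det_one_add_replicateCol_mul_replicateRow]
      simp only [dotProduct, Finset.sum_const, Finset.card_univ,
        Fintype.card_fin, nsmul_eq_mul, one_mul, mul_one]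
      have hrn : r ^ n = r * r ^ (n - 1) := by
        rw [← pow_succ']; congr 1; omega
      have h1 : (1:ℝ) + ↑n * (x / r) = α / r := by
        rw [hx_def]; field_simp; ring
      rw [h1, hrn]
      field_simp
end

section
/- Let n ≥ 2 be a natural number and α, β real numbers with β > 0 and α² ≤ β. Then there exists a real n×n matrix M with sum of entries n·α and sum of squared entries n·β such that det M = β^(n/2). -/
theorem exists_matrix_det_eq_beta_pow (n : ℕ) (hn : 2 ≤ n) (α β : ℝ)
    (hβ : 0 < β) (h : α ^ 2 ≤ β) :
    ∃ M : Matrix (Fin n) (Fin n) ℝ,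
      (∑ i, ∑ j, M i j) = n * α ∧ (∑ i, ∑ j, (M i j) ^ 2) = n * β ∧
        M.det = β ^ ((n : ℝ) / 2) := by
  have hnpos : 0 < n := by omega
  have hn0 : (0:ℝ) < (n:ℝ) := by exact_mod_cast hnpos
  obtain ⟨σ, hσdef⟩ : ∃ σ : ℝ, σ = Real.sqrt β := ⟨_, rfl⟩
  obtain ⟨γ, hγdef⟩ : ∃ γ : ℝ, γ = Real.sqrt (β - α ^ 2) := ⟨_, rfl⟩
  have hσpos : 0 < σ := hσdef ▸ Real.sqrt_pos.mpr hβ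
  have hσne : σ ≠ 0 := ne_of_gt hσpos
  have hσ2 : σ ^ 2 = β := hσdef ▸ Real.sq_sqrt hβ.le
  have hγ2 : γ ^ 2 = β - α ^ 2 := hγdef ▸ Real.sq_sqrt (by linarith)
  have hsn : Real.sqrt n * Real.sqrt n = (n:ℝ) := Real.mul_self_sqrt (le_of_lt hn0)
  have hsnne : Real.sqrt n ≠ 0 := by positivity
  have hs2 : Real.sqrt 2 * Real.sqrt 2 = (2:ℝ) := Real.mul_self_sqrt (by norm_num)
  have hs2ne : Real.sqrt 2 ≠ 0 := by positivity
  -- the two distinguished indices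
  obtain ⟨i0, hi0⟩ : ∃ i0 : Fin n, i0 = ⟨0, by omega⟩ := ⟨_, rfl⟩
  obtain ⟨i1, hi1⟩ : ∃ i1 : Fin n, i1 = ⟨1, by omega⟩ := ⟨_, rfl⟩
  have hi01 : i0 ≠ i1 := by simp [hi0, hi1, Fin.ext_iff]
  -- the vectors u (normalized all-ones) and v (orthonormal to u)
  obtain ⟨u, hu⟩ : ∃ u : Fin n → ℝ, ∀ i, u i = (Real.sqrt n)⁻¹ := ⟨_, fun _ => rfl⟩
  obtain ⟨v, hv⟩ : ∃ v : Fin n → ℝ,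
      ∀ i, v i = if i = i0 then (Real.sqrt 2)⁻¹ else if i = i1 then -(Real.sqrt 2)⁻¹ else 0 :=
    ⟨_, fun _ => rfl⟩
  have hv0 : v i0 = (Real.sqrt 2)⁻¹ := by rw [hv]; simp
  have hv1' : v i1 = -(Real.sqrt 2)⁻¹ := by rw [hv]; simp [hi01.symm]
  -- sum over a function supported on {i0, i1}
  have hpair : ∀ f : Fin n → ℝ, (∀ i, i ≠ i0 → i ≠ i1 → f i = 0) → ∑ i, f i = f i0 + f i1 := by
    intro f hf
    rw [← Finset.sum_pair hi01]
    symm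
    apply Finset.sum_subset (Finset.subset_univ _)
    intro x _ hx
    simp only [Finset.mem_insert, Finset.mem_singleton, not_or] at hx
    exact hf x hx.1 hx.2
  have hu1 : ∑ j, u j = Real.sqrt n := by
    rw [Finset.sum_congr rfl fun j _ => hu j, Finset.sum_const, Finset.card_univ,
      Fintype.card_fin, nsmul_eq_mul]
    rw [← hsn]
    field_simp
    rw [Real.sqrt_sq (Real.sqrt_nonneg _)]
  have hv1 : ∑ j, v j = 0 := by
    rw [hpair v (by intro i h1 h2; rw [hv]; simp [h1, h2]), hv0, hv1']
    ring
  have hu2 : ∑ j, u j * u j = 1 := by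
    have step : ∀ j : Fin n, u j * u j = ((n:ℝ))⁻¹ := by
      intro j; rw [hu, ← mul_inv, hsn]
    rw [Finset.sum_congr rfl fun j _ => step j, Finset.sum_const, Finset.card_univ,
      Fintype.card_fin, nsmul_eq_mul]
    field_simp
  have hv2 : ∑ j, v j * v j = 1 := by
    rw [hpair (fun j => v j * v j) (by intro i h1 h2; show v i * v i = 0; rw [hv]; simp [h1, h2]), hv0, hv1']
    rw [show (Real.sqrt 2)⁻¹ * (Real.sqrt 2)⁻¹ + -(Real.sqrt 2)⁻¹ * -(Real.sqrt 2)⁻¹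
        = 2 * ((Real.sqrt 2) * (Real.sqrt 2))⁻¹ by rw [mul_inv]; ring, hs2]
    norm_num
  have huv : ∑ j, u j * v j = 0 := by
    rw [hpair (fun j => u j * v j) (by intro i h1 h2; show u i * v i = 0; rw [hv]; simp [h1, h2])]
    simp only [hv0, hv1', hu]
    ring
  have hvu : ∑ j, v j * u j = 0 := by
    rw [← huv]; exact Finset.sum_congr rfl fun j _ => mul_comm _ _
  -- key linear-combination sum lemmas
  have hlin : ∀ a b : ℝ, ∑ j, (a * u j + b * v j) = a * Real.sqrt n := by
    intro a b
    rw [Finset.sum_add_distrib, ← Finset.mul_sum, ← Finset.mul_sum, hu1, hv1, mul_zero, add_zero]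
  have hlinu : ∀ a b : ℝ, ∑ j, (a * u j + b * v j) * u j = a := by
    intro a b
    have e : ∀ j : Fin n, (a * u j + b * v j) * u j = a * (u j * u j) + b * (v j * u j) := by
      intro j; ring
    rw [Finset.sum_congr rfl fun j _ => e j, Finset.sum_add_distrib,
      ← Finset.mul_sum, ← Finset.mul_sum, hu2, hvu, mul_one, mul_zero, add_zero]
  have hlinv : ∀ a b : ℝ, ∑ j, (a * u j + b * v j) * v j = b := by
    intro a b
    have e : ∀ j : Fin n, (a * u j + b * v j) * v j = a * (u j * v j) + b * (v j * v j) := by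
      intro j; ring
    rw [Finset.sum_congr rfl fun j _ => e j, Finset.sum_add_distrib,
      ← Finset.mul_sum, ← Finset.mul_sum, huv, hv2, mul_one, mul_zero, zero_add]
  -- the rank-2 update matrices
  obtain ⟨U, hU⟩ : ∃ U : Matrix (Fin n) (Fin 2) ℝ,
      U = fun i k => if k = 0 then u i else v i := ⟨_, rfl⟩
  obtain ⟨V, hV⟩ : ∃ V : Matrix (Fin 2) (Fin n) ℝ,
      V = fun k j => σ⁻¹ * (if k = 0 then (α - σ) * u j - γ * v j
        else (α - σ) * v j + γ * u j) := ⟨_, rfl⟩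
  have hU0 : ∀ i, U i 0 = u i := by intro i; rw [hU]; simp
  have hU1 : ∀ i, U i 1 = v i := by intro i; rw [hU]; simp
  have hV0 : ∀ j, V 0 j = σ⁻¹ * ((α - σ) * u j - γ * v j) := by intro j; rw [hV]; simp
  have hV1 : ∀ j, V 1 j = σ⁻¹ * ((α - σ) * v j + γ * u j) := by intro j; rw [hV]; simp
  set M : Matrix (Fin n) (Fin n) ℝ := σ • (1 + U * V) with hM
  -- entries of M
  have hMapply : ∀ i j, M i j = σ * (if i = j then 1 else 0)
      + (((α - σ) * u i + γ * v i) * u j + ((α - σ) * v i - γ * u i) * v j) := by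
    intro i j
    rw [hM]
    simp only [Matrix.smul_apply, Matrix.add_apply, Matrix.one_apply, Matrix.mul_apply,
      Fin.sum_univ_two, smul_eq_mul, hU0, hU1, hV0, hV1]
    field_simp
    ring
  refine ⟨M, ?_, ?_, ?_⟩
  · -- sum of entries
    have hrow : ∀ i, ∑ j, M i j = σ + (((α - σ) * u i + γ * v i) * Real.sqrt n) := by
      intro i
      rw [Finset.sum_congr rfl fun j _ => hMapply i j, Finset.sum_add_distrib,
        ← Finset.mul_sum]
      have hite : ∑ j, (if i = j then (1:ℝ) else 0) = 1 := by simp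
      rw [hite, mul_one]
      congr 1
      have e : ∀ j : Fin n, ((α - σ) * u i + γ * v i) * u j + ((α - σ) * v i - γ * u i) * v j
          = (((α - σ) * u i + γ * v i) * u j + ((α - σ) * v i - γ * u i) * v j) := fun _ => rfl
      exact hlin _ _
    rw [Finset.sum_congr rfl fun i _ => hrow i, Finset.sum_add_distrib,
      Finset.sum_const, Finset.card_univ, Fintype.card_fin, nsmul_eq_mul,
      ← Finset.sum_mul, hlin, mul_assoc, hsn]
    ring
  · -- sum of squares of entries
    have hrow : ∀ i, ∑ j, (M i j) ^ 2 = β := by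
      intro i
      obtain ⟨A, hA⟩ : ∃ A : ℝ, A = (α - σ) * u i + γ * v i := ⟨_, rfl⟩
      obtain ⟨B, hB⟩ : ∃ B : ℝ, B = (α - σ) * v i - γ * u i := ⟨_, rfl⟩
      have step : ∀ j, (M i j) ^ 2
          = (if i = j then σ ^ 2 + 2 * σ * (A * u j + B * v j) else 0)
            + (A * u j + B * v j) ^ 2 := by
        intro j
        rw [hMapply i j, ← hA, ← hB]
        by_cases hij : i = j
        · simp only [if_pos hij]; ring
        · simp only [if_neg hij]; ring
      rw [Finset.sum_congr rfl fun j _ => step j, Finset.sum_add_distrib]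
      have h1 : ∑ j, (if i = j then σ ^ 2 + 2 * σ * (A * u j + B * v j) else 0)
          = σ ^ 2 + 2 * σ * (A * u i + B * v i) := by
        rw [Finset.sum_ite_eq]; simp
      have h2 : ∑ j, (A * u j + B * v j) ^ 2 = A ^ 2 + B ^ 2 := by
        have e : ∀ j : Fin n, (A * u j + B * v j) ^ 2
            = (A ^ 2) * (u j * u j) + (2 * A * B) * (u j * v j) + (B ^ 2) * (v j * v j) := by
          intro j; ring
        rw [Finset.sum_congr rfl fun j _ => e j, Finset.sum_add_distrib, Finset.sum_add_distrib,
          ← Finset.mul_sum, ← Finset.mul_sum, ← Finset.mul_sum, hu2, huv, hv2]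
        ring
      rw [h1, h2, hA, hB]
      linear_combination (1 - (u i * u i + v i * v i)) * hσ2 + (u i * u i + v i * v i) * hγ2
    rw [Finset.sum_congr rfl fun i _ => hrow i, Finset.sum_const, Finset.card_univ,
      Fintype.card_fin, nsmul_eq_mul]
  · -- determinant
    have hdet1 : M.det = σ ^ n * Matrix.det (1 + U * V) := by
      rw [hM, Matrix.det_smul, Fintype.card_fin]
    have hVU : Matrix.det (1 + U * V) = Matrix.det (1 + V * U) :=
      Matrix.det_one_add_mul_comm U V
    have hVU00 : (V * U) 0 0 = σ⁻¹ * (α - σ) := by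
      rw [Matrix.mul_apply]
      have e : ∀ j : Fin n, V 0 j * U j 0
          = σ⁻¹ * (((α - σ) * u j + (-γ) * v j) * u j) := by
        intro j; rw [hV0, hU0]; ring
      rw [Finset.sum_congr rfl fun j _ => e j, ← Finset.mul_sum, hlinu]
    have hVU01 : (V * U) 0 1 = σ⁻¹ * (-γ) := by
      rw [Matrix.mul_apply]
      have e : ∀ j : Fin n, V 0 j * U j 1
          = σ⁻¹ * (((α - σ) * u j + (-γ) * v j) * v j) := by
        intro j; rw [hV0, hU1]; ring
      rw [Finset.sum_congr rfl fun j _ => e j, ← Finset.mul_sum, hlinv]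
    have hVU10 : (V * U) 1 0 = σ⁻¹ * γ := by
      rw [Matrix.mul_apply]
      have e : ∀ j : Fin n, V 1 j * U j 0
          = σ⁻¹ * ((γ * u j + (α - σ) * v j) * u j) := by
        intro j; rw [hV1, hU0]; ring
      rw [Finset.sum_congr rfl fun j _ => e j, ← Finset.mul_sum, hlinu]
    have hVU11 : (V * U) 1 1 = σ⁻¹ * (α - σ) := by
      rw [Matrix.mul_apply]
      have e : ∀ j : Fin n, V 1 j * U j 1
          = σ⁻¹ * ((γ * u j + (α - σ) * v j) * v j) := by
        intro j; rw [hV1, hU1]; ring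
      rw [Finset.sum_congr rfl fun j _ => e j, ← Finset.mul_sum, hlinv]
    have hdet2 : Matrix.det (1 + V * U) = 1 := by
      rw [Matrix.det_fin_two]
      simp only [Matrix.add_apply, Matrix.one_apply_eq,
        Matrix.one_apply_ne (by decide : (0 : Fin 2) ≠ 1),
        Matrix.one_apply_ne (by decide : (1 : Fin 2) ≠ 0), hVU00, hVU01, hVU10, hVU11]
      have hσne2 : σ ^ 2 ≠ 0 := by positivity
      field_simp
      linarith [hσ2, hγ2]
    have hpow : σ ^ n = β ^ ((n : ℝ) / 2) := by
      rw [hσdef, Real.sqrt_eq_rpow]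
      rw [← Real.rpow_natCast (β ^ ((1:ℝ)/2)) n, ← Real.rpow_mul hβ.le]
      congr 1
      ring
    rw [hdet1, hVU, hdet2, mul_one, hpow]
end

section
/- Let n ≥ 2 be a natural number and α, β real numbers with β > 0 and α² ≤ n·β. Then |α|·((n·β − α²)/(n−1))^((n−1)/2) ≤ β^(n/2), with equality if and only if α² = β. -/
open Finset in
lemma gasper_aux_ident (m : ℕ) (y : ℝ) :
    (y - 1) ^ 2 * ∑ k ∈ range m, (k + 1 : ℝ) * y ^ k
      = m * y ^ (m + 1) - (m + 1) * y ^ m + 1 := by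
  induction m with
  | zero => simp
  | succ m ih =>
    rw [Finset.sum_range_succ, mul_add, ih]
    push_cast
    ring

lemma gasper_key (m : ℕ) (hm : 1 ≤ m) (y : ℝ) (hy : 0 ≤ y) :
    ((m + 1 : ℝ) - m * y) * y ^ m ≤ 1 ∧
      (((m + 1 : ℝ) - m * y) * y ^ m = 1 ↔ y = 1) := by
  have hS : (1 : ℝ) ≤ ∑ k ∈ Finset.range m, (k + 1 : ℝ) * y ^ k := by
    have h0 : ∀ k ∈ Finset.range m, (0:ℝ) ≤ (k + 1 : ℝ) * y ^ k := fun k _ =>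
      mul_nonneg (by positivity) (pow_nonneg hy k)
    calc (1:ℝ) = ((0:ℕ) + 1 : ℝ) * y ^ (0:ℕ) := by simp
    _ ≤ ∑ k ∈ Finset.range m, (k + 1 : ℝ) * y ^ k :=
      Finset.single_le_sum h0 (Finset.mem_range.mpr hm)
  have hid : 1 - ((m + 1 : ℝ) - m * y) * y ^ m
      = (y - 1) ^ 2 * ∑ k ∈ Finset.range m, (k + 1 : ℝ) * y ^ k := by
    rw [gasper_aux_ident]; ring
  constructor
  · nlinarith [sq_nonneg (y - 1)]
  · constructor
    · intro he
      have : (y - 1) ^ 2 * ∑ k ∈ Finset.range m, (k + 1 : ℝ) * y ^ k = 0 := by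
        rw [← hid, he]; ring
      have hy1 : (y - 1) ^ 2 = 0 := by nlinarith
      have := pow_eq_zero_iff (n := 2) (by norm_num) |>.mp hy1
      linarith
    · intro he; rw [he]; simp

theorem gasper_bound_compare (n : ℕ) (hn : 2 ≤ n) (α β : ℝ)
    (hβ : 0 < β) (h : α ^ 2 ≤ n * β) :
    |α| * ((n * β - α ^ 2) / (n - 1)) ^ (((n : ℝ) - 1) / 2) ≤ β ^ ((n : ℝ) / 2)
      ∧ (|α| * ((n * β - α ^ 2) / (n - 1)) ^ (((n : ℝ) - 1) / 2) = β ^ ((n : ℝ) / 2)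
          ↔ α ^ 2 = β) := by
  obtain ⟨m, rfl⟩ : ∃ m, n = m + 1 := ⟨n - 1, by omega⟩
  have hm : 1 ≤ m := by omega
  have hmR : (0:ℝ) < m := by exact_mod_cast hm
  set x : ℝ := α ^ 2 with hxdef
  have hx : 0 ≤ x := sq_nonneg α
  set a : ℝ := ((m+1 : ℕ) * β - x) / ((m+1 : ℕ) - 1 : ℝ) with hadef
  have hcast : ((m+1 : ℕ) : ℝ) - 1 = (m : ℝ) := by push_cast; ring
  have ha : 0 ≤ a := by
    rw [hadef, hcast]
    exact div_nonneg (by linarith) hmR.le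
  have hxa : x = ((m:ℝ) + 1) * β - m * a := by
    rw [hadef, hcast]
    field_simp
    push_cast; ring
  -- key inequality for x * a ^ m
  set y : ℝ := a / β with hydef
  have hy : 0 ≤ y := div_nonneg ha hβ.le
  have hay : a = y * β := by rw [hydef]; field_simp
  obtain ⟨hle, heq⟩ := gasper_key m hm y hy
  have hxy : x = β * ((m + 1 : ℝ) - m * y) := by rw [hxa, hay]; ring
  have hprod : x * a ^ m = β ^ (m+1) * (((m + 1 : ℝ) - m * y) * y ^ m) := by
    rw [hxy, hay, mul_pow]; ring
  have hβn : (0:ℝ) < β ^ (m+1) := pow_pos hβ _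
  have hkey : x * a ^ m ≤ β ^ (m+1) := by
    rw [hprod]
    nlinarith
  have hkeyeq : x * a ^ m = β ^ (m+1) ↔ x = β := by
    constructor
    · intro he
      have h1 : ((m + 1 : ℝ) - m * y) * y ^ m = 1 := by
        rw [hprod] at he
        field_simp at he
        nlinarith
      have hy1 : y = 1 := heq.mp h1
      rw [hxy, hy1]; ring
    · intro he
      have hy1 : y = 1 := by
        have : (m:ℝ) * y = m := by rw [hxy] at he; nlinarith
        field_simp at this
        tauto
      rw [hprod, hy1]
      simp
  -- rewrite LHS and RHS as square roots
  have hLHS : |α| * a ^ ((((m+1:ℕ) : ℝ) - 1) / 2) = Real.sqrt (x * a ^ m) := by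
    rw [hcast]
    have h1 : a ^ ((m : ℝ) / 2) = Real.sqrt (a ^ m) := by
      rw [Real.sqrt_eq_rpow, ← Real.rpow_natCast a m, ← Real.rpow_mul ha, mul_one_div]
    rw [h1, ← Real.sqrt_sq_eq_abs, ← Real.sqrt_mul hx]
  have hRHS : β ^ (((m+1:ℕ) : ℝ) / 2) = Real.sqrt (β ^ (m+1)) := by
    rw [Real.sqrt_eq_rpow, ← Real.rpow_natCast β (m+1), ← Real.rpow_mul hβ.le, mul_one_div]
  rw [hLHS, hRHS]
  refine ⟨Real.sqrt_le_sqrt hkey, ?_⟩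
  rw [Real.sqrt_inj (mul_nonneg hx (pow_nonneg ha m)) hβn.le]
  exact hkeyeq
end

section
/- Let n ≥ 2 be a natural number and α, β real numbers with β > 0, α² < n·β and α² ≤ β. Let M be a real n×n matrix with sum of entries n·α and sum of squared entries n·β whose determinant is maximal among all such matrices (i.e. det X ≤ det M for every real n×n matrix X with s(X) = n·α and q(X) = n·β). Then M·Mᵀ = β·I and det M = β^(n/2). -/
open Matrix

lemma amgm_forces_eq {n : ℕ} {β : ℝ} (hβ : 0 < β) (lam : Fin n → ℝ)
    (h0 : ∀ i, 0 ≤ lam i) (hsum : ∑ i, lam i = n * β)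
    (hprod : β ^ n ≤ ∏ i, lam i) : ∀ i, lam i = β := by
  have hpos : ∀ i, 0 < lam i := by
    intro i
    rcases (h0 i).lt_or_eq with h | h
    · exact h
    · exfalso
      have : (∏ j, lam j) = 0 := Finset.prod_eq_zero (Finset.mem_univ i) h.symm
      have := hprod.trans_eq this
      nlinarith [pow_pos hβ n]
  set f : Fin n → ℝ := fun i => lam i / β with hf
  have hfpos : ∀ i, 0 < f i := fun i => div_pos (hpos i) hβ
  have hfsum : ∑ i, f i = n := by
    simp only [hf]
    rw [← Finset.sum_div, hsum]
    field_simp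
  have hfprod : (1:ℝ) ≤ ∏ i, f i := by
    simp only [hf]
    rw [Finset.prod_div_distrib]
    rw [Finset.prod_const, Finset.card_univ, Fintype.card_fin]
    rw [le_div_iff₀ (pow_pos hβ n), one_mul]
    exact hprod
  have hlogsum : 0 ≤ ∑ i, Real.log (f i) := by
    rw [← Real.log_prod (fun i _ => (hfpos i).ne')]
    have := Real.log_le_log (by norm_num) hfprod
    simpa using this
  have hterm : ∀ i, 0 ≤ f i - 1 - Real.log (f i) := by
    intro i
    have := Real.log_le_sub_one_of_pos (hfpos i)
    linarith
  have hsum0 : ∑ i, (f i - 1 - Real.log (f i)) ≤ 0 := by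
    have : ∑ i, (f i - 1 - Real.log (f i))
        = (∑ i, f i) - n - ∑ i, Real.log (f i) := by
      simp [Finset.sum_sub_distrib]
    rw [this, hfsum]
    linarith
  have hzero : ∀ i ∈ Finset.univ, f i - 1 - Real.log (f i) = 0 := by
    have hle : ∑ i, (f i - 1 - Real.log (f i)) = 0 :=
      le_antisymm hsum0 (Finset.sum_nonneg fun i _ => hterm i)
    exact (Finset.sum_eq_zero_iff_of_nonneg (fun i _ => hterm i)).mp hle
  intro i
  have hi := hzero i (Finset.mem_univ i)
  have hfi : f i = 1 := by
    by_contra hne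
    have := Real.log_lt_sub_one_of_pos (hfpos i) hne
    linarith
  have : lam i / β = 1 := hfi
  field_simp at this
  linarith


lemma trace_eq_sum_eig {n : ℕ} {G : Matrix (Fin n) (Fin n) ℝ} (hH : G.IsHermitian) :
    G.trace = ∑ i, hH.eigenvalues i := by
  conv_lhs => rw [hH.spectral_theorem, Unitary.conjStarAlgAut_apply]
  rw [Matrix.trace_mul_cycle]
  rw [Unitary.coe_star_mul_self hH.eigenvectorUnitary, Matrix.one_mul, Matrix.trace_diagonal]
  simp

lemma eq_smul_one_of_eig {n : ℕ} {β : ℝ} {G : Matrix (Fin n) (Fin n) ℝ} (hH : G.IsHermitian)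
    (hall : ∀ i, hH.eigenvalues i = β) : G = β • (1 : Matrix (Fin n) (Fin n) ℝ) := by
  have hdiag : Matrix.diagonal (RCLike.ofReal ∘ hH.eigenvalues)
      = β • (1 : Matrix (Fin n) (Fin n) ℝ) := by
    ext i j
    by_cases h : i = j <;>
      simp [Matrix.diagonal_apply, Matrix.one_apply, h, hall]
  conv_lhs => rw [hH.spectral_theorem, hdiag]
  rw [Unitary.conjStarAlgAut_apply, Matrix.mul_smul, Matrix.smul_mul, Matrix.mul_one,
    (Matrix.mem_unitaryGroup_iff).mp hH.eigenvectorUnitary.2]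


lemma trace_mul_transpose_self' {n : ℕ} (X : Matrix (Fin n) (Fin n) ℝ) :
    (X * Xᵀ).trace = ∑ i, ∑ j, (X i j) ^ 2 := by
  simp [Matrix.trace, Matrix.mul_apply, Matrix.diag, sq]

lemma sum_pair' {n : ℕ} {i0 i1 : Fin n} (h : i0 ≠ i1) (a b : ℝ) :
    ∑ i, (if i = i0 then a else if i = i1 then b else 0) = a + b := by
  have key : ∀ i : Fin n, (if i = i0 then a else if i = i1 then b else 0)
      = (if i = i0 then a else 0) + (if i = i1 then b else 0) := by
    intro i
    by_cases h0 : i = i0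
    · subst h0; simp [h]
    · by_cases h1 : i = i1 <;> simp [h0, h1, h.symm]
  simp only [key, Finset.sum_add_distrib, Finset.sum_ite_eq', Finset.mem_univ, if_true]

lemma sum_sum_mul {n : ℕ} (B : Matrix (Fin n) (Fin 2) ℝ) (C : Matrix (Fin 2) (Fin n) ℝ) :
    ∑ i, ∑ j, (B * C) i j = ∑ k, (∑ i, B i k) * (∑ j, C k j) := by
  simp only [Matrix.mul_apply]
  calc ∑ i, ∑ j, ∑ k, B i k * C k j
      = ∑ i, ∑ k, ∑ j, B i k * C k j := by
        exact Finset.sum_congr rfl fun i _ => Finset.sum_comm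
    _ = ∑ i, ∑ k, B i k * ∑ j, C k j := by simp [Finset.mul_sum]
    _ = ∑ k, ∑ i, B i k * ∑ j, C k j := Finset.sum_comm
    _ = ∑ k, (∑ i, B i k) * ∑ j, C k j := by simp [Finset.sum_mul]

lemma rotA_eq (c s : ℝ) (hcs : c ^ 2 + s ^ 2 = 1) :
    !![c - 1, -s; s, c - 1] + !![c - 1, -s; s, c - 1]ᵀ
      + !![c - 1, -s; s, c - 1] * !![c - 1, -s; s, c - 1]ᵀ = 0 := by
  have hT : !![c - 1, -s; s, c - 1]ᵀ = !![c - 1, s; -s, c - 1] := by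
    ext i j; fin_cases i <;> fin_cases j <;> simp
  rw [hT, Matrix.mul_fin_two]
  ext i j
  fin_cases i <;> fin_cases j <;> · simp; nlinarith [hcs]

lemma rotA_det (c s : ℝ) (hcs : c ^ 2 + s ^ 2 = 1) :
    (1 + !![c - 1, -s; s, c - 1]).det = 1 := by
  have h1 : (1 : Matrix (Fin 2) (Fin 2) ℝ) + !![c - 1, -s; s, c - 1] = !![c, -s; s, c] := by
    ext i j; fin_cases i <;> fin_cases j <;> simp [Matrix.one_apply]
  rw [h1, Matrix.det_fin_two_of]
  nlinarith [hcs]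

lemma exists_good_matrix {n : ℕ} (hn : 2 ≤ n) {α β : ℝ} (hβ : 0 < β) (h2 : α ^ 2 ≤ β) :
    ∃ X : Matrix (Fin n) (Fin n) ℝ, (∑ i, ∑ j, X i j) = n * α ∧
      (∑ i, ∑ j, (X i j) ^ 2) = n * β ∧ X.det = (Real.sqrt β) ^ n := by
  have hnpos : (0:ℝ) < n := by positivity
  have hsqβ : Real.sqrt β > 0 := Real.sqrt_pos.mpr hβ
  set c : ℝ := α / Real.sqrt β with hc
  set s : ℝ := Real.sqrt (1 - c ^ 2) with hsdef
  have hc2 : c ^ 2 ≤ 1 := by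
    rw [hc, div_pow, Real.sq_sqrt hβ.le]
    exact div_le_one_of_le₀ h2 hβ.le
  have hs2 : s ^ 2 = 1 - c ^ 2 := Real.sq_sqrt (by linarith)
  have hcs : c ^ 2 + s ^ 2 = 1 := by rw [hs2]; ring
  set i0 : Fin n := ⟨0, by omega⟩ with hi0
  set i1 : Fin n := ⟨1, by omega⟩ with hi1
  have hne : i0 ≠ i1 := by simp [hi0, hi1, Fin.ext_iff]
  set r : ℝ := (Real.sqrt 2)⁻¹ with hr
  set t : ℝ := (Real.sqrt n)⁻¹ with ht
  have hr2 : r * r = 1 / 2 := by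
    rw [hr, ← mul_inv, Real.mul_self_sqrt (by norm_num)]
    norm_num
  have ht2 : t * t = 1 / n := by
    rw [ht, ← mul_inv, Real.mul_self_sqrt hnpos.le]
    norm_num
  set u : Fin n → ℝ := fun _ => t with hu
  set v : Fin n → ℝ := fun i => if i = i0 then r else if i = i1 then -r else 0 with hv
  have hsumu : ∑ i, u i = n * t := by simp [hu, Finset.sum_const, mul_comm]
  have hsumv : ∑ i, v i = 0 := by rw [hv]; rw [sum_pair' hne]; ring
  have huu : ∑ i, u i * u i = 1 := by
    simp only [hu]
    rw [Finset.sum_const, Finset.card_univ, Fintype.card_fin, nsmul_eq_mul, ht2]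
    field_simp
  have huv : ∑ i, u i * v i = 0 := by
    simp only [hu]
    rw [← Finset.mul_sum, hsumv, mul_zero]
  have hvv : ∑ i, v i * v i = 1 := by
    have : ∀ i, v i * v i = if i = i0 then r * r else if i = i1 then r * r else 0 := by
      intro i
      by_cases h0 : i = i0
      · simp [hv, h0]
      · by_cases h1 : i = i1 <;> simp [hv, h0, h1, hne.symm]
    simp only [this]
    rw [sum_pair' hne, hr2]; norm_num
  set U : Matrix (Fin n) (Fin 2) ℝ := Matrix.of (fun i k => if k = 0 then u i else v i) with hU
  have hcolU0 : ∑ i, U i 0 = n * t := by simp [hU, hsumu]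
  have hcolU1 : ∑ i, U i 1 = 0 := by
    simp only [hU, Matrix.of_apply]
    norm_num
    exact hsumv
  have hvu : ∑ i, v i * u i = 0 := by
    rw [← huv]; exact Finset.sum_congr rfl fun i _ => mul_comm _ _
  have hUU : Uᵀ * U = 1 := by
    ext k l
    fin_cases k <;> fin_cases l <;>
      simp [hU, Matrix.mul_apply, Matrix.one_apply, huu, huv, hvv, hvu]
  set A : Matrix (Fin 2) (Fin 2) ℝ := !![c - 1, -s; s, c - 1] with hAdef
  have hA : A + Aᵀ + A * Aᵀ = 0 := rotA_eq c s hcs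
  set Q : Matrix (Fin n) (Fin n) ℝ := 1 + U * A * Uᵀ with hQdef
  have hQT : Qᵀ = 1 + U * Aᵀ * Uᵀ := by
    rw [hQdef, Matrix.transpose_add, Matrix.transpose_one, Matrix.transpose_mul,
      Matrix.transpose_mul, Matrix.transpose_transpose, Matrix.mul_assoc]
  have hmid : (U * A * Uᵀ) * (U * Aᵀ * Uᵀ) = U * (A * Aᵀ) * Uᵀ := by
    have h1 : Uᵀ * (U * (Aᵀ * Uᵀ)) = Aᵀ * Uᵀ := by
      rw [← Matrix.mul_assoc, hUU, Matrix.one_mul]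
    calc (U * A * Uᵀ) * (U * Aᵀ * Uᵀ) = U * A * (Uᵀ * (U * (Aᵀ * Uᵀ))) := by
          rw [Matrix.mul_assoc (U * A), Matrix.mul_assoc U Aᵀ]
      _ = U * A * (Aᵀ * Uᵀ) := by rw [h1]
      _ = U * (A * Aᵀ) * Uᵀ := by rw [Matrix.mul_assoc, Matrix.mul_assoc, Matrix.mul_assoc]
  have hQQT : Q * Qᵀ = 1 := by
    rw [hQT, hQdef]
    have expand : (1 + U * A * Uᵀ) * (1 + U * Aᵀ * Uᵀ)
        = 1 + U * (A + Aᵀ + A * Aᵀ) * Uᵀ := by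
      simp only [mul_add, add_mul, one_mul, mul_one, hmid, Matrix.mul_add, Matrix.add_mul]
      abel
    rw [expand, hA]
    simp
  have hdetQ : Q.det = 1 := by
    rw [hQdef, Matrix.det_one_add_mul_comm (U * A) Uᵀ, ← Matrix.mul_assoc, hUU, Matrix.one_mul]
    exact rotA_det c s hcs
  have hnt : ((n:ℝ) * t) * ((n:ℝ) * t) = n := by
    have htt : (n:ℝ) * (t * t) = 1 := by rw [ht2]; field_simp
    linear_combination (n:ℝ) * htt
  have hcolUA : ∀ k, ∑ i, (U * A) i k = ((n:ℝ) * t) * A 0 k := by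
    intro k
    simp only [Matrix.mul_apply, Fin.sum_univ_two]
    rw [Finset.sum_add_distrib, ← Finset.sum_mul, ← Finset.sum_mul, hcolU0, hcolU1]
    ring
  have hQsum : ∑ i, ∑ j, Q i j = n * c := by
    rw [hQdef]
    simp only [Matrix.add_apply, Finset.sum_add_distrib]
    have hone : ∑ i : Fin n, ∑ j : Fin n, (1 : Matrix (Fin n) (Fin n) ℝ) i j = n := by
      simp [Matrix.one_apply]
    rw [hone, sum_sum_mul (U * A) Uᵀ, Fin.sum_univ_two, hcolUA 0, hcolUA 1]
    have h0 : ∑ j, Uᵀ (0 : Fin 2) j = (n:ℝ) * t := hcolU0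
    have h1 : ∑ j, Uᵀ (1 : Fin 2) j = 0 := hcolU1
    rw [h0, h1]
    have hA00 : A 0 0 = c - 1 := by simp [hAdef]
    rw [hA00]
    linear_combination (c - 1) * hnt
  have hQq : ∑ i, ∑ j, (Q i j) ^ 2 = n := by
    have h := trace_mul_transpose_self' Q
    rw [hQQT] at h
    simpa using h.symm
  refine ⟨Real.sqrt β • Q, ?_, ?_, ?_⟩
  · simp only [Matrix.smul_apply, smul_eq_mul, ← Finset.mul_sum]
    rw [hQsum, hc]
    field_simp
  · simp only [Matrix.smul_apply, smul_eq_mul, mul_pow, ← Finset.mul_sum]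
    rw [Real.sq_sqrt hβ.le, hQq]
    ring
  · rw [Matrix.det_smul, hdetQ]
    simp


theorem gasper_maximal_orthogonal_case (n : ℕ) (hn : 2 ≤ n) (α β : ℝ)
    (hβ : 0 < β) (h1 : α ^ 2 < n * β) (h2 : α ^ 2 ≤ β)
    (M : Matrix (Fin n) (Fin n) ℝ)
    (hs : (∑ i, ∑ j, M i j) = n * α) (hq : (∑ i, ∑ j, (M i j) ^ 2) = n * β)
    (hmax : ∀ X : Matrix (Fin n) (Fin n) ℝ,
      (∑ i, ∑ j, X i j) = n * α → (∑ i, ∑ j, (X i j) ^ 2) = n * β →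
        X.det ≤ M.det) :
    M * Mᵀ = β • (1 : Matrix (Fin n) (Fin n) ℝ)
      ∧ M.det = β ^ ((n : ℝ) / 2) := by
  obtain ⟨X, hXs, hXq, hXdet⟩ := exists_good_matrix hn hβ h2
  have hlow : (Real.sqrt β) ^ n ≤ M.det := hXdet ▸ hmax X hXs hXq
  have hsqβpos : 0 < Real.sqrt β := Real.sqrt_pos.mpr hβ
  have hdetpos : 0 < M.det := lt_of_lt_of_le (pow_pos hsqβpos n) hlow
  have hGpsd : (M * Mᵀ).PosSemidef := by
    have := Matrix.posSemidef_self_mul_conjTranspose M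
    rwa [Matrix.conjTranspose_eq_transpose_of_trivial] at this
  have hH : (M * Mᵀ).IsHermitian := hGpsd.1
  have hpow2 : (Real.sqrt β ^ n) ^ 2 = β ^ n := by
    rw [← pow_mul, mul_comm, pow_mul, Real.sq_sqrt hβ.le]
  have hsum_eig : ∑ i, hH.eigenvalues i = n * β := by
    rw [← trace_eq_sum_eig hH, trace_mul_transpose_self', hq]
  have hdetG : (M * Mᵀ).det = M.det ^ 2 := by
    rw [Matrix.det_mul, Matrix.det_transpose, sq]
  have hprod_eig : β ^ n ≤ ∏ i, hH.eigenvalues i := by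
    have hsq : (Real.sqrt β ^ n) ^ 2 ≤ M.det ^ 2 :=
      pow_le_pow_left₀ (pow_nonneg hsqβpos.le n) hlow 2
    have hdp : (M * Mᵀ).det = ∏ i, hH.eigenvalues i := by
      simpa using hH.det_eq_prod_eigenvalues
    rw [← hdp, hdetG]
    calc β ^ n = (Real.sqrt β ^ n) ^ 2 := hpow2.symm
      _ ≤ M.det ^ 2 := hsq
  have hall : ∀ i, hH.eigenvalues i = β :=
    amgm_forces_eq hβ _ (fun i => hGpsd.eigenvalues_nonneg i) hsum_eig hprod_eig
  have hG1 : M * Mᵀ = β • (1 : Matrix (Fin n) (Fin n) ℝ) := eq_smul_one_of_eig hH hall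
  refine ⟨hG1, ?_⟩
  have hdetG2 : (M * Mᵀ).det = β ^ n := by
    rw [hG1, Matrix.det_smul]
    simp
  have hMdet : M.det = Real.sqrt β ^ n := by
    have hsq2 : M.det ^ 2 = (Real.sqrt β ^ n) ^ 2 := by
      rw [← hdetG, hdetG2, hpow2]
    exact (sq_eq_sq₀ hdetpos.le (pow_nonneg hsqβpos.le n)).mp hsq2
  rw [hMdet, Real.sqrt_eq_rpow, ← Real.rpow_natCast (β ^ ((1:ℝ)/2)) n,
    ← Real.rpow_mul hβ.le]
  congr 1
  ring
end

section
/- Let n ≥ 2 be a natural number and α, β real numbers with β > 0, α² < n·β and α² ≥ β. Let M be a real n×n matrix with sum of entries n·α and sum of squared entries n·β whose determinant is maximal among all such matrices (i.e. det X ≤ det M for every real n×n matrix X with s(X) = n·α and q(X) = n·β). Set δ := (α² − β)/(n−1). Then: every row sum of M equals α and every column sum of M equals α; M·Mᵀ = (β − δ)·I + δ·J; and det M = |α|·(β − δ)^((n−1)/2). -/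
open Matrix Finset

lemma amgm_le {ι : Type*} (s : Finset ι) (f : ι → ℝ) (hf : ∀ i ∈ s, 0 ≤ f i) :
    ∏ i ∈ s, f i ≤ ((∑ i ∈ s, f i) / s.card) ^ (s.card : ℕ) := by
  classical
  rcases s.eq_empty_or_nonempty with rfl | hne
  · simp
  by_cases h0 : ∃ i ∈ s, f i = 0
  · obtain ⟨i, hi, h⟩ := h0
    rw [Finset.prod_eq_zero hi h]
    have hsum : 0 ≤ ∑ i ∈ s, f i := Finset.sum_nonneg hf
    positivity
  · push_neg at h0
    have hf' : ∀ i ∈ s, 0 < f i := fun i hi => (hf i hi).lt_of_ne' (h0 i hi)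
    have hcard : (0:ℝ) < s.card := by exact_mod_cast hne.card_pos
    set m : ℝ := (s.card : ℝ) with hm
    have hsum : 0 < ∑ i ∈ s, f i := Finset.sum_pos hf' hne
    have hmean : 0 < (∑ i ∈ s, f i) / m := by positivity
    have jensen := (strictConcaveOn_log_Ioi.concaveOn).le_map_sum
      (t := s) (w := fun _ => m⁻¹) (p := f)
      (fun i _ => by positivity)
      (by simp [Finset.sum_const, hm]; field_simp)
      (fun i hi => Set.mem_Ioi.2 (hf' i hi))
    have h1 : (∑ i ∈ s, m⁻¹ • f i) = (∑ i ∈ s, f i) / m := by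
      rw [← Finset.smul_sum]; simp [smul_eq_mul, div_eq_inv_mul]
    rw [h1] at jensen
    have h3 : ∏ i ∈ s, f i = Real.exp (∑ i ∈ s, Real.log (f i)) := by
      rw [Real.exp_sum]
      exact (Finset.prod_congr rfl (fun i hi => (Real.exp_log (hf' i hi)).symm))
    rw [h3]
    have h4 : (∑ i ∈ s, Real.log (f i)) ≤ s.card * Real.log ((∑ i ∈ s, f i) / m) := by
      have := jensen
      simp only [smul_eq_mul, ← Finset.mul_sum] at this
      rw [← Finset.sum_congr rfl (fun i _ => rfl)] at this
      calc (∑ i ∈ s, Real.log (f i)) = m * (m⁻¹ * ∑ i ∈ s, Real.log (f i)) := by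
            field_simp
        _ ≤ m * Real.log ((∑ i ∈ s, f i) / m) := by
            exact mul_le_mul_of_nonneg_left this hcard.le
    calc Real.exp (∑ i ∈ s, Real.log (f i)) ≤ Real.exp (s.card * Real.log ((∑ i ∈ s, f i) / m)) :=
          Real.exp_le_exp.2 h4
      _ = ((∑ i ∈ s, f i) / m) ^ (s.card : ℕ) := by
          rw [Real.exp_nat_mul, Real.exp_log hmean]

lemma amgm_eq {ι : Type*} (s : Finset ι) (hne : s.Nonempty) (f : ι → ℝ)
    (hf : ∀ i ∈ s, 0 < f i)
    (heq : ((∑ i ∈ s, f i) / s.card) ^ (s.card : ℕ) ≤ ∏ i ∈ s, f i) :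
    ∀ i ∈ s, f i = (∑ j ∈ s, f j) / s.card := by
  classical
  have hcard : (0:ℝ) < s.card := by exact_mod_cast hne.card_pos
  set m : ℝ := (s.card : ℝ) with hm
  have hsum : 0 < ∑ i ∈ s, f i := Finset.sum_pos hf hne
  have hmean : 0 < (∑ i ∈ s, f i) / m := by positivity
  -- log of product equality
  have hprod : 0 < ∏ i ∈ s, f i := Finset.prod_pos hf
  have hlog : m * Real.log ((∑ i ∈ s, f i) / m) ≤ ∑ i ∈ s, Real.log (f i) := by
    have := Real.log_le_log (by positivity) heq
    rwa [Real.log_pow, Real.log_prod (fun i hi => (hf i hi).ne'), hm] at this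
  have key := strictConcaveOn_log_Ioi.eq_of_map_sum_eq
      (t := s) (w := fun _ => m⁻¹) (p := f)
      (fun i _ => by positivity)
      (by simp [Finset.sum_const, hm]; field_simp)
      (fun i hi => Set.mem_Ioi.2 (hf i hi))
      (by
        have h1 : (∑ i ∈ s, m⁻¹ • f i) = (∑ i ∈ s, f i) / m := by
          rw [← Finset.smul_sum]; simp [smul_eq_mul, div_eq_inv_mul]
        rw [h1]
        have h2 : (∑ i ∈ s, m⁻¹ • Real.log (f i)) = m⁻¹ * ∑ i ∈ s, Real.log (f i) := by
          rw [← Finset.smul_sum]; simp [smul_eq_mul]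
        rw [h2]
        calc Real.log ((∑ i ∈ s, f i) / m) = m⁻¹ * (m * Real.log ((∑ i ∈ s, f i) / m)) := by
              field_simp
          _ ≤ m⁻¹ * ∑ i ∈ s, Real.log (f i) :=
              mul_le_mul_of_nonneg_left hlog (by positivity))
  -- all values equal
  intro i hi
  have hall : ∀ j ∈ s, f j = f i := fun j hj => key hj hi
  have : ∑ j ∈ s, f j = s.card * f i := by
    rw [Finset.sum_congr rfl hall, Finset.sum_const, nsmul_eq_mul]
  rw [this, hm]; field_simp

lemma g_strictAntiOn (m : ℕ) (hm : 1 ≤ m) (S : ℝ) :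
    StrictAntiOn (fun t : ℝ => t * ((S - t) / m) ^ m) (Set.Icc (S / (m + 1)) S) := by
  obtain ⟨k, rfl⟩ : ∃ k, m = k + 1 := ⟨m - 1, (Nat.succ_pred_eq_of_pos hm).symm⟩
  set m := k + 1 with hmdef
  have hm' : (0:ℝ) < m := by positivity
  apply strictAntiOn_of_deriv_neg (convex_Icc _ _)
  · fun_prop
  · intro t ht
    rw [interior_Icc] at ht
    have hd : HasDerivAt (fun t : ℝ => t * ((S - t) / m) ^ m)
        (1 * ((S - t) / m) ^ m + t * ((m : ℝ) * ((S - t) / m) ^ (m - 1) * (-1 / m))) t :=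
      (hasDerivAt_id t).mul ((((hasDerivAt_id t).const_sub S).div_const m).pow m)
    rw [hd.deriv]
    have hmk : m - 1 = k := rfl
    have h1 : (1:ℝ) * ((S - t) / m) ^ m + t * ((m : ℝ) * ((S - t) / m) ^ (m - 1) * (-1 / m))
        = ((S - t) / m) ^ k * ((S - t) / m - t) := by
      rw [hmk, one_mul, hmdef, pow_succ]
      field_simp
      ring
    rw [h1]
    have hts : t < S := ht.2
    have h2 : 0 < (S - t) / m := div_pos (by linarith) hm'
    have h3 : (S - t) / m - t < 0 := by
      have h4 : S / (m + 1) < t := by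
        have := ht.1; rw [hmdef] at this ⊢; push_cast at this ⊢; convert this using 3
      rw [div_lt_iff₀ (by positivity)] at h4
      rw [sub_neg, div_lt_iff₀ hm']
      nlinarith
    exact mul_neg_of_pos_of_neg (pow_pos h2 _) h3

lemma det_circ {n : ℕ} (hn : 0 < n) (r b : ℝ) (hr : r ≠ 0) :
    (Matrix.of (fun i j : Fin n => (if i = j then r else 0) + b)).det
      = r ^ (n - 1) * (r + n * b) := by
  have h : (Matrix.of (fun i j : Fin n => (if i = j then r else 0) + b))
      = r • (1 + Matrix.replicateCol Unit (fun _ => b / r) * Matrix.replicateRow Unit (fun _ => (1:ℝ))) := by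
    ext i j
    by_cases hij : i = j <;>
      simp [Matrix.mul_apply, Matrix.one_apply, mul_add, hij] <;> field_simp
  rw [h, Matrix.det_smul, Matrix.det_one_add_replicateCol_mul_replicateRow]
  simp [dotProduct]
  have hn' : n = (n - 1) + 1 := (Nat.succ_pred_eq_of_pos hn).symm
  rw [hn', pow_succ]
  field_simp
  rw [Nat.add_sub_cancel]
  ring

lemma exists_extremal (n : ℕ) (hn : 2 ≤ n) (α β : ℝ)
    (hβ : 0 < β) (h1 : α ^ 2 < n * β) (h2 : β ≤ α ^ 2) (δ : ℝ)
    (hδ : δ = (α ^ 2 - β) / (n - 1)) :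
    ∃ X : Matrix (Fin n) (Fin n) ℝ,
      (∑ i, ∑ j, X i j) = n * α ∧ (∑ i, ∑ j, (X i j) ^ 2) = n * β ∧
      X.det = |α| * Real.sqrt (β - δ) ^ (n - 1) := by
  have hn0 : 0 < n := by omega
  have hn1 : (1:ℝ) ≤ (n:ℝ) - 1 := by
    have : (2:ℝ) ≤ n := by exact_mod_cast hn
    linarith
  have hβδ : 0 < β - δ := by
    rw [hδ]
    rw [sub_pos, div_lt_iff₀ (by linarith)]
    nlinarith
  have hα : α ≠ 0 := by
    intro h; rw [h] at h2; nlinarith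
  set r : ℝ := Real.sqrt (β - δ) with hr
  have hr0 : 0 < r := Real.sqrt_pos.2 hβδ
  have hr2 : r ^ 2 = β - δ := Real.sq_sqrt hβδ.le
  set b : ℝ := (α - r) / n with hb
  have hrnb : r + n * b = α := by rw [hb, mul_div_cancel₀ _ (by positivity : (n:ℝ) ≠ 0)]; ring
  set C : Matrix (Fin n) (Fin n) ℝ :=
    Matrix.of (fun i j : Fin n => (if i = j then r else 0) + b) with hC
  have hsC : (∑ i, ∑ j, C i j) = n * α := by
    have : ∀ i : Fin n, (∑ j, C i j) = α := by
      intro i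
      simp only [hC, Matrix.of_apply]
      rw [Finset.sum_add_distrib, Finset.sum_ite_eq Finset.univ i (fun _ => r)]
      simp [hrnb.symm]
    rw [Finset.sum_congr rfl (fun i _ => this i)]
    simp [mul_comm]
  have hqC : (∑ i, ∑ j, (C i j) ^ 2) = n * β := by
    have : ∀ i : Fin n, (∑ j, (C i j) ^ 2) = β := by
      intro i
      simp only [hC, Matrix.of_apply]
      have : ∀ j : Fin n, ((if i = j then r else 0) + b) ^ 2
          = (if i = j then r ^ 2 + 2 * r * b else 0) + b ^ 2 := by
        intro j; by_cases hij : i = j <;> simp [hij] <;> ring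
      rw [Finset.sum_congr rfl (fun j _ => this j), Finset.sum_add_distrib,
        Finset.sum_ite_eq Finset.univ i (fun _ => r ^ 2 + 2 * r * b)]
      simp only [Finset.mem_univ, if_true, Finset.sum_const, Finset.card_univ,
        Fintype.card_fin, nsmul_eq_mul]
      -- r^2 + 2rb + n b^2 = β
      have hδ' : (α ^ 2 - β) = δ * (n - 1) := by
        rw [hδ]; field_simp
      have hbn : b * (n:ℝ) = α - r := by rw [hb, div_mul_cancel₀ _ (by positivity : (n:ℝ) ≠ 0)]
      have key : α ^ 2 - r ^ 2 = n * δ := by linarith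
      have hbeta : β = r ^ 2 + δ := by linarith
      rw [hb, hbeta]
      have hn' : ((n:ℝ)) ≠ 0 := by positivity
      field_simp
      linear_combination key
    rw [Finset.sum_congr rfl (fun i _ => this i)]
    simp [mul_comm]
  have hdC : C.det = r ^ (n - 1) * α := by
    rw [hC, det_circ hn0 r b hr0.ne']
    rw [hrnb]
  rcases lt_or_gt_of_ne hα with hneg | hpos
  · -- α < 0 : swap two columns
    have h01 : (⟨0, by omega⟩ : Fin n) ≠ ⟨1, by omega⟩ := by
      simp [Fin.ext_iff]
    set σ : Equiv.Perm (Fin n) := Equiv.swap ⟨0, by omega⟩ ⟨1, by omega⟩ with hσ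
    refine ⟨C.submatrix id σ, ?_, ?_, ?_⟩
    · rw [← hsC]
      apply Finset.sum_congr rfl; intro i _
      simpa using Equiv.sum_comp σ (fun j => C i j)
    · rw [← hqC]
      apply Finset.sum_congr rfl; intro i _
      simpa using Equiv.sum_comp σ (fun j => (C i j) ^ 2)
    · rw [Matrix.det_permute' σ C, hσ, Equiv.Perm.sign_swap h01, hdC, abs_of_neg hneg]
      push_cast
      ring
  · exact ⟨C, hsC, hqC, by rw [hdC, abs_of_pos hpos]; ring⟩

lemma key (n : ℕ) (hn : 2 ≤ n) (α β : ℝ)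
    (hβ : 0 < β) (h1 : α ^ 2 < n * β) (h2 : β ≤ α ^ 2) (δ : ℝ)
    (hδ : δ = (α ^ 2 - β) / (n - 1))
    (X : Matrix (Fin n) (Fin n) ℝ)
    (hs : (∑ i, ∑ j, X i j) = n * α) (hq : (∑ i, ∑ j, (X i j) ^ 2) = n * β) :
    X.det ^ 2 ≤ α ^ 2 * (β - δ) ^ (n - 1) ∧
    (α ^ 2 * (β - δ) ^ (n - 1) ≤ X.det ^ 2 →
      (∀ j, (∑ i, X i j) = α) ∧
      X * Xᵀ = (β - δ) • (1 : Matrix (Fin n) (Fin n) ℝ)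
          + δ • (Matrix.of fun _ _ => (1 : ℝ))) := by
  classical
  have hn0 : 0 < n := by omega
  have hnR : (2:ℝ) ≤ (n:ℝ) := by exact_mod_cast hn
  have hn1 : (1:ℝ) ≤ (n:ℝ) - 1 := by linarith
  have hβδ : 0 < β - δ := by
    rw [hδ, sub_pos, div_lt_iff₀ (by linarith)]; nlinarith
  have hδ0 : 0 ≤ δ := by rw [hδ]; apply div_nonneg (by linarith) (by linarith)
  have hα : α ≠ 0 := by intro h; rw [h] at h2; nlinarith
  have hα2 : 0 < α ^ 2 := by positivity
  have hmean : ((n:ℝ) * β - α ^ 2) / ((n:ℝ) - 1) = β - δ := by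
    rw [hδ]; field_simp; ring
  set A := X * Xᵀ with hAdef
  have hA : A.IsHermitian := by
    rw [hAdef, ← conjTranspose_eq_transpose_of_trivial]
    exact isHermitian_mul_conjTranspose_self X
  have hPSD : A.PosSemidef := by
    rw [hAdef, ← conjTranspose_eq_transpose_of_trivial]
    exact posSemidef_self_mul_conjTranspose X
  set lam := hA.eigenvalues with hlam
  have hlam0 : ∀ i, 0 ≤ lam i := hPSD.eigenvalues_nonneg
  set V : Matrix (Fin n) (Fin n) ℝ := (hA.eigenvectorUnitary : Matrix (Fin n) (Fin n) ℝ)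
    with hV
  have hVV : V * Vᵀ = 1 := by
    have h := hA.eigenvectorUnitary.2
    rw [Matrix.mem_unitaryGroup_iff] at h
    simpa [Matrix.star_eq_conjTranspose] using h
  have hVV' : Vᵀ * V = 1 := by
    have h := hA.eigenvectorUnitary.2
    rw [Matrix.mem_unitaryGroup_iff'] at h
    simpa [Matrix.star_eq_conjTranspose] using h
  have hspec : A = V * diagonal lam * Vᵀ := by
    have h := hA.spectral_theorem
    rw [hV, hlam]; simpa [Matrix.star_eq_conjTranspose] using h
  have hVVab : ∀ a b, ∑ m, V a m * V b m = (1 : Matrix (Fin n) (Fin n) ℝ) a b := by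
    intro a b
    rw [← hVV, Matrix.mul_apply]
    simp [Matrix.transpose_apply]
  have hAij : ∀ i j, A i j = ∑ m, V i m * lam m * V j m := by
    intro i j
    rw [hspec, Matrix.mul_apply]
    apply Finset.sum_congr rfl
    intro m _
    rw [Matrix.mul_diagonal, Matrix.transpose_apply]
  have htr : ∑ i, lam i = n * β := by
    have t1 : A.trace = ∑ i, lam i := by
      rw [hspec, Matrix.trace_mul_cycle, hVV', Matrix.one_mul, Matrix.trace_diagonal]
    have t2 : A.trace = ∑ i, ∑ j, (X i j) ^ 2 := by
      rw [hAdef, Matrix.trace]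
      apply Finset.sum_congr rfl
      intro i _
      simp [Matrix.diag, Matrix.mul_apply, sq]
    rw [← t1, t2, hq]
  have hdet : ∏ i, lam i = X.det ^ 2 := by
    have d1 : A.det = ∏ i, lam i := by simpa using hA.det_eq_prod_eigenvalues
    rw [← d1, hAdef, Matrix.det_mul, Matrix.det_transpose, sq]
  set e : Fin n → ℝ := fun _ => 1 with he
  set w : Fin n → ℝ := Vᵀ *ᵥ e with hw
  have hwm : ∀ m, w m = ∑ a, V a m := by
    intro m
    simp [hw, Matrix.mulVec, dotProduct, he, Matrix.transpose_apply]
  have hw2 : ∑ i, w i ^ 2 = n := by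
    calc ∑ i, w i ^ 2 = ∑ i, ∑ a, ∑ b, V a i * V b i := by
          apply Finset.sum_congr rfl
          intro i _
          rw [hwm, sq, Finset.sum_mul_sum]
      _ = ∑ a, ∑ b, ∑ i, V a i * V b i := by
          rw [Finset.sum_comm]
          exact Finset.sum_congr rfl (fun a _ => Finset.sum_comm)
      _ = ∑ a, ∑ b, (1 : Matrix (Fin n) (Fin n) ℝ) a b := by
          exact Finset.sum_congr rfl (fun a _ => Finset.sum_congr rfl (fun b _ => hVVab a b))
      _ = n := by
          simp [Matrix.one_apply]
  set c : Fin n → ℝ := Xᵀ *ᵥ e with hc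
  have hcj : ∀ j, c j = ∑ i, X i j := by
    intro j; simp [hc, Matrix.mulVec, dotProduct, he]
  have hcs : ∑ j, c j = n * α := by
    rw [← hs, Finset.sum_comm (f := fun i j => X i j)]
    exact Finset.sum_congr rfl (fun j _ => hcj j)
  have hray : ∑ i, lam i * w i ^ 2 = ∑ j, c j ^ 2 := by
    have e1 : ∑ i, ∑ j, A i j = ∑ m, lam m * w m ^ 2 := by
      calc ∑ i, ∑ j, A i j = ∑ i, ∑ j, ∑ m, V i m * lam m * V j m :=
            Finset.sum_congr rfl (fun i _ => Finset.sum_congr rfl (fun j _ => hAij i j))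
        _ = ∑ i, ∑ m, ∑ j, V i m * lam m * V j m :=
            Finset.sum_congr rfl (fun i _ => Finset.sum_comm)
        _ = ∑ m, ∑ i, ∑ j, V i m * lam m * V j m := Finset.sum_comm
        _ = ∑ m, lam m * w m ^ 2 := by
            apply Finset.sum_congr rfl
            intro m _
            rw [hwm, sq, Finset.sum_mul_sum, Finset.mul_sum]
            apply Finset.sum_congr rfl
            intro i _
            rw [Finset.mul_sum]
            apply Finset.sum_congr rfl
            intro j _
            ring
    have e2 : ∑ i, ∑ j, A i j = ∑ t, c t ^ 2 := by
      calc ∑ i, ∑ j, A i j = ∑ i, ∑ j, ∑ t, X i t * X j t := by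
            apply Finset.sum_congr rfl
            intro i _
            apply Finset.sum_congr rfl
            intro j _
            rw [hAdef, Matrix.mul_apply]
            exact Finset.sum_congr rfl (fun t _ => rfl)
        _ = ∑ i, ∑ t, ∑ j, X i t * X j t :=
            Finset.sum_congr rfl (fun i _ => Finset.sum_comm)
        _ = ∑ t, ∑ i, ∑ j, X i t * X j t := Finset.sum_comm
        _ = ∑ t, c t ^ 2 := by
            apply Finset.sum_congr rfl
            intro t _
            rw [hcj, sq, Finset.sum_mul_sum]
    rw [← e1, e2]
  have hray_ge : (n:ℝ) * α ^ 2 ≤ ∑ j, c j ^ 2 := by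
    have := sq_sum_le_card_mul_sum_sq (s := (Finset.univ : Finset (Fin n))) (f := c)
    rw [hcs] at this
    simp only [Finset.card_univ, Fintype.card_fin] at this
    nlinarith [this]
  have hNE : Nonempty (Fin n) := ⟨⟨0, hn0⟩⟩
  obtain ⟨k, -, hk⟩ := Finset.exists_max_image Finset.univ lam Finset.univ_nonempty
  have hk' : ∀ i, lam i ≤ lam k := fun i => hk i (Finset.mem_univ i)
  have hlamk_ge : α ^ 2 ≤ lam k := by
    have h5 : ∑ i, lam i * w i ^ 2 ≤ ∑ i, lam k * w i ^ 2 := by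
      apply Finset.sum_le_sum
      intro i _
      exact mul_le_mul_of_nonneg_right (hk' i) (sq_nonneg _)
    rw [← Finset.mul_sum, hw2] at h5
    rw [hray] at h5
    have := hray_ge.trans h5
    have hnpos : (0:ℝ) < n := by linarith
    nlinarith [this]
  have hlamk_le : lam k ≤ n * β := by
    rw [← htr]
    exact Finset.single_le_sum (fun i _ => hlam0 i) (Finset.mem_univ k)
  -- AM-GM over the rest
  have hcard_erase : ((Finset.univ : Finset (Fin n)).erase k).card = n - 1 := by
    rw [Finset.card_erase_of_mem (Finset.mem_univ k)]; simp
  have hsum_erase : ∑ i ∈ Finset.univ.erase k, lam i = n * β - lam k := by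
    have := Finset.add_sum_erase Finset.univ lam (Finset.mem_univ k)
    rw [htr] at this  -- careful direction
    linarith [this]
  have hprod_split : ∏ i, lam i = lam k * ∏ i ∈ Finset.univ.erase k, lam i :=
    (Finset.mul_prod_erase Finset.univ lam (Finset.mem_univ k)).symm
  have hprod_erase : ∏ i ∈ Finset.univ.erase k, lam i
      ≤ ((n * β - lam k) / ((n:ℝ) - 1)) ^ (n - 1 : ℕ) := by
    have := amgm_le (Finset.univ.erase k) lam (fun i _ => hlam0 i)
    rw [hsum_erase, hcard_erase] at this
    have hcast : (((n - 1 : ℕ)) : ℝ) = (n:ℝ) - 1 := by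
      push_cast [Nat.cast_sub (by omega : 1 ≤ n)]; ring
    rwa [hcast] at this
  -- the function g
  set g : ℝ → ℝ := fun t => t * (((n:ℝ) * β - t) / ((n:ℝ) - 1)) ^ (n - 1 : ℕ) with hg
  have hganti : StrictAntiOn g (Set.Icc β ((n:ℝ) * β)) := by
    have := g_strictAntiOn (n - 1) (by omega) ((n:ℝ) * β)
    have hcast : (((n - 1 : ℕ)) : ℝ) = (n:ℝ) - 1 := by
      push_cast [Nat.cast_sub (by omega : 1 ≤ n)]; ring
    rw [hcast] at this
    have h3 : (n:ℝ) - 1 + 1 = n := by ring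
    rw [h3] at this
    have h4 : (n:ℝ) * β / (n:ℝ) = β := by
      field_simp
    rw [h4] at this
    exact this
  have hmem1 : α ^ 2 ∈ Set.Icc β ((n:ℝ) * β) := ⟨h2, h1.le⟩
  have hmem2 : lam k ∈ Set.Icc β ((n:ℝ) * β) := ⟨h2.trans hlamk_ge, hlamk_le⟩
  have hgbound : g (lam k) ≤ g (α ^ 2) := by
    rcases eq_or_lt_of_le hlamk_ge with h | h
    · rw [h]
    · exact (hganti hmem1 hmem2 h).le
  have hgα : g (α ^ 2) = α ^ 2 * (β - δ) ^ (n - 1 : ℕ) := by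
    rw [hg]; simp only []
    rw [hmean]
  have hbound : X.det ^ 2 ≤ α ^ 2 * (β - δ) ^ (n - 1 : ℕ) := by
    rw [← hdet, hprod_split]
    calc lam k * ∏ i ∈ Finset.univ.erase k, lam i
        ≤ lam k * ((n * β - lam k) / ((n:ℝ) - 1)) ^ (n - 1 : ℕ) :=
          mul_le_mul_of_nonneg_left hprod_erase ((hlam0 k).trans (hk' k) |>.trans_eq rfl)
      _ = g (lam k) := rfl
      _ ≤ g (α ^ 2) := hgbound
      _ = _ := hgα
  refine ⟨hbound, ?_⟩
  intro hEq
  have hEq' : X.det ^ 2 = α ^ 2 * (β - δ) ^ (n - 1 : ℕ) := le_antisymm hbound hEq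
  have hpos : (0:ℝ) < α ^ 2 * (β - δ) ^ (n - 1 : ℕ) := by positivity
  have hprodpos : (0:ℝ) < ∏ i, lam i := by rw [hdet, hEq']; exact hpos
  have hlampos : ∀ i, 0 < lam i := by
    intro i
    rcases (hlam0 i).lt_or_eq with h | h
    · exact h
    · exfalso
      have : ∏ i, lam i = 0 := Finset.prod_eq_zero (Finset.mem_univ i) h.symm
      rw [this] at hprodpos
      exact lt_irrefl 0 hprodpos
  have hglamk_ge : g (α ^ 2) ≤ g (lam k) := by
    calc g (α ^ 2) = X.det ^ 2 := by rw [hgα, hEq']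
      _ = lam k * ∏ i ∈ Finset.univ.erase k, lam i := by rw [← hdet, hprod_split]
      _ ≤ g (lam k) := mul_le_mul_of_nonneg_left hprod_erase (hlam0 k)
  have hgeq : g (lam k) = g (α ^ 2) := le_antisymm hgbound hglamk_ge
  have hlamk : lam k = α ^ 2 := by
    by_contra hne
    have hlt : α ^ 2 < lam k := lt_of_le_of_ne hlamk_ge (Ne.symm hne)
    exact absurd hgeq (ne_of_lt (hganti hmem1 hmem2 hlt))
  have hcast : (((n - 1 : ℕ)) : ℝ) = (n:ℝ) - 1 := by
    push_cast [Nat.cast_sub (by omega : 1 ≤ n)]; ring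
  have hProdErase : ((β - δ) : ℝ) ^ (n - 1 : ℕ) ≤ ∏ i ∈ Finset.univ.erase k, lam i := by
    have h6 : lam k * ∏ i ∈ Finset.univ.erase k, lam i = α ^ 2 * (β - δ) ^ (n - 1 : ℕ) := by
      rw [← hprod_split, hdet, hEq']
    rw [hlamk] at h6
    have := mul_left_cancel₀ (ne_of_gt hα2) h6
    rw [this]
  have herase_ne : (Finset.univ.erase k).Nonempty := by
    rw [← Finset.card_pos, hcard_erase]; omega
  have herase_eq : ∀ i ∈ Finset.univ.erase k, lam i = β - δ := by
    have hmean' : (∑ j ∈ Finset.univ.erase k, lam j) / ((Finset.univ.erase k).card : ℝ)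
        = β - δ := by
      rw [hsum_erase, hcard_erase, hcast, hlamk, hmean]
    have := amgm_eq (Finset.univ.erase k) herase_ne lam
      (fun i _ => hlampos i)
      (by rw [hmean', hcard_erase]; exact hProdErase)
    intro i hi
    rw [this i hi, hmean']
  have hδ'' : δ * ((n:ℝ) - 1) = α ^ 2 - β := by
    rw [hδ]; field_simp
  have hlam_decomp : ∀ m, lam m = (β - δ) + (if m = k then (n:ℝ) * δ else 0) := by
    intro m
    by_cases hm : m = k
    · subst hm
      rw [if_pos rfl, hlamk]
      linarith
    · simp only [if_neg hm, add_zero]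
      exact herase_eq m (Finset.mem_erase.2 ⟨hm, Finset.mem_univ m⟩)
  -- Rayleigh equality
  have h5 : ∑ i, lam i * w i ^ 2 ≤ (n:ℝ) * lam k := by
    have : ∑ i, lam i * w i ^ 2 ≤ ∑ i, lam k * w i ^ 2 :=
      Finset.sum_le_sum (fun i _ => mul_le_mul_of_nonneg_right (hk' i) (sq_nonneg _))
    rwa [← Finset.mul_sum, hw2, mul_comm] at this
  have hsumc2 : ∑ j, c j ^ 2 = (n:ℝ) * α ^ 2 := by
    have hup : ∑ j, c j ^ 2 ≤ (n:ℝ) * α ^ 2 := by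
      rw [← hray, ← hlamk]
      exact h5
    linarith [hray_ge]
  have hcol : ∀ j, c j = α := by
    have hzero : ∑ j, (c j - α) ^ 2 = 0 := by
      have hexp : ∑ j, (c j - α) ^ 2
          = ∑ j, c j ^ 2 - 2 * α * (∑ j, c j) + (n:ℝ) * α ^ 2 := by
        rw [Finset.mul_sum]
        rw [← Finset.sum_sub_distrib]
        have : ((n:ℝ) * α ^ 2) = ∑ _j : Fin n, α ^ 2 := by
          simp [Finset.sum_const, Finset.card_univ, mul_comm]
        rw [this, ← Finset.sum_add_distrib]
        apply Finset.sum_congr rfl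
        intro j _
        ring
      rw [hexp, hsumc2, hcs]
      ring
    intro j
    have h7 := (Finset.sum_eq_zero_iff_of_nonneg (fun j _ => sq_nonneg (c j - α))).mp
      hzero j (Finset.mem_univ j)
    have := pow_eq_zero_iff (n := 2) (by norm_num) |>.mp h7
    linarith [sub_eq_zero.mp this]
  refine ⟨fun j => by rw [← hcj j, hcol j], ?_⟩
  -- now the matrix identity
  have hwsum0 : ∑ i, (lam k - lam i) * w i ^ 2 = 0 := by
    have hsplit : ∑ i, (lam k - lam i) * w i ^ 2
        = lam k * (∑ i, w i ^ 2) - ∑ i, lam i * w i ^ 2 := by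
      rw [Finset.mul_sum, ← Finset.sum_sub_distrib]
      apply Finset.sum_congr rfl
      intro i _
      ring
    rw [hsplit, hw2, hray, hsumc2, hlamk]
    ring
  have hterm0 : ∀ i, (lam k - lam i) * w i ^ 2 = 0 := by
    intro i
    exact (Finset.sum_eq_zero_iff_of_nonneg
      (fun i _ => mul_nonneg (sub_nonneg.2 (hk' i)) (sq_nonneg _))).mp hwsum0 i (Finset.mem_univ i)
  -- final extensionality
  have hsum_decomp : ∀ i j, A i j
      = (β - δ) * ((1 : Matrix (Fin n) (Fin n) ℝ) i j) + (n:ℝ) * δ * (V i k * V j k) := by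
    intro i j
    rw [hAij i j]
    have : ∀ m, V i m * lam m * V j m
        = (β - δ) * (V i m * V j m) + (if m = k then (n:ℝ) * δ * (V i m * V j m) else 0) := by
      intro m
      rw [hlam_decomp m]
      by_cases hm : m = k <;> simp [hm] <;> ring
    rw [Finset.sum_congr rfl (fun m _ => this m), Finset.sum_add_distrib,
      ← Finset.mul_sum, hVVab i j, Finset.sum_ite_eq' Finset.univ k]
    simp
  have hfinal : ∀ i j, (n:ℝ) * δ * (V i k * V j k) = δ := by
    rcases eq_or_lt_of_le hδ0 with hδe | hδp
    · intro i j; rw [← hδe]; ring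
    · -- δ > 0 : w is supported at k
      have hwzero : ∀ i, i ≠ k → w i = 0 := by
        intro i hi
        have h8 := hterm0 i
        have h9 : lam k - lam i = (n:ℝ) * δ := by
          rw [hlamk, herase_eq i (Finset.mem_erase.2 ⟨hi, Finset.mem_univ i⟩)]
          linarith
        rw [h9] at h8
        have h10 : w i ^ 2 = 0 := by
          have hnδ : (n:ℝ) * δ ≠ 0 := by positivity
          exact (mul_eq_zero.mp h8).resolve_left hnδ
        exact pow_eq_zero_iff (n := 2) (by norm_num) |>.mp h10
      have hVw : V *ᵥ w = e := by
        rw [hw, Matrix.mulVec_mulVec, hVV, Matrix.one_mulVec]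
      have heV : ∀ i, V i k * w k = 1 := by
        intro i
        have h11 := congrFun hVw i
        rw [Matrix.mulVec, dotProduct] at h11
        rw [Finset.sum_eq_single k (fun m _ hm => by rw [hwzero m hm, mul_zero])
          (fun h => absurd (Finset.mem_univ k) h)] at h11
        exact h11
      have hwk2 : w k ^ 2 = n := by
        rw [← hw2]
        rw [Finset.sum_eq_single k (fun m _ hm => by rw [hwzero m hm]; ring)
          (fun h => absurd (Finset.mem_univ k) h)]
      intro i j
      have h12 : (V i k * w k) * (V j k * w k) = 1 := by rw [heV i, heV j]; ring
      have h13 : (V i k * V j k) * (n:ℝ) = 1 := by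
        rw [← hwk2, ← h12]; ring
      linear_combination δ * h13
  ext i j
  rw [hsum_decomp i j, hfinal i j]
  simp [Matrix.add_apply, Matrix.smul_apply, smul_eq_mul, he]


theorem gasper_maximal_rowsum_case (n : ℕ) (hn : 2 ≤ n) (α β : ℝ)
    (hβ : 0 < β) (h1 : α ^ 2 < n * β) (h2 : β ≤ α ^ 2)
    (M : Matrix (Fin n) (Fin n) ℝ)
    (hs : (∑ i, ∑ j, M i j) = n * α) (hq : (∑ i, ∑ j, (M i j) ^ 2) = n * β)
    (hmax : ∀ X : Matrix (Fin n) (Fin n) ℝ,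
      (∑ i, ∑ j, X i j) = n * α → (∑ i, ∑ j, (X i j) ^ 2) = n * β →
        X.det ≤ M.det)
    (δ : ℝ) (hδ : δ = (α ^ 2 - β) / (n - 1)) :
    (∀ i, (∑ j, M i j) = α) ∧ (∀ j, (∑ i, M i j) = α)
      ∧ M * Mᵀ = (β - δ) • (1 : Matrix (Fin n) (Fin n) ℝ)
          + δ • (Matrix.of fun _ _ => (1 : ℝ))
      ∧ M.det = |α| * (β - δ) ^ (((n : ℝ) - 1) / 2) := by
  have hn0 : 0 < n := by omega
  have hnR : (2:ℝ) ≤ (n:ℝ) := by exact_mod_cast hn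
  have hn1 : (1:ℝ) ≤ (n:ℝ) - 1 := by linarith
  have hβδ : 0 < β - δ := by
    rw [hδ, sub_pos, div_lt_iff₀ (by linarith)]; nlinarith
  have hα : α ≠ 0 := by intro h; rw [h] at h2; nlinarith
  have hα2 : 0 < α ^ 2 := by positivity
  have hδ'' : δ * ((n:ℝ) - 1) = α ^ 2 - β := by rw [hδ]; field_simp
  obtain ⟨X₀, hs0, hq0, hd0⟩ := exists_extremal n hn α β hβ h1 h2 δ hδ
  have hr0 : 0 < Real.sqrt (β - δ) := Real.sqrt_pos.2 hβδ
  have habs : 0 < |α| := abs_pos.2 hα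
  have hV0 : 0 < |α| * Real.sqrt (β - δ) ^ (n - 1 : ℕ) := by positivity
  have hgeM : |α| * Real.sqrt (β - δ) ^ (n - 1 : ℕ) ≤ M.det := by
    rw [← hd0]; exact hmax X₀ hs0 hq0
  obtain ⟨hub, heqc⟩ := key n hn α β hβ h1 h2 δ hδ M hs hq
  have hMpos : 0 < M.det := lt_of_lt_of_le hV0 hgeM
  have hV2 : (|α| * Real.sqrt (β - δ) ^ (n - 1 : ℕ)) ^ 2 = α ^ 2 * (β - δ) ^ (n - 1 : ℕ) := by
    rw [mul_pow, sq_abs, ← pow_mul, mul_comm (n - 1) 2, pow_mul, Real.sq_sqrt hβδ.le]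
  have hdetM : M.det = |α| * Real.sqrt (β - δ) ^ (n - 1 : ℕ) := by
    have hle : M.det ≤ |α| * Real.sqrt (β - δ) ^ (n - 1 : ℕ) := by
      nlinarith [hub, hV0, hMpos, hV2]
    exact le_antisymm hle hgeM
  have hEq : α ^ 2 * (β - δ) ^ (n - 1 : ℕ) ≤ M.det ^ 2 := by
    rw [hdetM, hV2]
  obtain ⟨hcols, hMMt⟩ := heqc hEq
  have hrows : ∀ i, (∑ j, M i j) = α := by
    intro i
    have hA1 : ∑ j, (M * Mᵀ) i j = α ^ 2 := by
      have : ∀ j, (M * Mᵀ) i j = (β - δ) * (if i = j then 1 else 0) + δ := by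
        intro j
        rw [hMMt]
        simp [Matrix.add_apply, Matrix.smul_apply, smul_eq_mul, Matrix.one_apply]
      rw [Finset.sum_congr rfl (fun j _ => this j), Finset.sum_add_distrib]
      rw [← Finset.mul_sum, Finset.sum_ite_eq Finset.univ i (fun _ => (1:ℝ))]
      simp only [Finset.mem_univ, if_true, Finset.sum_const, Finset.card_univ,
        Fintype.card_fin, nsmul_eq_mul, mul_one]
      linarith
    have hA2 : ∑ j, (M * Mᵀ) i j = α * (∑ t, M i t) := by
      calc ∑ j, (M * Mᵀ) i j = ∑ j, ∑ t, M i t * M j t := by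
            apply Finset.sum_congr rfl
            intro j _
            rw [Matrix.mul_apply]
            exact Finset.sum_congr rfl (fun t _ => rfl)
        _ = ∑ t, ∑ j, M i t * M j t := Finset.sum_comm
        _ = ∑ t, M i t * (∑ j, M j t) := by
            exact Finset.sum_congr rfl (fun t _ => (Finset.mul_sum _ _ _).symm)
        _ = ∑ t, M i t * α := Finset.sum_congr rfl (fun t _ => by rw [hcols t])
        _ = α * ∑ t, M i t := by rw [← Finset.sum_mul]; ring
    have h14 : α * (∑ t, M i t) = α * α := by
      rw [← hA2, hA1]; ring
    exact mul_left_cancel₀ hα h14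
  refine ⟨hrows, hcols, hMMt, ?_⟩
  rw [hdetM]
  congr 1
  rw [Real.sqrt_eq_rpow, ← Real.rpow_natCast ((β - δ) ^ ((1:ℝ)/2)) (n - 1),
    ← Real.rpow_mul hβδ.le]
  congr 1
  have : ((n - 1 : ℕ) : ℝ) = (n:ℝ) - 1 := by
    push_cast [Nat.cast_sub (by omega : 1 ≤ n)]; ring
  rw [this]
  ring
end

section
/- Let n ≥ 2 be a natural number and M a real n×n matrix. Set β := q(M)/n, where q(M) is the sum of the squares of the entries of M. Then |det M| ≤ β^(n/2). -/
open Matrix in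

theorem abs_det_le_beta_pow (n : ℕ) (hn : 2 ≤ n) (M : Matrix (Fin n) (Fin n) ℝ)
    (β : ℝ) (hβ : β = (∑ i, ∑ j, (M i j) ^ 2) / n) :
    |M.det| ≤ β ^ ((n : ℝ) / 2) := by
  have hn0 : (0:ℝ) < n := by positivity
  have hPSD : (Mᴴ * M).PosSemidef := Matrix.posSemidef_conjTranspose_mul_self M
  have hA : (Mᴴ * M).IsHermitian := hPSD.1
  set lam : Fin n → ℝ := hA.eigenvalues with hlamdef
  have hlam : ∀ i, 0 ≤ lam i := hPSD.eigenvalues_nonneg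
  -- determinant
  have hdet : M.det ^ 2 = ∏ i, lam i := by
    have h1 : (Mᴴ * M).det = ∏ i, lam i := by
      rw [hA.det_eq_prod_eigenvalues]; rfl
    rw [← h1, Matrix.det_mul, Matrix.det_conjTranspose, star_trivial, sq]
  -- trace
  have htr : (Mᴴ * M).trace = ∑ i, lam i := by
    rw [hA.trace_eq_sum_eigenvalues]; rfl
  have htr2 : (Mᴴ * M).trace = ∑ i, ∑ j, (M i j) ^ 2 := by
    rw [Matrix.trace]
    simp only [Matrix.diag, Matrix.mul_apply, Matrix.conjTranspose_apply, star_trivial]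
    rw [Finset.sum_comm]
    simp [sq]
  have hsum : ∑ i, lam i = n * β := by
    rw [hβ, ← htr2, htr]
    field_simp
  have hβ0 : 0 ≤ β := by
    rw [hβ]
    positivity
  -- AM-GM
  have hamgm : ∏ i, lam i ^ ((1:ℝ)/n) ≤ β := by
    have := Real.geom_mean_le_arith_mean_weighted Finset.univ (fun _ => (1:ℝ)/n) lam
      (fun i _ => by positivity)
      (by simp [Finset.card_univ]; field_simp)
      (fun i _ => hlam i)
    calc ∏ i, lam i ^ ((1:ℝ)/n) ≤ ∑ i, (1/n : ℝ) * lam i := this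
      _ = (∑ i, lam i) / n := by rw [Finset.sum_div]; exact Finset.sum_congr rfl (by intros; ring)
      _ = β := by rw [hsum]; field_simp
  have hprod : ∏ i, lam i ≤ β ^ n := by
    have h1 : (∏ i, lam i ^ ((1:ℝ)/n)) ^ n ≤ β ^ n :=
      pow_le_pow_left₀ (Finset.prod_nonneg fun i _ => Real.rpow_nonneg (hlam i) _) hamgm n
    calc ∏ i, lam i = (∏ i, lam i ^ ((1:ℝ)/n)) ^ n := by
          rw [← Finset.prod_pow]
          refine Finset.prod_congr rfl fun i _ => ?_
          rw [← Real.rpow_natCast (lam i ^ ((1:ℝ)/n)) n, ← Real.rpow_mul (hlam i)]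
          field_simp
          simp
      _ ≤ β ^ n := h1
  have hkey : M.det ^ 2 ≤ β ^ n := by rw [hdet]; exact hprod
  have hrpow : β ^ ((n:ℝ)/2) = Real.sqrt (β ^ n) := by
    rw [Real.sqrt_eq_rpow, ← Real.rpow_natCast β n, ← Real.rpow_mul hβ0]
    ring_nf
  rw [hrpow]
  exact Real.abs_le_sqrt hkey
end

section
/- Let n ≥ 2 be a natural number and M a real n×n matrix. Set α := s(M)/n, β := q(M)/n and κ := (n·β − α²)/(n−1). If α² ≥ β, then |det M| ≤ |α|·κ^((n−1)/2), and moreover |α|·κ^((n−1)/2) ≤ β^(n/2), with this last inequality strict when α² > β. -/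
set_option maxHeartbeats 1000000


-- Bernoulli-type: (1 + m δ)(1-δ)^m ≤ 1 for δ ∈ [0,1]
lemma aux_bern (m : ℕ) (δ : ℝ) (h0 : 0 ≤ δ) (h1 : δ ≤ 1) :
    (1 + m * δ) * (1 - δ) ^ m ≤ 1 := by
  induction m with
  | zero => simp
  | succ m ih =>
    have h1δ : 0 ≤ 1 - δ := by linarith
    have key : (1 + (m+1 : ℕ) * δ) * (1 - δ) ≤ 1 + m * δ := by
      push_cast
      nlinarith [sq_nonneg δ]
    calc (1 + (m+1 : ℕ) * δ) * (1 - δ) ^ (m+1)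
        = ((1 + (m+1 : ℕ) * δ) * (1 - δ)) * (1 - δ) ^ m := by ring
      _ ≤ (1 + m * δ) * (1 - δ) ^ m := by
          apply mul_le_mul_of_nonneg_right key (pow_nonneg h1δ m)
      _ ≤ 1 := ih

-- monotonicity: u (T-u)^m ≤ a (T-a)^m for T/(m+1) ≤ a ≤ u ≤ T
lemma aux_mono (m : ℕ) (a u T : ℝ) (ha : 0 ≤ a) (hau : a ≤ u) (huT : u ≤ T)
    (hT : T ≤ (m + 1) * a) : u * (T - u) ^ m ≤ a * (T - a) ^ m := by
  rcases eq_or_lt_of_le (hau.trans huT) with hEq | hlt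
  · have : u = a := le_antisymm (huT.trans hEq.symm.le) hau
    rw [this]
  · -- a < T
    set δ : ℝ := (u - a) / (T - a) with hδ
    have hTa : 0 < T - a := by linarith
    have hδ0 : 0 ≤ δ := div_nonneg (by linarith) hTa.le
    have hδ1 : δ ≤ 1 := by
      rw [div_le_one hTa]; linarith
    have hTu : T - u = (1 - δ) * (T - a) := by
      rw [hδ, sub_mul, one_mul, div_mul_cancel₀ _ hTa.ne']; ring
    have hδTa : δ * (T - a) = u - a := div_mul_cancel₀ _ hTa.ne'
    have hma : u - a ≤ (m : ℝ) * a * δ := by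
      nlinarith [mul_le_mul_of_nonneg_left (show T - a ≤ (m:ℝ)*a by linarith) hδ0]
    have hu : u ≤ a * (1 + m * δ) := by nlinarith
    have h1δ : 0 ≤ 1 - δ := by linarith
    calc u * (T - u) ^ m = u * (1 - δ) ^ m * (T - a) ^ m := by
          rw [hTu, mul_pow]; ring
      _ ≤ (a * (1 + m * δ)) * (1 - δ) ^ m * (T - a) ^ m := by
          apply mul_le_mul_of_nonneg_right _ (pow_nonneg hTa.le m)
          exact mul_le_mul_of_nonneg_right hu (pow_nonneg h1δ m)
      _ = a * ((1 + m * δ) * (1 - δ) ^ m) * (T - a) ^ m := by ring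
      _ ≤ a * 1 * (T - a) ^ m := by
          apply mul_le_mul_of_nonneg_right _ (pow_nonneg hTa.le m)
          exact mul_le_mul_of_nonneg_left (aux_bern m δ hδ0 hδ1) ha
      _ = a * (T - a) ^ m := by ring

-- equal-weight AM-GM
lemma aux_amgm {ι : Type*} (s : Finset ι) (f : ι → ℝ) (hf : ∀ i ∈ s, 0 ≤ f i)
    (m : ℕ) (hm : s.card = m) (hm0 : 0 < m) :
    ∏ i ∈ s, f i ≤ ((∑ i ∈ s, f i) / m) ^ m := by
  have hmR : (m : ℝ) ≠ 0 := Nat.cast_ne_zero.mpr hm0.ne'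
  have key := Real.geom_mean_le_arith_mean_weighted s (fun _ => 1 / m) f
    (fun i _ => by positivity)
    (by simp [hm]; field_simp) hf
  have hL : (∏ i ∈ s, f i ^ (1 / m : ℝ)) ^ m = ∏ i ∈ s, f i := by
    rw [← Finset.prod_pow]
    refine Finset.prod_congr rfl fun i hi => ?_
    rw [← Real.rpow_natCast (f i ^ (1/m:ℝ)) m, ← Real.rpow_mul (hf i hi)]
    field_simp
    simp
  have hR : ∑ i ∈ s, (1 / m : ℝ) * f i = (∑ i ∈ s, f i) / m := by
    rw [Finset.sum_div, Finset.sum_congr rfl (fun i _ => one_div_mul_eq_div (m:ℝ) (f i))]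
  calc ∏ i ∈ s, f i = (∏ i ∈ s, f i ^ (1 / m : ℝ)) ^ m := hL.symm
    _ ≤ ((∑ i ∈ s, f i) / m) ^ m := by
        apply pow_le_pow_left₀ (Finset.prod_nonneg fun i hi => Real.rpow_nonneg (hf i hi) _)
        rw [← hR]; exact key

open Matrix in
lemma aux_det (n : ℕ) (hn : 2 ≤ n) (M : Matrix (Fin n) (Fin n) ℝ) (a T : ℝ)
    (hT : T = ∑ i, ∑ j, (M i j)^2)
    (ha0 : 0 ≤ a)
    (hβa : T ≤ n * a)
    (haR : (n:ℝ) * (n * a) ≤ (∑ i, ∑ j, M i j)^2) :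
    M.det ^ 2 ≤ a * ((T - a)/((n:ℝ)-1)) ^ (n-1) := by
  classical
  have hn0 : 0 < n := by omega
  set A := Mᴴ * M with hA
  have hPSD : A.PosSemidef := Matrix.posSemidef_conjTranspose_mul_self M
  have hH : A.IsHermitian := hPSD.1
  set μ := hH.eigenvalues with hμ
  have hμ0 : ∀ i, 0 ≤ μ i := hPSD.eigenvalues_nonneg
  have hdet : M.det ^ 2 = ∏ i, μ i := by
    have h1 := hH.det_eq_prod_eigenvalues
    have h2 : A.det = M.det ^ 2 := by
      rw [hA, Matrix.det_mul, Matrix.det_conjTranspose]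
      simp [pow_two]
    rw [h2] at h1
    simpa using h1
  have htraceT : A.trace = T := by
    rw [hT, hA]
    simp only [Matrix.trace, Matrix.diag, Matrix.mul_apply, Matrix.conjTranspose_apply,
      star_trivial, pow_two]
    rw [Finset.sum_comm]
  have htraceμ : A.trace = ∑ i, μ i := by
    nth_rewrite 1 [hH.spectral_theorem]
    rw [Unitary.conjStarAlgAut_apply]
    rw [Matrix.trace_mul_cycle]
    rw [(Matrix.mem_unitaryGroup_iff').mp (hH.eigenvectorUnitary).2]
    simp [Matrix.trace_diagonal]
    rfl
  set U : Matrix (Fin n) (Fin n) ℝ := (hH.eigenvectorUnitary : Matrix (Fin n) (Fin n) ℝ) with hUdef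
  set v : Fin n → ℝ := fun _ => 1 with hv
  set w : Fin n → ℝ := v ᵥ* U with hw
  have hw' : w = star U *ᵥ v := by
    ext i
    simp [hw, Matrix.vecMul, Matrix.mulVec, dotProduct, Matrix.conjTranspose_apply,
      mul_comm]
  have hUU : U * star U = 1 := (Matrix.mem_unitaryGroup_iff).mp (hH.eigenvectorUnitary).2
  have hw2 : w ⬝ᵥ w = n := by
    nth_rewrite 2 [hw']
    rw [Matrix.dotProduct_mulVec, hw, Matrix.vecMul_vecMul, hUU, Matrix.vecMul_one]
    simp [hv, dotProduct]
  have hRay : v ⬝ᵥ (A *ᵥ v) = ∑ i, μ i * w i ^ 2 := by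
    nth_rewrite 1 [hH.spectral_theorem]
    rw [Unitary.conjStarAlgAut_apply]
    rw [← Matrix.mulVec_mulVec, ← Matrix.mulVec_mulVec, ← hw', Matrix.dotProduct_mulVec, ← hw]
    simp only [Matrix.mulVec_diagonal, dotProduct, Function.comp]
    exact Finset.sum_congr rfl fun i _ => by rw [hμ]; simp [RCLike.ofReal_real_eq_id]; ring
  have hRayval : v ⬝ᵥ (A *ᵥ v) = ∑ k, (∑ j, M k j) ^ 2 := by
    have e1 : v ⬝ᵥ (A *ᵥ v) = ∑ i, ∑ j, ∑ k, M k i * M k j := by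
      simp [hA, hv, dotProduct, Matrix.mulVec, Matrix.mul_apply]
    have e2 : ∑ k, (∑ j : Fin n, M k j) ^ 2 = ∑ k, ∑ i, ∑ j, M k i * M k j := by
      refine Finset.sum_congr rfl fun k _ => ?_
      rw [pow_two, Finset.sum_mul_sum]
    calc v ⬝ᵥ (A *ᵥ v) = ∑ i, ∑ j, ∑ k, M k i * M k j := e1
      _ = ∑ i, ∑ k, ∑ j, M k i * M k j :=
          Finset.sum_congr rfl fun i _ => Finset.sum_comm
      _ = ∑ k, ∑ i, ∑ j, M k i * M k j := Finset.sum_comm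
      _ = ∑ k, (∑ j : Fin n, M k j) ^ 2 := e2.symm
  obtain ⟨j, -, hjmax⟩ := Finset.exists_max_image (Finset.univ : Finset (Fin n)) μ
    ⟨⟨0, hn0⟩, Finset.mem_univ _⟩
  have hwsum : ∑ i, w i ^ 2 = (n:ℝ) := by
    simpa [dotProduct, pow_two] using hw2
  have hsum_le : ∑ i, μ i * w i ^ 2 ≤ μ j * n := by
    rw [← hwsum, Finset.mul_sum]
    exact Finset.sum_le_sum fun i _ =>
      mul_le_mul_of_nonneg_right (hjmax i (Finset.mem_univ i)) (sq_nonneg _)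
  have hCS : (∑ i, ∑ j, M i j)^2 ≤ n * ∑ k, (∑ j, M k j)^2 := by
    have h0 : ∑ i, ∑ j, M i j = ∑ k, (∑ j, M k j) := rfl
    rw [h0]
    simpa using sq_sum_le_card_mul_sum_sq (s := (Finset.univ : Finset (Fin n)))
      (f := fun k => ∑ j, M k j)
  have hnR : (0:ℝ) < n := by positivity
  have haμj : a ≤ μ j := by
    have h1 : (n:ℝ) * (n * a) ≤ n * (μ j * n) := by
      calc (n:ℝ)*(n*a) ≤ (∑ i, ∑ j, M i j)^2 := haR
        _ ≤ n * ∑ k, (∑ j, M k j)^2 := hCS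
        _ = n * ∑ i, μ i * w i^2 := by rw [← hRayval, hRay]
        _ ≤ n * (μ j * n) := mul_le_mul_of_nonneg_left hsum_le hnR.le
    have h2 : (n:ℝ) * a ≤ μ j * n := (mul_le_mul_iff_right₀ hnR).mp h1
    have h3 : a * n ≤ μ j * n := by linarith
    exact le_of_mul_le_mul_right h3 hnR
  have hμjT : μ j ≤ T := by
    calc μ j ≤ ∑ i, μ i := Finset.single_le_sum (fun i _ => hμ0 i) (Finset.mem_univ j)
      _ = T := by rw [← htraceμ, htraceT]
  have hcard : (Finset.univ.erase j).card = n - 1 := by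
    rw [Finset.card_erase_of_mem (Finset.mem_univ j), Finset.card_univ, Fintype.card_fin]
  have hcast : ((n - 1 : ℕ) : ℝ) = (n:ℝ) - 1 := by
    push_cast [Nat.cast_sub (by omega : 1 ≤ n)]
    ring
  have hprodrest : ∏ i ∈ Finset.univ.erase j, μ i ≤ ((T - μ j)/((n:ℝ)-1)) ^ (n-1) := by
    have hs : ∑ i ∈ Finset.univ.erase j, μ i = T - μ j := by
      rw [Finset.sum_erase_eq_sub (Finset.mem_univ j)]
      rw [← htraceμ, htraceT]
    have h2 := aux_amgm (Finset.univ.erase j) μ (fun i _ => hμ0 i) (n-1) hcard (by omega)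
    rw [hs, hcast] at h2
    exact h2
  have hdet2 : M.det^2 ≤ μ j * ((T - μ j)/((n:ℝ)-1))^(n-1) := by
    rw [hdet, ← Finset.mul_prod_erase _ _ (Finset.mem_univ j)]
    exact mul_le_mul_of_nonneg_left hprodrest (hμ0 j)
  have hTa : T ≤ (((n-1:ℕ):ℝ) + 1) * a := by
    rw [hcast]
    have : ((n:ℝ) - 1 + 1) = n := by ring
    rw [this]
    exact hβa
  have hmono := aux_mono (n-1) a (μ j) T ha0 haμj hμjT hTa
  have hc : (0:ℝ) < ((n:ℝ)-1)^(n-1) := by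
    apply pow_pos
    have : (2:ℝ) ≤ n := by exact_mod_cast hn
    linarith
  calc M.det^2 ≤ μ j * ((T - μ j)/((n:ℝ)-1))^(n-1) := hdet2
    _ = μ j * (T - μ j)^(n-1) / ((n:ℝ)-1)^(n-1) := by rw [div_pow]; ring
    _ ≤ a * (T - a)^(n-1) / ((n:ℝ)-1)^(n-1) := by
        exact (div_le_div_iff_of_pos_right hc).mpr hmono
    _ = a * ((T - a)/((n:ℝ)-1))^(n-1) := by rw [div_pow]; ring

lemma aux_half (x : ℝ) : (x^2 : ℝ) ^ (1/2 : ℝ) = |x| := by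
  rw [← Real.sqrt_eq_rpow, Real.sqrt_sq_eq_abs]

lemma aux_half_mono {x y : ℝ} (hx : 0 ≤ x) (hxy : x ≤ y) :
    x ^ (1/2:ℝ) ≤ y ^ (1/2:ℝ) :=
  Real.rpow_le_rpow hx hxy (by norm_num)

theorem abs_det_le_gasper_bound (n : ℕ) (hn : 2 ≤ n) (M : Matrix (Fin n) (Fin n) ℝ)
    (α β κ : ℝ) (hα : α = (∑ i, ∑ j, M i j) / n)
    (hβ : β = (∑ i, ∑ j, (M i j) ^ 2) / n)
    (hκ : κ = (n * β - α ^ 2) / (n - 1))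
    (h : β ≤ α ^ 2) :
    |M.det| ≤ |α| * κ ^ (((n : ℝ) - 1) / 2)
      ∧ |α| * κ ^ (((n : ℝ) - 1) / 2) ≤ β ^ ((n : ℝ) / 2)
      ∧ (β < α ^ 2 → |α| * κ ^ (((n : ℝ) - 1) / 2) < β ^ ((n : ℝ) / 2)) := by
  have hnR : (0:ℝ) < n := by
    have : 0 < n := by omega
    exact_mod_cast this
  have hn2R : (2:ℝ) ≤ n := by exact_mod_cast hn
  have hn1 : (0:ℝ) < (n:ℝ) - 1 := by linarith
  set s' := ∑ i, ∑ j, M i j with hs'def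
  set q' := ∑ i, ∑ j, (M i j)^2 with hq'def
  have hq0 : 0 ≤ q' := by positivity
  have hqd : q' = n * β := by rw [hβ]; field_simp
  have hsd : s' = n * α := by rw [hα]; field_simp
  have hβ0 : 0 ≤ β := by rw [hβ]; positivity
  have hcast : ((n-1:ℕ):ℝ) = (n:ℝ)-1 := by
    push_cast [Nat.cast_sub (by omega : 1 ≤ n)]
    ring
  have hκq : κ = (q' - α^2)/((n:ℝ)-1) := by rw [hκ, hqd]
  have hκmul : κ * ((n:ℝ)-1) = n*β - α^2 := by rw [hκ]; field_simp
  -- Cauchy-Schwarz: α^2 ≤ n β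
  have hκ0 : 0 ≤ κ := by
    have hCS1 : s'^2 ≤ (n:ℝ) * ∑ i, (∑ j, M i j)^2 := by
      simpa using sq_sum_le_card_mul_sum_sq (s := (Finset.univ : Finset (Fin n)))
        (f := fun i => ∑ j, M i j)
    have hCS2 : ∑ i, (∑ j, M i j)^2 ≤ (n:ℝ) * q' := by
      rw [hq'def, Finset.mul_sum]
      refine Finset.sum_le_sum fun i _ => ?_
      simpa using sq_sum_le_card_mul_sum_sq (s := (Finset.univ : Finset (Fin n)))
        (f := fun j => M i j)
    have h1 : (n:ℝ)^2 * α^2 ≤ (n:ℝ)^2 * (n * β) := by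
      calc (n:ℝ)^2*α^2 = s'^2 := by rw [hsd]; ring
        _ ≤ (n:ℝ) * ((n:ℝ) * q') := le_trans hCS1 (by
            exact mul_le_mul_of_nonneg_left hCS2 hnR.le)
        _ = (n:ℝ)^2 * (n*β) := by rw [hqd]; ring
    have h2 : α^2 ≤ n * β := le_of_mul_le_mul_left h1 (by positivity)
    rw [hκ]
    apply div_nonneg (by linarith) (by linarith)
  -- main determinant bound
  have hq_le : q' ≤ (n:ℝ) * α^2 := by
    rw [hqd]
    exact mul_le_mul_of_nonneg_left h hnR.le
  have hR_eq : (n:ℝ) * ((n:ℝ) * α^2) ≤ s'^2 := by rw [hsd]; nlinarith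
  have hDet := aux_det n hn M (α^2) q' rfl (sq_nonneg α) hq_le hR_eq
  have hDetκ : M.det ^ 2 ≤ α^2 * κ^(n-1) := by rw [hκq]; exact hDet
  -- AM-GM: α² κ^(n-1) ≤ β^n
  have i0 : Fin n := ⟨0, by omega⟩
  have hcard0 : (Finset.univ.erase i0).card = n-1 := by
    rw [Finset.card_erase_of_mem (Finset.mem_univ _), Finset.card_univ, Fintype.card_fin]
  set f : Fin n → ℝ := fun i => if i = i0 then α^2 else κ with hfdef
  have hf0 : ∀ i ∈ Finset.univ, 0 ≤ f i := by
    intro i _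
    by_cases hi : i = i0 <;> simp [hfdef, hi, sq_nonneg, hκ0]
  have hprodf : ∏ i, f i = α^2 * κ^(n-1) := by
    rw [← Finset.mul_prod_erase _ _ (Finset.mem_univ i0)]
    rw [Finset.prod_congr rfl (fun i hi => show f i = κ by
      simp [hfdef, Finset.ne_of_mem_erase hi])]
    rw [Finset.prod_const, hcard0]
    simp [hfdef]
  have hsumf : ∑ i, f i = (n:ℝ) * β := by
    rw [← Finset.add_sum_erase _ _ (Finset.mem_univ i0)]
    rw [Finset.sum_congr rfl (fun i hi => show f i = κ by
      simp [hfdef, Finset.ne_of_mem_erase hi])]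
    rw [Finset.sum_const, hcard0, nsmul_eq_mul, hcast]
    simp only [hfdef, if_pos rfl]
    linarith [hκmul]
  have hAM : α^2 * κ^(n-1) ≤ β^n := by
    have := aux_amgm Finset.univ f hf0 n (by simp) (by omega)
    rw [hprodf, hsumf] at this
    have hd : (n:ℝ)*β/n = β := by field_simp
    rwa [hd] at this
  -- conversions to rpow
  have hEq1 : (α^2 * κ^(n-1)) ^ (1/2:ℝ) = |α| * κ ^ (((n:ℝ)-1)/2) := by
    rw [Real.mul_rpow (sq_nonneg α) (pow_nonneg hκ0 _), aux_half,
      ← Real.rpow_natCast κ (n-1), ← Real.rpow_mul hκ0, hcast]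
    congr 1
    ring
  have hEq2 : (β ^ n : ℝ) ^ (1/2:ℝ) = β ^ ((n:ℝ)/2) := by
    rw [← Real.rpow_natCast β n, ← Real.rpow_mul hβ0]
    congr 1
    ring
  refine ⟨?_, ?_, ?_⟩
  · calc |M.det| = (M.det^2) ^ (1/2:ℝ) := (aux_half _).symm
      _ ≤ (α^2 * κ^(n-1)) ^ (1/2:ℝ) := aux_half_mono (sq_nonneg _) hDetκ
      _ = |α| * κ ^ (((n:ℝ)-1)/2) := hEq1
  · calc |α| * κ ^ (((n:ℝ)-1)/2) = (α^2 * κ^(n-1)) ^ (1/2:ℝ) := hEq1.symm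
      _ ≤ (β^n) ^ (1/2:ℝ) := aux_half_mono (by positivity) hAM
      _ = β ^ ((n:ℝ)/2) := hEq2
  · intro hlt
    have hβpos : 0 < β := by
      rcases hβ0.lt_or_eq with h' | h'
      · exact h'
      · exfalso
        have hq'0 : q' = 0 := by rw [hqd, ← h', mul_zero]
        have hM0 : ∀ i j, M i j = 0 := by
          intro i j
          have h2 : ∑ j, (M i j)^2 = 0 := by
            have := (Finset.sum_eq_zero_iff_of_nonneg
              (fun i _ => Finset.sum_nonneg fun j _ => sq_nonneg (M i j))).mp
              (hq'def ▸ hq'0) i (Finset.mem_univ i)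
            exact this
          have h3 := (Finset.sum_eq_zero_iff_of_nonneg
            (fun j _ => sq_nonneg (M i j))).mp h2 j (Finset.mem_univ j)
          exact pow_eq_zero_iff (by norm_num) |>.mp h3
        have hs0 : s' = 0 := by
          rw [hs'def]
          exact Finset.sum_eq_zero fun i _ => Finset.sum_eq_zero fun j _ => hM0 i j
        have hα0 : α = 0 := by rw [hα, hs0, zero_div]
        rw [← h', hα0] at hlt
        norm_num at hlt
    rcases hκ0.lt_or_eq with hκpos | hκzero
    · -- κ > 0
      have hκβ : κ < β := by nlinarith
      have hκα : κ < α^2 := lt_trans hκβ hlt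
      set m0 : ℝ := (α^2 + κ)/2 with hm0def
      have hm0 : 0 ≤ m0 := by positivity
      have h4 : α^2 * κ < m0^2 := by nlinarith [sq_nonneg (α^2 - κ)]
      have hsplit : κ^(n-1) = κ * κ^(n-2) := by
        rw [← pow_succ']
        congr 1
        omega
      have hstrict : α^2 * κ^(n-1) < m0^2 * κ^(n-2) := by
        calc α^2*κ^(n-1) = (α^2*κ)*κ^(n-2) := by rw [hsplit]; ring
          _ < m0^2 * κ^(n-2) := mul_lt_mul_of_pos_right h4 (pow_pos hκpos _)
      -- AM-GM for m0, m0, κ, ..., κ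
      have hn2cast : ((n-2:ℕ):ℝ) = (n:ℝ)-2 := by
        push_cast [Nat.cast_sub (by omega : 2 ≤ n)]
        ring
      have hGM : m0^2 * κ^(n-2) ≤ β^n := by
        have hgm := Real.geom_mean_le_arith_mean_weighted Finset.univ
          ![2/(n:ℝ), ((n:ℝ)-2)/n] ![m0, κ]
          (by
            intro i _
            fin_cases i
            · simp; positivity
            · simp
              apply div_nonneg (by linarith) hnR.le)
          (by
            simp [Fin.sum_univ_two]
            field_simp
            ring)
          (by
            intro i _
            fin_cases i
            · simpa using hm0
            · simpa using hκ0)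
        simp only [Fin.prod_univ_two, Fin.sum_univ_two, Matrix.cons_val_zero,
          Matrix.cons_val_one, Matrix.head_cons] at hgm
        have hrhs : 2/(n:ℝ) * m0 + ((n:ℝ)-2)/n * κ = β := by
          rw [hm0def]
          field_simp
          nlinarith [hκmul]
        rw [hrhs] at hgm
        have hpow := pow_le_pow_left₀ (by positivity) hgm n
        have hlhs : (m0 ^ (2/(n:ℝ)) * κ ^ (((n:ℝ)-2)/n)) ^ n = m0^2 * κ^(n-2) := by
          rw [mul_pow, ← Real.rpow_natCast (m0 ^ (2/(n:ℝ))) n, ← Real.rpow_natCast (κ ^ (((n:ℝ)-2)/n)) n,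
            ← Real.rpow_mul hm0, ← Real.rpow_mul hκ0]
          have e1 : 2/(n:ℝ) * n = 2 := by field_simp
          have e2 : ((n:ℝ)-2)/n * n = ((n-2:ℕ):ℝ) := by rw [hn2cast]; field_simp
          rw [e1, e2, Real.rpow_two, Real.rpow_natCast]
        rw [hlhs] at hpow
        exact hpow
      have hfinal : α^2 * κ^(n-1) < β^n := lt_of_lt_of_le hstrict hGM
      calc |α| * κ ^ (((n:ℝ)-1)/2) = (α^2 * κ^(n-1)) ^ (1/2:ℝ) := hEq1.symm
        _ < (β^n) ^ (1/2:ℝ) := Real.rpow_lt_rpow (by positivity) hfinal (by norm_num)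
        _ = β ^ ((n:ℝ)/2) := hEq2
    · -- κ = 0
      rw [← hκzero]
      rw [Real.zero_rpow (by positivity : ((n:ℝ)-1)/2 ≠ 0)]
      rw [mul_zero]
      exact Real.rpow_pos_of_pos hβpos _
end

section
/- Let n ≥ 2 be a natural number, A and B real n×n matrices, and M := A + iB the corresponding complex n×n matrix. Set α := s(A)/n, β := (q(A) + q(B))/n and κ := (2n·β − α²)/(2n−1). If α² ≥ β, then |det M| ≤ |α|^(1/2)·κ^((2n−1)/4), and moreover |α|^(1/2)·κ^((2n−1)/4) ≤ β^(n/2), with this last inequality strict when α² > β. -/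
open Finset Matrix
open scoped ComplexOrder

section GasperAux

lemma gasper_bern_aux (m : ℕ) (x d : ℝ) (hx : 0 ≤ x) (hd : 0 ≤ d) :
    x ^ (m + 1) + (m + 1) * x ^ m * d ≤ (x + d) ^ (m + 1) := by
  induction m with
  | zero => simp
  | succ m ih =>
    have hxm : 0 ≤ x ^ m := pow_nonneg hx m
    have h1 : (x + d) * (x ^ (m + 1) + (m + 1) * x ^ m * d) ≤ (x + d) * (x + d) ^ (m + 1) :=
      mul_le_mul_of_nonneg_left ih (by linarith)
    have h2 : 0 ≤ (m + 1 : ℝ) * (x ^ m * (d * d)) := by positivity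
    calc x ^ (m + 1 + 1) + (↑(m + 1) + 1) * x ^ (m + 1) * d
        ≤ (x + d) * (x ^ (m + 1) + (m + 1) * x ^ m * d) := by push_cast; ring_nf; nlinarith
      _ ≤ (x + d) * (x + d) ^ (m + 1) := h1
      _ = (x + d) ^ (m + 1 + 1) := by ring

lemma gasper_step_mono (m : ℕ) (S a b : ℝ) (ha : 0 ≤ a) (hab : a ≤ b) (hbS : b ≤ S)
    (hSb : S - b ≤ (m + 1) * a) :
    b * (S - b) ^ (m + 1) ≤ a * (S - a) ^ (m + 1) := by
  have hx : (0:ℝ) ≤ S - b := by linarith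
  have hd : (0:ℝ) ≤ b - a := by linarith
  have hb := gasper_bern_aux m (S - b) (b - a) hx hd
  have hxm : (0:ℝ) ≤ (S - b) ^ m := pow_nonneg hx m
  have key : S - a = (S - b) + (b - a) := by ring
  rw [key]
  have h1 : a * ((S - b) ^ (m + 1) + (m + 1) * (S - b) ^ m * (b - a))
      ≤ a * ((S - b) + (b - a)) ^ (m + 1) := mul_le_mul_of_nonneg_left hb ha
  have h2 : (S - b) * ((S - b) ^ m * (b - a)) ≤ ((m:ℝ) + 1) * a * ((S - b) ^ m * (b - a)) :=
    mul_le_mul_of_nonneg_right hSb (mul_nonneg hxm hd)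
  have h3 : b * (S - b) ^ (m + 1)
      = a * (S - b) ^ (m + 1) + (S - b) * ((S - b) ^ m * (b - a)) := by rw [pow_succ]; ring
  have h4 : a * ((S - b) ^ (m + 1) + (↑m + 1) * (S - b) ^ m * (b - a))
      = a * (S - b) ^ (m + 1) + ((m:ℝ) + 1) * a * ((S - b) ^ m * (b - a)) := by ring
  linarith

lemma gasper_amgm_finset {ι : Type*} (s : Finset ι) (f : ι → ℝ) (hf : ∀ i ∈ s, 0 ≤ f i) :
    ∏ i ∈ s, f i ≤ ((∑ i ∈ s, f i) / s.card) ^ (s.card) := by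
  rcases s.eq_empty_or_nonempty with rfl | hs
  · simp
  · have hc : (0:ℝ) < s.card := by exact_mod_cast hs.card_pos
    have hw : ∀ i ∈ s, (0:ℝ) ≤ 1 / s.card := fun i _ => by positivity
    have hw1 : ∑ _i ∈ s, (1:ℝ) / s.card = 1 := by
      rw [Finset.sum_const, nsmul_eq_mul]; field_simp
    have h := Real.geom_mean_le_arith_mean_weighted s (fun _ => 1 / s.card) f hw hw1 hf
    have hprod : ∏ i ∈ s, f i ^ ((1:ℝ) / s.card) = (∏ i ∈ s, f i) ^ ((1:ℝ) / s.card) :=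
      Real.finset_prod_rpow s f hf _
    rw [hprod] at h
    have hsumeq : ∑ i ∈ s, 1 / (s.card:ℝ) * f i = (∑ i ∈ s, f i) / s.card := by
      simp_rw [one_div, inv_mul_eq_div]
      exact (Finset.sum_div _ _ _).symm
    rw [hsumeq] at h
    have hP : (0:ℝ) ≤ ∏ i ∈ s, f i := Finset.prod_nonneg hf
    have e1 : ((∏ i ∈ s, f i) ^ ((1:ℝ) / s.card)) ^ (s.card : ℕ) = ∏ i ∈ s, f i := by
      rw [← Real.rpow_natCast ((∏ i ∈ s, f i) ^ ((1:ℝ) / s.card)) s.card,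
        ← Real.rpow_mul hP, one_div, inv_mul_cancel₀ (ne_of_gt hc), Real.rpow_one]
    calc ∏ i ∈ s, f i = ((∏ i ∈ s, f i) ^ ((1:ℝ) / s.card)) ^ (s.card : ℕ) := e1.symm
      _ ≤ ((∑ i ∈ s, f i) / s.card) ^ (s.card : ℕ) :=
          pow_le_pow_left₀ (Real.rpow_nonneg hP _) h _

lemma gasper_amgm_two_pow {a x : ℝ} (ha : 0 ≤ a) (hx : 0 ≤ x) {p q : ℕ} (hpq : 0 < p + q) :
    a ^ p * x ^ q ≤ ((p * a + q * x) / (p + q)) ^ (p + q) := by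
  have hN : (0:ℝ) < (p:ℝ) + q := by exact_mod_cast hpq
  set w₁ : ℝ := p / ((p:ℝ) + q) with hw₁
  set w₂ : ℝ := q / ((p:ℝ) + q) with hw₂
  have hw₁0 : 0 ≤ w₁ := by rw [hw₁]; positivity
  have hw₂0 : 0 ≤ w₂ := by rw [hw₂]; positivity
  have hsum : w₁ + w₂ = 1 := by
    rw [hw₁, hw₂, ← add_div, div_self (ne_of_gt hN)]
  have h := Real.geom_mean_le_arith_mean2_weighted hw₁0 hw₂0 ha hx hsum
  have hL : 0 ≤ a ^ w₁ * x ^ w₂ :=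
    mul_nonneg (Real.rpow_nonneg ha _) (Real.rpow_nonneg hx _)
  have key : (a ^ w₁ * x ^ w₂) ^ (p + q) = a ^ p * x ^ q := by
    rw [mul_pow, ← Real.rpow_natCast (a ^ w₁) (p + q), ← Real.rpow_natCast (x ^ w₂) (p + q),
      ← Real.rpow_mul ha, ← Real.rpow_mul hx]
    have e₁ : w₁ * ((p + q : ℕ) : ℝ) = (p:ℝ) := by
      rw [hw₁]; push_cast; field_simp
    have e₂ : w₂ * ((p + q : ℕ) : ℝ) = (q:ℝ) := by
      rw [hw₂]; push_cast; field_simp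
    rw [e₁, e₂, Real.rpow_natCast, Real.rpow_natCast]
  have heq : w₁ * a + w₂ * x = ((p:ℝ) * a + q * x) / ((p:ℝ) + q) := by
    rw [hw₁, hw₂]; ring
  calc a ^ p * x ^ q = (a ^ w₁ * x ^ w₂) ^ (p + q) := key.symm
    _ ≤ (w₁ * a + w₂ * x) ^ (p + q) := pow_le_pow_left₀ hL h _
    _ = (((p:ℝ) * a + q * x) / ((p:ℝ) + q)) ^ (p + q) := by rw [heq]

lemma gasper_strict_amgm {a k : ℝ} {N : ℕ} (hN : 1 ≤ N) (ha : 0 < a) (hk0 : 0 ≤ k)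
    (hne : a ≠ k) :
    a * k ^ N < ((a + N * k) / (N + 1)) ^ (N + 1) := by
  have hN1 : (0:ℝ) < (N:ℝ) + 1 := by positivity
  rcases eq_or_lt_of_le hk0 with hk | hk
  · rw [← hk]
    rw [zero_pow (by omega : N ≠ 0)]
    have : (0:ℝ) < ((a + N * 0) / (N + 1)) := by
      rw [mul_zero, add_zero]; positivity
    simpa using pow_pos this (N + 1)
  · have hb : (0:ℝ) < (a + N * k) / (N + 1) := by positivity
    set w₁ : ℝ := 1 / ((N:ℝ) + 1) with hw₁
    set w₂ : ℝ := N / ((N:ℝ) + 1) with hw₂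
    have hw₁0 : 0 < w₁ := by rw [hw₁]; positivity
    have hw₂0 : 0 < w₂ := by rw [hw₂]; positivity
    have hsum : w₁ + w₂ = 1 := by
      rw [hw₁, hw₂, ← add_div, add_comm, div_self (ne_of_gt hN1)]
    have hconc := strictConcaveOn_log_Ioi.2 (Set.mem_Ioi.mpr ha) (Set.mem_Ioi.mpr hk)
      hne hw₁0 hw₂0 hsum
    simp only [smul_eq_mul] at hconc
    have hmean : w₁ * a + w₂ * k = (a + N * k) / (N + 1) := by rw [hw₁, hw₂]; ring
    rw [hmean] at hconc
    have hlog : Real.log (a * k ^ N) < Real.log (((a + N * k) / (N + 1)) ^ (N + 1)) := by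
      rw [Real.log_mul (ne_of_gt ha) (by positivity), Real.log_pow, Real.log_pow]
      have hmul := (mul_lt_mul_iff_right₀ hN1).mpr hconc
      have e : ((N:ℝ) + 1) * (w₁ * Real.log a + w₂ * Real.log k)
          = Real.log a + N * Real.log k := by
        rw [hw₁, hw₂]; field_simp
      rw [e] at hmul
      push_cast
      linarith
    have hL : (0:ℝ) < a * k ^ N := by positivity
    exact (Real.log_lt_log_iff hL (pow_pos hb _)).mp hlog

lemma gasper_key_prod_bound (n : ℕ) (hn : 2 ≤ n) (β a κ : ℝ) (hβ0 : 0 ≤ β) (hba : β ≤ a)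
    (hκ : κ = (2 * n * β - a) / (2 * n - 1)) (lam : Fin n → ℝ) (hlam0 : ∀ i, 0 ≤ lam i)
    (hsum : ∑ i, lam i = n * β) (j : Fin n) (hj : a ≤ lam j) :
    (∏ i, lam i) ^ 2 ≤ a * κ ^ (2 * n - 1) := by
  have ha0 : 0 ≤ a := le_trans hβ0 hba
  set S : ℝ := n * β with hS
  have hcast1 : ((n:ℝ) - 1) ≠ 0 := by
    have : (2:ℝ) ≤ n := by exact_mod_cast hn
    linarith
  have hn1R : (0:ℝ) < (n:ℝ) - 1 := by
    have : (2:ℝ) ≤ n := by exact_mod_cast hn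
    linarith
  have hjS : lam j ≤ S := by
    have := Finset.single_le_sum (f := lam) (fun i _ => hlam0 i) (mem_univ j)
    rwa [hsum] at this
  have hsum_erase : ∑ i ∈ univ.erase j, lam i = S - lam j := by
    rw [Finset.sum_erase_eq_sub (mem_univ j), hsum]
  have hcard : ((univ.erase j).card : ℝ) = (n:ℝ) - 1 := by
    rw [Finset.card_erase_of_mem (mem_univ j), card_univ, Fintype.card_fin]
    have : 1 ≤ n := by omega
    push_cast [Nat.cast_sub this]
    ring
  have hcardn : (univ.erase j).card = n - 1 := by
    rw [Finset.card_erase_of_mem (mem_univ j), card_univ, Fintype.card_fin]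
  have h1 : ∏ i ∈ univ.erase j, lam i ≤ ((S - lam j) / ((n:ℝ) - 1)) ^ (n - 1) := by
    have := gasper_amgm_finset (univ.erase j) lam (fun i _ => hlam0 i)
    rwa [hsum_erase, hcard, hcardn] at this
  have hsplit : ∏ i, lam i = lam j * ∏ i ∈ univ.erase j, lam i :=
    (Finset.mul_prod_erase univ lam (mem_univ j)).symm
  have hP0 : 0 ≤ ∏ i, lam i := Finset.prod_nonneg (fun i _ => hlam0 i)
  have hPle : ∏ i, lam i ≤ lam j * ((S - lam j) / ((n:ℝ) - 1)) ^ (n - 1) := by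
    rw [hsplit]
    exact mul_le_mul_of_nonneg_left h1 (hlam0 j)
  have hSb : S - lam j ≤ ((n:ℝ) - 1) * a := by
    have h1' : S - lam j ≤ S - a := by linarith
    have h2' : S - a ≤ S - β := by linarith
    have h3' : S - β = ((n:ℝ) - 1) * β := by rw [hS]; ring
    have h4' : ((n:ℝ) - 1) * β ≤ ((n:ℝ) - 1) * a :=
      mul_le_mul_of_nonneg_left hba (le_of_lt hn1R)
    linarith
  have hstep : lam j * (S - lam j) ^ (n - 1) ≤ a * (S - a) ^ (n - 1) := by
    have hcast2 : ((n - 2 : ℕ) : ℝ) + 1 = (n:ℝ) - 1 := by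
      have : 2 ≤ n := hn
      push_cast [Nat.cast_sub this]
      ring
    have := gasper_step_mono (n - 2) S a (lam j) ha0 hj hjS (by rw [hcast2]; exact hSb)
    have hexp : n - 2 + 1 = n - 1 := by omega
    rwa [hexp] at this
  have hx0 : (0:ℝ) ≤ (S - a) / ((n:ℝ) - 1) := by
    have h0 : 0 ≤ S - lam j := by linarith
    have : 0 ≤ S - a := by linarith
    positivity
  have h2 : lam j * ((S - lam j) / ((n:ℝ) - 1)) ^ (n - 1)
      ≤ a * ((S - a) / ((n:ℝ) - 1)) ^ (n - 1) := by
    rw [div_pow, div_pow, ← mul_div_assoc, ← mul_div_assoc]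
    exact (div_le_div_iff_of_pos_right (pow_pos hn1R _)).mpr hstep
  set x : ℝ := (S - a) / ((n:ℝ) - 1) with hxdef
  have hPle2 : ∏ i, lam i ≤ a * x ^ (n - 1) := hPle.trans h2
  have hsq : (∏ i, lam i) ^ 2 ≤ (a * x ^ (n - 1)) ^ 2 := pow_le_pow_left₀ hP0 hPle2 2
  have h5 := gasper_amgm_two_pow (p := 1) (q := 2 * n - 2) ha0 hx0 (by omega)
  have hexp2 : 1 + (2 * n - 2) = 2 * n - 1 := by omega
  have hq : ((2 * n - 2 : ℕ) : ℝ) = 2 * (n:ℝ) - 2 := by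
    have : 2 ≤ 2 * n := by omega
    push_cast [Nat.cast_sub this]
    ring
  have hx2 : (2 * (n:ℝ) - 2) * x = 2 * (S - a) := by
    rw [hxdef]
    field_simp
  have hnum : ((1:ℕ):ℝ) * a + ((2 * n - 2 : ℕ) : ℝ) * x = 2 * (n:ℝ) * β - a := by
    rw [hq]
    linear_combination hx2 + 2 * hS
  have hden : ((1:ℕ):ℝ) + ((2 * n - 2 : ℕ) : ℝ) = 2 * (n:ℝ) - 1 := by
    rw [hq]; push_cast; ring
  have hmean : (((1:ℕ):ℝ) * a + ((2 * n - 2 : ℕ) : ℝ) * x) / (((1:ℕ):ℝ) + ((2 * n - 2 : ℕ) : ℝ)) = κ := by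
    rw [hnum, hden, hκ]
  rw [hexp2, hmean] at h5
  have hfin : (a * x ^ (n - 1)) ^ 2 = a * (a ^ 1 * x ^ (2 * n - 2)) := by
    rw [pow_one, mul_pow, ← pow_mul]
    have : (n - 1) * 2 = 2 * n - 2 := by omega
    rw [this]
    ring
  calc (∏ i, lam i) ^ 2 ≤ (a * x ^ (n - 1)) ^ 2 := hsq
    _ = a * (a ^ 1 * x ^ (2 * n - 2)) := hfin
    _ ≤ a * κ ^ (2 * n - 1) := mul_le_mul_of_nonneg_left h5 ha0

end GasperAux

set_option maxHeartbeats 1000000 in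
theorem abs_det_complex_le_gasper_bound (n : ℕ) (hn : 2 ≤ n)
    (A B : Matrix (Fin n) (Fin n) ℝ)
    (M : Matrix (Fin n) (Fin n) ℂ)
    (hM : M = A.map (fun a => (a : ℂ)) + Complex.I • B.map (fun b => (b : ℂ)))
    (α β κ : ℝ) (hα : α = (∑ i, ∑ j, A i j) / n)
    (hβ : β = ((∑ i, ∑ j, (A i j) ^ 2) + (∑ i, ∑ j, (B i j) ^ 2)) / n)
    (hκ : κ = (2 * n * β - α ^ 2) / (2 * n - 1))
    (h : β ≤ α ^ 2) :
    ‖M.det‖ ≤ |α| ^ ((1 : ℝ) / 2) * κ ^ ((2 * (n : ℝ) - 1) / 4)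
      ∧ |α| ^ ((1 : ℝ) / 2) * κ ^ ((2 * (n : ℝ) - 1) / 4) ≤ β ^ ((n : ℝ) / 2)
      ∧ (β < α ^ 2 →
          |α| ^ ((1 : ℝ) / 2) * κ ^ ((2 * (n : ℝ) - 1) / 4) < β ^ ((n : ℝ) / 2)) := by
  have hnR : (2:ℝ) ≤ (n:ℝ) := by exact_mod_cast hn
  have hn0 : (0:ℝ) < n := by linarith
  have hβ0 : 0 ≤ β := by
    rw [hβ]
    apply div_nonneg _ (le_of_lt hn0)
    apply add_nonneg <;> exact Finset.sum_nonneg fun i _ =>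
      Finset.sum_nonneg fun j _ => sq_nonneg _
  have hMentry : ∀ i j, M i j = (A i j : ℂ) + Complex.I * (B i j) := by
    intro i j
    rw [hM]
    simp [Matrix.add_apply, Matrix.map_apply, Matrix.smul_apply, smul_eq_mul]
  set H : Matrix (Fin n) (Fin n) ℂ := Mᴴ * M with hHdef
  have hH : H.PosSemidef := Matrix.posSemidef_conjTranspose_mul_self M
  have hHerm : H.IsHermitian := hH.1
  set lam : Fin n → ℝ := hHerm.eigenvalues with hlamdef
  have hlam0 : ∀ i, 0 ≤ lam i := fun i => hH.eigenvalues_nonneg i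
  set U : Matrix (Fin n) (Fin n) ℂ := (hHerm.eigenvectorUnitary : Matrix (Fin n) (Fin n) ℂ)
    with hUdef
  have hUnit : star U * U = 1 := Unitary.coe_star_mul_self _
  have hUnit' : U * star U = 1 := Unitary.coe_mul_star_self _
  -- square norms of entries
  have hsqentry : ∀ (a b : ℝ),
      star ((a:ℂ) + Complex.I * b) * ((a:ℂ) + Complex.I * b) = (a:ℂ)^2 + (b:ℂ)^2 := by
    intro a b
    have h1 : star ((a:ℂ) + Complex.I * b) = (a:ℂ) - Complex.I * b := by
      simp only [star_add, star_mul', Complex.star_def, Complex.conj_ofReal, Complex.conj_I]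
      ring
    rw [h1]
    ring_nf
    rw [Complex.I_sq]
    ring
  -- trace of H
  have htrace : H.trace = ((n * β : ℝ) : ℂ) := by
    have h1 : H.trace = ∑ i, ∑ j, star (M j i) * M j i := by
      simp [hHdef, Matrix.trace, Matrix.diag, Matrix.mul_apply, Matrix.conjTranspose_apply]
    rw [h1]
    have h2 : ∀ (i j : Fin n), star (M j i) * M j i = ((A j i)^2 : ℂ) + ((B j i)^2 : ℂ) := by
      intro i j
      rw [hMentry]
      push_cast
      exact hsqentry _ _
    have h3 : ∑ i, ∑ j, star (M j i) * M j i
        = ((∑ i, ∑ j, (A j i ^ 2 + B j i ^ 2) : ℝ) : ℂ) := by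
      push_cast
      exact Finset.sum_congr rfl fun i _ => Finset.sum_congr rfl fun j _ => h2 i j
    rw [h3]
    norm_cast
    calc ∑ i, ∑ j, (A j i ^ 2 + B j i ^ 2)
        = (∑ i, ∑ j, A j i ^ 2) + ∑ i, ∑ j, B j i ^ 2 := by
          simp only [Finset.sum_add_distrib]
      _ = (∑ i, ∑ j, A i j ^ 2) + ∑ i, ∑ j, B i j ^ 2 := by
          congr 1 <;> exact Finset.sum_comm
      _ = n * β := by rw [hβ]; field_simp
  -- trace = sum of eigenvalues
  have htr2 : H.trace = ((∑ i, lam i : ℝ) : ℂ) := by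
    calc H.trace = (U * Matrix.diagonal (RCLike.ofReal ∘ lam) * star U).trace := by
          conv_lhs => rw [hHerm.spectral_theorem]
          rw [Unitary.conjStarAlgAut_apply]
      _ = (star U * (U * Matrix.diagonal (RCLike.ofReal ∘ lam))).trace :=
          Matrix.trace_mul_comm _ _
      _ = ((star U * U) * Matrix.diagonal (RCLike.ofReal ∘ lam)).trace := by rw [mul_assoc]
      _ = (Matrix.diagonal (RCLike.ofReal ∘ lam)).trace := by rw [hUnit, one_mul]
      _ = ((∑ i, lam i : ℝ) : ℂ) := by
          rw [Matrix.trace_diagonal]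
          push_cast
          rfl
  have hsumlam : ∑ i, lam i = n * β := by
    have := htr2.symm.trans htrace
    exact_mod_cast this
  -- determinant
  have hdetH : H.det = (((‖M.det‖) ^ 2 : ℝ) : ℂ) := by
    rw [hHdef, Matrix.det_mul, Matrix.det_conjTranspose, mul_comm, Complex.star_def,
      Complex.mul_conj]
    rw [Complex.sq_norm]
  have hprodlam : ∏ i, lam i = (‖M.det‖) ^ 2 := by
    have hd := hHerm.det_eq_prod_eigenvalues
    rw [hdetH] at hd
    have h2 : (((‖M.det‖) ^ 2 : ℝ) : ℂ) = ((∏ i, lam i : ℝ) : ℂ) := by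
      rw [hd]
      push_cast
      rfl
    exact_mod_cast h2.symm
  -- Rayleigh bound
  haveI : NeZero n := ⟨by omega⟩
  obtain ⟨j, hjmax⟩ := Finite.exists_max lam
  set w : Fin n → ℂ := fun _ => 1 with hwdef
  set v : Fin n → ℂ := star U *ᵥ w with hvdef
  have hsv : star v = star w ᵥ* U := by
    rw [hvdef, Matrix.star_mulVec]
    congr 1
    rw [← Matrix.star_eq_conjTranspose, star_star]
  -- lower bound for Rayleigh quotient
  have hyE : star w ⬝ᵥ (H *ᵥ w) = star (M *ᵥ w) ⬝ᵥ (M *ᵥ w) := by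
    rw [hHdef, ← Matrix.mulVec_mulVec, Matrix.dotProduct_mulVec, ← Matrix.star_mulVec]
  have hEre1 : (star w ⬝ᵥ (H *ᵥ w)).re = ∑ i, Complex.normSq ((M *ᵥ w) i) := by
    rw [hyE]
    simp only [dotProduct, Pi.star_apply, Complex.star_def,
      ← Complex.normSq_eq_conj_mul_self]
    rw [Complex.re_sum]
    push_cast
    rfl
  have hrow : ∀ i, (M *ᵥ w) i = ((∑ j', A i j' : ℝ) : ℂ) + Complex.I * ((∑ j', B i j' : ℝ) : ℂ) := by
    intro i
    simp only [Matrix.mulVec, dotProduct, hwdef, mul_one]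
    rw [Finset.sum_congr rfl fun j' _ => hMentry i j']
    rw [Finset.sum_add_distrib, ← Finset.mul_sum]
    push_cast
    ring
  have hnormSqrow : ∀ i, Complex.normSq ((M *ᵥ w) i) = (∑ j', A i j') ^ 2 + (∑ j', B i j') ^ 2 := by
    intro i
    rw [hrow i]
    rw [show ((∑ j', A i j' : ℝ) : ℂ) + Complex.I * ((∑ j', B i j' : ℝ) : ℂ)
      = ((∑ j', A i j' : ℝ) : ℂ) + ((∑ j', B i j' : ℝ) : ℂ) * Complex.I by ring]
    rw [Complex.normSq_add_mul_I]
  have hlow : (n:ℝ) * α ^ 2 ≤ (star w ⬝ᵥ (H *ᵥ w)).re := by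
    rw [hEre1]
    have hcs : (∑ i, ∑ j', A i j') ^ 2 ≤ (n:ℝ) * ∑ i, (∑ j', A i j') ^ 2 := by
      have := sq_sum_le_card_mul_sum_sq (s := (univ : Finset (Fin n)))
        (f := fun i => ∑ j', A i j')
      simpa using this
    have hsum_eq : ∑ i, ∑ j', A i j' = (n:ℝ) * α := by
      rw [hα]; field_simp
    have h1 : (n:ℝ) * ((n:ℝ) * α ^ 2) ≤ (n:ℝ) * ∑ i, (∑ j', A i j') ^ 2 := by
      calc (n:ℝ) * ((n:ℝ) * α ^ 2) = ((n:ℝ) * α) ^ 2 := by ring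
        _ = (∑ i, ∑ j', A i j') ^ 2 := by rw [hsum_eq]
        _ ≤ (n:ℝ) * ∑ i, (∑ j', A i j') ^ 2 := hcs
    have h2 : (n:ℝ) * α ^ 2 ≤ ∑ i, (∑ j', A i j') ^ 2 :=
      le_of_mul_le_mul_left h1 hn0
    calc (n:ℝ) * α ^ 2 ≤ ∑ i, (∑ j', A i j') ^ 2 := h2
      _ ≤ ∑ i, ((∑ j', A i j') ^ 2 + (∑ j', B i j') ^ 2) :=
          Finset.sum_le_sum fun i _ => by nlinarith [sq_nonneg (∑ j', B i j')]
      _ = ∑ i, Complex.normSq ((M *ᵥ w) i) :=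
          (Finset.sum_congr rfl fun i _ => (hnormSqrow i).symm)
  -- upper bound for Rayleigh quotient
  have hvE : star w ⬝ᵥ (H *ᵥ w)
      = star v ⬝ᵥ ((Matrix.diagonal (RCLike.ofReal ∘ lam)) *ᵥ v) := by
    conv_lhs => rw [hHerm.spectral_theorem]
    rw [Unitary.conjStarAlgAut_apply]
    rw [← Matrix.mulVec_mulVec, ← Matrix.mulVec_mulVec, Matrix.dotProduct_mulVec, ← hsv, hvdef]
  have htermre : ∀ (r : ℝ) (z : ℂ), (star z * ((r:ℂ) * z)).re = r * Complex.normSq z := by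
    intro r z
    rw [Complex.star_def, mul_left_comm, ← Complex.normSq_eq_conj_mul_self,
      ← Complex.ofReal_mul, Complex.ofReal_re]
  have hre2 : (star v ⬝ᵥ ((Matrix.diagonal (RCLike.ofReal ∘ lam)) *ᵥ v)).re
      = ∑ i, lam i * Complex.normSq (v i) := by
    simp only [dotProduct, Matrix.mulVec_diagonal, Pi.star_apply, Function.comp_apply]
    rw [Complex.re_sum]
    exact Finset.sum_congr rfl fun i _ => htermre (lam i) (v i)
  have hvnorm : ∑ i, Complex.normSq (v i) = n := by
    have h1 : star v ⬝ᵥ v = ((n:ℝ) : ℂ) := by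
      rw [hsv, hvdef, ← Matrix.dotProduct_mulVec, Matrix.mulVec_mulVec, hUnit',
        Matrix.one_mulVec]
      simp [hwdef, dotProduct]
    have h2 : (star v ⬝ᵥ v).re = ∑ i, Complex.normSq (v i) := by
      simp only [dotProduct, Pi.star_apply, Complex.star_def,
        ← Complex.normSq_eq_conj_mul_self]
      rw [Complex.re_sum]
      push_cast
      rfl
    rw [h1] at h2
    rw [← h2, Complex.ofReal_re]
  have hupper : (star w ⬝ᵥ (H *ᵥ w)).re ≤ lam j * n := by
    rw [hvE, hre2]
    calc ∑ i, lam i * Complex.normSq (v i) ≤ ∑ i, lam j * Complex.normSq (v i) :=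
          Finset.sum_le_sum fun i _ =>
            mul_le_mul_of_nonneg_right (hjmax i) (Complex.normSq_nonneg _)
      _ = lam j * ∑ i, Complex.normSq (v i) := by rw [Finset.mul_sum]
      _ = lam j * n := by rw [hvnorm]
  have hjα : α ^ 2 ≤ lam j := by
    have h1 : (n:ℝ) * α ^ 2 ≤ (n:ℝ) * lam j := by
      calc (n:ℝ) * α ^ 2 ≤ (star w ⬝ᵥ (H *ᵥ w)).re := hlow
        _ ≤ lam j * n := hupper
        _ = (n:ℝ) * lam j := by ring
    exact le_of_mul_le_mul_left h1 hn0
  -- key: α² ≤ nβ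
  have hS : α ^ 2 ≤ n * β := by
    have h1 : lam j ≤ ∑ i, lam i :=
      Finset.single_le_sum (f := lam) (fun i _ => hlam0 i) (mem_univ j)
    rw [hsumlam] at h1
    linarith [hjα]
  have hκ0 : 0 ≤ κ := by
    rw [hκ]
    apply div_nonneg _ (by linarith : (0:ℝ) ≤ 2 * (n:ℝ) - 1)
    nlinarith
  -- main product bound
  have hmain : ((‖M.det‖) ^ 2) ^ 2 ≤ α ^ 2 * κ ^ (2 * n - 1) := by
    rw [← hprodlam]
    exact gasper_key_prod_bound n hn β (α ^ 2) κ hβ0 h hκ lam hlam0 hsumlam j hjα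
  -- notation for the middle quantity
  set R : ℝ := |α| ^ ((1:ℝ) / 2) * κ ^ ((2 * (n:ℝ) - 1) / 4) with hRdef
  have hR0 : 0 ≤ R := mul_nonneg (Real.rpow_nonneg (abs_nonneg _) _) (Real.rpow_nonneg hκ0 _)
  have hcast2n1 : ((2 * n - 1 : ℕ) : ℝ) = 2 * (n:ℝ) - 1 := by
    have : 1 ≤ 2 * n := by omega
    push_cast [Nat.cast_sub this]
    ring
  have hR4 : R ^ (4:ℕ) = α ^ 2 * κ ^ (2 * n - 1) := by
    rw [hRdef, mul_pow]
    congr 1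
    · rw [← Real.rpow_natCast (|α| ^ ((1:ℝ)/2)) 4, ← Real.rpow_mul (abs_nonneg α),
        show (1:ℝ)/2 * ((4:ℕ):ℝ) = ((2:ℕ):ℝ) by push_cast; ring,
        Real.rpow_natCast, sq_abs]
    · rw [← Real.rpow_natCast (κ ^ ((2*(n:ℝ)-1)/4)) 4, ← Real.rpow_mul hκ0,
        show (2*(n:ℝ)-1)/4 * ((4:ℕ):ℝ) = 2*(n:ℝ)-1 by push_cast; ring,
        ← hcast2n1, Real.rpow_natCast]
  have hβ4 : (β ^ ((n:ℝ)/2)) ^ (4:ℕ) = β ^ (2 * n) := by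
    rw [← Real.rpow_natCast (β ^ ((n:ℝ)/2)) 4, ← Real.rpow_mul hβ0,
      show (n:ℝ)/2 * ((4:ℕ):ℝ) = ((2*n:ℕ):ℝ) by push_cast; ring,
      Real.rpow_natCast]
  have h2n1ne : (2*(n:ℝ)-1) ≠ 0 := by linarith
  have hκmul : (2*(n:ℝ)-1) * κ = 2*(n:ℝ)*β - α^2 := by
    rw [hκ]
    field_simp
  have hnum2 : ((1:ℕ):ℝ) * α^2 + ((2*n-1 : ℕ):ℝ) * κ = 2*(n:ℝ)*β := by
    rw [hcast2n1]
    push_cast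
    linarith [hκmul]
  have hden2 : ((1:ℕ):ℝ) + ((2*n-1 : ℕ):ℝ) = 2*(n:ℝ) := by
    rw [hcast2n1]; push_cast; ring
  have hmean2 : (((1:ℕ):ℝ) * α^2 + ((2*n-1 : ℕ):ℝ) * κ) / (((1:ℕ):ℝ) + ((2*n-1 : ℕ):ℝ)) = β := by
    rw [hnum2, hden2]
    field_simp
  have hexp3 : 1 + (2*n - 1) = 2*n := by omega
  have hpart2core : α^2 * κ^(2*n-1) ≤ β^(2*n) := by
    have h5 := gasper_amgm_two_pow (p := 1) (q := 2*n-1) (sq_nonneg α) hκ0 (by omega)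
    rw [hexp3, hmean2, pow_one] at h5
    exact h5
  refine ⟨?_, ?_, ?_⟩
  · -- part 1
    apply le_of_pow_le_pow_left₀ (by norm_num : (4:ℕ) ≠ 0) hR0
    calc (‖M.det‖) ^ 4 = ((‖M.det‖) ^ 2) ^ 2 := by ring
      _ ≤ α ^ 2 * κ ^ (2*n-1) := hmain
      _ = R ^ 4 := hR4.symm
  · -- part 2
    apply le_of_pow_le_pow_left₀ (by norm_num : (4:ℕ) ≠ 0) (Real.rpow_nonneg hβ0 _)
    calc R ^ 4 = α ^ 2 * κ ^ (2*n-1) := hR4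
      _ ≤ β ^ (2*n) := hpart2core
      _ = (β ^ ((n:ℝ)/2)) ^ 4 := hβ4.symm
  · -- part 3
    intro hlt
    have hβpos : 0 < β := by
      by_contra h'
      push_neg at h'
      have h1 : (n:ℝ) * β ≤ 0 := mul_nonpos_of_nonneg_of_nonpos (le_of_lt hn0) h'
      have h2 : (0:ℝ) < α ^ 2 := lt_of_le_of_lt hβ0 hlt
      linarith [hS]
    have hκβ : κ < β := by
      rw [hκ, div_lt_iff₀ (by linarith : (0:ℝ) < 2*(n:ℝ)-1)]
      linarith [hlt]
    have hα2pos : 0 < α ^ 2 := lt_of_le_of_lt hβ0 hlt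
    have hne : α ^ 2 ≠ κ := (hκβ.trans hlt).ne'
    have hstrict := gasper_strict_amgm (N := 2*n-1) (by omega) hα2pos hκ0 hne
    -- hstrict : α^2 * κ^(2n-1) < ((α^2 + ↑(2n-1)*κ)/(↑(2n-1)+1))^((2n-1)+1)
    have hmean3 : (α^2 + ((2*n-1:ℕ):ℝ) * κ) / (((2*n-1:ℕ):ℝ) + 1) = β := by
      rw [hcast2n1]
      rw [show 2*(n:ℝ)-1+1 = 2*(n:ℝ) by ring]
      rw [show α^2 + (2*(n:ℝ)-1)*κ = 2*(n:ℝ)*β by linarith [hκmul]]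
      field_simp
    have hexp4 : 2*n - 1 + 1 = 2*n := by omega
    rw [hmean3, hexp4] at hstrict
    apply lt_of_pow_lt_pow_left₀ 4 (Real.rpow_nonneg hβ0 _)
    calc R ^ 4 = α ^ 2 * κ ^ (2*n-1) := hR4
      _ < β ^ (2*n) := hstrict
      _ = (β ^ ((n:ℝ)/2)) ^ 4 := hβ4.symm
end

section
/- Let n ≥ 2 be a natural number, A and B real n×n matrices, and M := A + iB the corresponding complex n×n matrix. Set β := (q(A) + q(B))/n. Then |det M| ≤ β^(n/2). -/
open Matrix Finset
open scoped ComplexOrder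

theorem abs_det_complex_le_beta_pow (n : ℕ) (hn : 2 ≤ n)
    (A B : Matrix (Fin n) (Fin n) ℝ)
    (M : Matrix (Fin n) (Fin n) ℂ)
    (hM : M = A.map (fun a => (a : ℂ)) + Complex.I • B.map (fun b => (b : ℂ)))
    (β : ℝ)
    (hβ : β = ((∑ i, ∑ j, (A i j) ^ 2) + (∑ i, ∑ j, (B i j) ^ 2)) / n) :
    ‖M.det‖ ≤ β ^ ((n : ℝ) / 2) := by
  have hn0 : (0:ℝ) < n := by positivity
  set P : Matrix (Fin n) (Fin n) ℂ := M * Mᴴ with hPdef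
  have hP : P.PosSemidef := posSemidef_self_mul_conjTranspose M
  have hH : P.IsHermitian := hP.1
  set ev : Fin n → ℝ := hH.eigenvalues with hev
  have hev0 : ∀ i, 0 ≤ ev i := hP.eigenvalues_nonneg
  -- determinant identity
  have hdet : ‖M.det‖ ^ 2 = ∏ i, ev i := by
    have h1 : P.det = ∏ i, (ev i : ℂ) := hH.det_eq_prod_eigenvalues
    have h2 : P.det = ((‖M.det‖ ^ 2 : ℝ) : ℂ) := by
      rw [hPdef, det_mul, det_conjTranspose, Complex.star_def, Complex.mul_conj,
        Complex.sq_norm]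
    rw [h2, ← Complex.ofReal_prod] at h1
    exact_mod_cast h1
  -- trace identity
  have htr : ∑ i, ev i = (∑ i, ∑ j, (A i j) ^ 2) + (∑ i, ∑ j, (B i j) ^ 2) := by
    have h1 : P.trace = ∑ i, (ev i : ℂ) := by
      set U : Matrix (Fin n) (Fin n) ℂ := (hH.eigenvectorUnitary : Matrix (Fin n) (Fin n) ℂ)
      have hU : star U * U = 1 := hH.eigenvectorUnitary.2.1
      calc P.trace
          = (U * diagonal (RCLike.ofReal ∘ ev) * star U).trace := by
            conv_lhs => rw [hH.spectral_theorem, Unitary.conjStarAlgAut_apply]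
        _ = (star U * U * diagonal (RCLike.ofReal ∘ ev)).trace := by
            rw [trace_mul_cycle]
        _ = ∑ i, (ev i : ℂ) := by rw [hU, one_mul, trace_diagonal]; rfl
    have h2 : P.trace = ((((∑ i, ∑ j, (A i j) ^ 2) + (∑ i, ∑ j, (B i j) ^ 2)) : ℝ) : ℂ) := by
      rw [hPdef]
      simp only [Matrix.trace, Matrix.diag, Matrix.mul_apply, conjTranspose_apply, Complex.star_def,
        Complex.mul_conj, hM, Matrix.add_apply, Matrix.smul_apply, Matrix.map_apply,
        smul_eq_mul]
      push_cast
      rw [← Finset.sum_add_distrib]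
      refine Finset.sum_congr rfl fun i _ => ?_
      rw [← Finset.sum_add_distrib]
      refine Finset.sum_congr rfl fun j _ => ?_
      simp [Complex.normSq_apply]
      ring
    rw [h2, ← Complex.ofReal_sum] at h1
    exact_mod_cast h1.symm
  have hβ0 : 0 ≤ β := by
    rw [hβ]; positivity
  -- AM-GM
  have hamgm : (∏ i, ev i) ^ ((n:ℝ))⁻¹ ≤ β := by
    have := Real.geom_mean_le_arith_mean_weighted Finset.univ (fun _ => (n:ℝ)⁻¹) ev
      (fun i _ => by positivity)
      (by simp [Finset.card_univ]; field_simp)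
      (fun i _ => hev0 i)
    calc (∏ i, ev i) ^ ((n:ℝ))⁻¹
        = ∏ i, ev i ^ ((n:ℝ))⁻¹ := by
          rw [← Real.finset_prod_rpow _ _ (fun i _ => hev0 i)]
      _ ≤ ∑ i, (n:ℝ)⁻¹ * ev i := this
      _ = β := by
          rw [hβ, ← htr, ← Finset.mul_sum, inv_mul_eq_div]
  -- conclude
  have key : ‖M.det‖ = ((∏ i, ev i) ^ ((n:ℝ))⁻¹) ^ ((n:ℝ)/2) := by
    have hexp : (n:ℝ)⁻¹ * ((n:ℝ)/2) = 1/2 := by field_simp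
    rw [← Real.rpow_mul (Finset.prod_nonneg fun i _ => hev0 i), hexp, ← Real.sqrt_eq_rpow,
      ← hdet, Real.sqrt_sq (norm_nonneg _)]
  rw [key]
  exact Real.rpow_le_rpow (Real.rpow_nonneg (Finset.prod_nonneg fun i _ => hev0 i) _)
    hamgm (by positivity)
end

section
/- Let n ≥ 2 be a natural number and M a real n×n matrix all of whose entries are 1 or −1. If |det M| = n^(n/2) (i.e. M is a Hadamard matrix), then the sum of all entries of M satisfies s(M) ≤ n·√n. -/
theorem best_excess_inequality (n : ℕ) (hn : 2 ≤ n)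
    (M : Matrix (Fin n) (Fin n) ℝ)
    (hentries : ∀ i j, M i j = 1 ∨ M i j = -1)
    (hdet : |M.det| = (n : ℝ) ^ ((n : ℝ) / 2)) :
    (∑ i, ∑ j, M i j) ≤ n * Real.sqrt n := by
  classical
  have hnpos : 0 < n := by omega
  have hn0 : (0:ℝ) < n := by exact_mod_cast hnpos
  set G := M.conjTranspose * M with hGdef
  have hG : G.IsHermitian := Matrix.isHermitian_conjTranspose_mul_self M
  have hPSD : G.PosSemidef := Matrix.posSemidef_conjTranspose_mul_self M
  have hsq : ∀ i j, M i j * M i j = 1 := by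
    intro i j; rcases hentries i j with h | h <;> rw [h] <;> ring
  have htraceG : G.trace = (n:ℝ)^2 := by
    simp only [hGdef, Matrix.trace, Matrix.diag, Matrix.mul_apply,
      Matrix.conjTranspose_apply, star_trivial, hsq]
    simp [Finset.card_univ]
    ring
  have hdetG : G.det = (n:ℝ)^n := by
    have h1 : G.det = M.det * M.det := by
      rw [hGdef, Matrix.det_mul, Matrix.det_conjTranspose, star_trivial]
    rw [h1, ← abs_mul_abs_self, hdet, ← Real.rpow_add hn0, add_halves,
      Real.rpow_natCast]
  have hμnn : ∀ i, 0 ≤ hG.eigenvalues i := hPSD.eigenvalues_nonneg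
  have hprod : ∏ i, hG.eigenvalues i = (n:ℝ)^n := by
    have h := hG.det_eq_prod_eigenvalues
    rw [hdetG] at h
    exact_mod_cast h.symm
  have htr : G.trace = ∑ i, hG.eigenvalues i := by
    conv_lhs => rw [hG.spectral_theorem]
    rw [Unitary.conjStarAlgAut_apply, Matrix.trace_mul_cycle,
      Matrix.mem_unitaryGroup_iff'.mp (hG.eigenvectorUnitary).2, one_mul,
      Matrix.trace_diagonal]
    simp
  have hsum : ∑ i, hG.eigenvalues i = (n:ℝ)^2 := by rw [← htr, htraceG]
  have hμpos : ∀ i, 0 < hG.eigenvalues i := by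
    intro i
    rcases (hμnn i).lt_or_eq with h | h
    · exact h
    · exfalso
      have h0 : ∏ j, hG.eigenvalues j = 0 :=
        Finset.prod_eq_zero (Finset.mem_univ i) h.symm
      rw [hprod] at h0
      exact absurd h0 (by positivity)
  have key : ∀ i, hG.eigenvalues i = n := by
    set μ := hG.eigenvalues with hμ
    have htpos : ∀ i, 0 < μ i / n := fun i => div_pos (hμpos i) hn0
    have hprodt : ∏ i, (μ i / n) = 1 := by
      rw [Finset.prod_div_distrib, hprod, Finset.prod_const, Finset.card_univ,
        Fintype.card_fin]
      exact div_self (by positivity)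
    have hlogsum : ∑ i, Real.log (μ i / n) = 0 := by
      rw [← Real.log_prod (fun i _ => (htpos i).ne'), hprodt, Real.log_one]
    have hsum0 : ∑ i, (μ i / n - 1 - Real.log (μ i / n)) = 0 := by
      rw [Finset.sum_sub_distrib, Finset.sum_sub_distrib, hlogsum,
        ← Finset.sum_div, hsum]
      simp [Finset.card_univ]
      field_simp
      ring
    have hterm : ∀ i ∈ Finset.univ, (0:ℝ) ≤ μ i / n - 1 - Real.log (μ i / n) := by
      intro i _
      have := Real.log_le_sub_one_of_pos (htpos i)
      linarith
    have hzero := (Finset.sum_eq_zero_iff_of_nonneg hterm).mp hsum0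
    intro i
    have hi := hzero i (Finset.mem_univ i)
    by_contra hne
    have hne1 : μ i / n ≠ 1 := by
      intro h
      exact hne (by field_simp at h; linarith)
    have := Real.log_lt_sub_one_of_pos (htpos i) hne1
    linarith
  have hGn : G = (n:ℝ) • (1 : Matrix (Fin n) (Fin n) ℝ) := by
    have hdiag : Matrix.diagonal (RCLike.ofReal ∘ hG.eigenvalues) =
        (n:ℝ) • (1 : Matrix (Fin n) (Fin n) ℝ) := by
      ext i j
      by_cases h : i = j <;>
        simp [Matrix.diagonal_apply, Matrix.one_apply, h, key]
    rw [hG.spectral_theorem, hdiag, Unitary.conjStarAlgAut_apply, Matrix.mul_smul, Matrix.mul_one,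
      Matrix.smul_mul, Matrix.mem_unitaryGroup_iff.mp (hG.eigenvectorUnitary).2]
  have hGentry : ∀ j k, (∑ i, M i j * M i k) = G j k := by
    intro j k
    rw [hGdef, Matrix.mul_apply]
    simp [Matrix.conjTranspose_apply]
  have hrows : ∑ i, (∑ j, M i j)^2 = (n:ℝ)^2 := by
    have h1 : ∀ i : Fin n, (∑ j, M i j)^2 = ∑ j, ∑ k, M i j * M i k := by
      intro i; rw [sq, Finset.sum_mul_sum]
    calc ∑ i, (∑ j, M i j)^2 = ∑ i, ∑ j, ∑ k, M i j * M i k :=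
          Finset.sum_congr rfl fun i _ => h1 i
      _ = ∑ j, ∑ i, ∑ k, M i j * M i k := Finset.sum_comm
      _ = ∑ j, ∑ k, ∑ i, M i j * M i k :=
          Finset.sum_congr rfl fun j _ => Finset.sum_comm
      _ = ∑ j, ∑ k, G j k := by
          exact Finset.sum_congr rfl fun j _ => Finset.sum_congr rfl fun k _ => hGentry j k
      _ = (n:ℝ)^2 := by
          simp [hGn, Matrix.one_apply, Finset.card_univ]
          ring
  have hCS : (∑ i, ∑ j, M i j)^2 ≤ (n:ℝ) * ∑ i, (∑ j, M i j)^2 := by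
    have h := sq_sum_le_card_mul_sum_sq (s := (Finset.univ : Finset (Fin n)))
      (f := fun i => ∑ j, M i j)
    simpa [Finset.card_univ] using h
  have hCS2 : (∑ i, ∑ j, M i j)^2 ≤ (n:ℝ)^2 * n := by
    rw [hrows] at hCS
    nlinarith [hCS]
  have h1 : (∑ i, ∑ j, M i j) ≤ Real.sqrt ((∑ i, ∑ j, M i j)^2) := by
    rw [Real.sqrt_sq_eq_abs]; exact le_abs_self _
  have h2 : Real.sqrt ((∑ i, ∑ j, M i j)^2) ≤ Real.sqrt ((n:ℝ)^2 * n) :=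
    Real.sqrt_le_sqrt hCS2
  have h3 : Real.sqrt ((n:ℝ)^2 * n) = (n:ℝ) * Real.sqrt n := by
    rw [Real.sqrt_mul (by positivity), Real.sqrt_sq hn0.le]
  calc (∑ i, ∑ j, M i j) ≤ Real.sqrt ((∑ i, ∑ j, M i j)^2) := h1
    _ ≤ Real.sqrt ((n:ℝ)^2 * n) := h2
    _ = (n:ℝ) * Real.sqrt n := h3
end

section
/- Let n ≥ 2 be a natural number and A an arbitrary real n×n matrix. Then (det A)² ≤ ((1/n)·tr(A·Aᵀ))ⁿ. -/
open Matrix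

theorem det_sq_le_trace_pow (n : ℕ) (hn : 2 ≤ n)
    (A : Matrix (Fin n) (Fin n) ℝ) :
    A.det ^ 2 ≤ ((1 / n) * (A * Aᵀ).trace) ^ n := by
  have hn0 : 0 < (n : ℝ) := by positivity
  have hM : (A * Aᵀ).PosSemidef := by
    have := Matrix.posSemidef_self_mul_conjTranspose A
    simpa using this
  have hH := hM.1
  set μ := hH.eigenvalues with hμ
  have hμ0 : ∀ i, 0 ≤ μ i := hM.eigenvalues_nonneg
  -- trace = sum of eigenvalues
  have htr : (A * Aᵀ).trace = ∑ i, μ i := by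
    conv_lhs => rw [hH.spectral_theorem]
    rw [Unitary.conjStarAlgAut_apply, Matrix.trace_mul_cycle]
    rw [(Matrix.mem_unitaryGroup_iff').mp (hH.eigenvectorUnitary).2, one_mul]
    simp [Matrix.trace_diagonal, hμ]
  -- det A ^ 2 = product of eigenvalues
  have hdet : A.det ^ 2 = ∏ i, μ i := by
    have := hH.det_eq_prod_eigenvalues
    rw [Matrix.det_mul, Matrix.det_transpose, ← sq] at this
    simpa using this
  rw [htr, hdet]
  -- AM-GM
  have hamgm := Real.geom_mean_le_arith_mean_weighted Finset.univ
    (fun _ => 1 / (n : ℝ)) μ (fun i _ => by positivity)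
    (by simp [Finset.card_univ]; field_simp) (fun i _ => hμ0 i)
  have hprod : (∏ i, μ i ^ (1 / (n : ℝ))) ^ n = ∏ i, μ i := by
    rw [← Finset.prod_pow]
    refine Finset.prod_congr rfl fun i _ => ?_
    rw [← Real.rpow_natCast (μ i ^ (1 / (n : ℝ))) n, ← Real.rpow_mul (hμ0 i)]
    rw [one_div_mul_cancel (ne_of_gt hn0), Real.rpow_one]
  calc ∏ i, μ i = (∏ i, μ i ^ (1 / (n : ℝ))) ^ n := hprod.symm
    _ ≤ (∑ i, 1 / (n : ℝ) * μ i) ^ n := by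
        apply pow_le_pow_left₀ (Finset.prod_nonneg fun i _ => Real.rpow_nonneg (hμ0 i) _) hamgm
    _ = (1 / (n : ℝ) * ∑ i, μ i) ^ n := by rw [Finset.mul_sum]
end

section
/- Let n ≥ 2 be a natural number and M a real n×n matrix all of whose entries are 0 or 1. Let t := s(M) be the number of 1's in M and suppose t > n. Then with k := t/n one has |det M| ≤ k^((n+1)/2)·((n − k)/(n − 1))^((n−1)/2). -/
open Matrix

lemma amgm_prod {ι : Type*} (s : Finset ι) (f : ι → ℝ) (hf : ∀ i ∈ s, 0 ≤ f i)
    (hm : s.card ≠ 0) :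
    ∏ i ∈ s, f i ≤ ((∑ i ∈ s, f i) / s.card) ^ s.card := by
  set m : ℕ := s.card with hmdef
  have hmpos : (0:ℝ) < m := by positivity
  set c : ℝ := (m : ℝ)⁻¹ with hc
  have hkey := Real.geom_mean_le_arith_mean_weighted s (fun _ => c) f
    (fun i _ => by positivity) (by simp [hc]; field_simp; rfl) hf
  have hprod : ∏ i ∈ s, f i = (∏ i ∈ s, f i ^ c) ^ m := by
    rw [← Finset.prod_pow]
    refine Finset.prod_congr rfl fun i hi => ?_
    rw [← Real.rpow_natCast (f i ^ c), ← Real.rpow_mul (hf i hi)]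
    rw [hc, inv_mul_cancel₀ (by positivity), Real.rpow_one]
  have hPnn : 0 ≤ ∏ i ∈ s, f i ^ c :=
    Finset.prod_nonneg fun i hi => Real.rpow_nonneg (hf i hi) _
  calc ∏ i ∈ s, f i = (∏ i ∈ s, f i ^ c) ^ m := hprod
    _ ≤ (∑ i ∈ s, c * f i) ^ m := pow_le_pow_left₀ hPnn hkey m
    _ = ((∑ i ∈ s, f i) / m) ^ m := by
        congr 1
        rw [← Finset.mul_sum, div_eq_inv_mul]

lemma mono_step (m : ℕ) (t a b : ℝ) (ha : 0 < a) (hab : a ≤ b) (hbt : b ≤ t)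
    (hma : t - a ≤ (m:ℝ) * a) :
    b * (t - b) ^ m ≤ a * (t - a) ^ m := by
  rcases Nat.eq_zero_or_pos m with hm | hm
  · subst hm; simp at hma ⊢; linarith
  rcases eq_or_lt_of_le hbt with h | h
  · have hz : b * (t - b)^m = 0 := by rw [h, sub_self, zero_pow hm.ne', mul_zero]
    rw [hz]
    exact mul_nonneg ha.le (pow_nonneg (by linarith) m)
  · have htb : 0 < t - b := by linarith
    have hta : 0 < t - a := by linarith
    set u : ℝ := (b - a)/(t - b) with hu
    have hunn : (0:ℝ) ≤ u := by
      apply div_nonneg <;> linarith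
    have hber : 1 + (m:ℝ) * u ≤ (1 + u) ^ m := one_add_mul_le_pow (by linarith) m
    have h2 : b ≤ a * (1 + (m:ℝ) * u) := by
      rw [← sub_nonneg]
      have heq : a * (1 + (m:ℝ) * u) - b = ((a-b)*(t-b) + (m:ℝ)*a*(b-a))/(t-b) := by
        rw [hu]; field_simp; ring
      rw [heq]
      apply div_nonneg _ htb.le
      nlinarith [mul_nonneg (sub_nonneg.mpr hab) (by linarith : (0:ℝ) ≤ (m:ℝ)*a - (t-b))]
    have h3 : (1 + u) * (t - b) = t - a := by
      rw [hu]; field_simp; ring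
    calc b * (t-b)^m ≤ (a * (1 + (m:ℝ)*u)) * (t-b)^m :=
          mul_le_mul_of_nonneg_right h2 (pow_nonneg htb.le m)
      _ ≤ (a * (1+u)^m) * (t-b)^m :=
          mul_le_mul_of_nonneg_right (mul_le_mul_of_nonneg_left hber ha.le) (pow_nonneg htb.le m)
      _ = a * ((1+u)*(t-b))^m := by rw [mul_pow]; ring
      _ = a * (t-a)^m := by rw [h3]

theorem ryser_determinant_bound (n : ℕ) (hn : 2 ≤ n)
    (M : Matrix (Fin n) (Fin n) ℝ)
    (hentries : ∀ i j, M i j = 0 ∨ M i j = 1)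
    (t : ℝ) (ht : t = ∑ i, ∑ j, M i j) (htn : t > n)
    (k : ℝ) (hk : k = t / n) :
    |M.det| ≤ k ^ (((n : ℝ) + 1) / 2) * (((n : ℝ) - k) / ((n : ℝ) - 1)) ^ (((n : ℝ) - 1) / 2) := by
  have hn1 : (1:ℝ) < (n:ℝ) := by exact_mod_cast lt_of_lt_of_le one_lt_two (by exact_mod_cast hn)
  have hnpos : (0:ℝ) < n := by linarith
  have hk1 : 1 < k := by rw [hk, lt_div_iff₀ hnpos]; linarith
  have hkpos : (0:ℝ) < k := by linarith
  have htnk : t = n * k := by rw [hk]; field_simp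
  have htn2 : t ≤ (n:ℝ)^2 := by
    rw [ht]
    calc ∑ i, ∑ j, M i j ≤ ∑ _i : Fin n, ∑ _j : Fin n, (1:ℝ) := by
          refine Finset.sum_le_sum fun i _ => Finset.sum_le_sum fun j _ => ?_
          rcases hentries i j with h|h <;> simp [h]
      _ = (n:ℝ)^2 := by simp; ring
  have hkn : k ≤ (n:ℝ) := by rw [hk, div_le_iff₀ hnpos]; nlinarith
  set G := Mᴴ * M with hG
  have hPSD : G.PosSemidef := Matrix.posSemidef_conjTranspose_mul_self M
  have hH : G.IsHermitian := hPSD.1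
  set ev := hH.eigenvalues with hev
  have hevnn : ∀ i, 0 ≤ ev i := hPSD.eigenvalues_nonneg
  -- trace identities
  have htr1 : G.trace = ∑ i, ev i := by
    nth_rewrite 1 [hH.spectral_theorem]
    rw [Unitary.conjStarAlgAut_apply]
    rw [Matrix.trace_mul_comm, ← Matrix.mul_assoc, Unitary.coe_star_mul_self, Matrix.one_mul,
      Matrix.trace_diagonal]
    simp; rfl
  have hsq : ∀ i j, M i j * M i j = M i j := fun i j => by
    rcases hentries i j with h|h <;> simp [h]
  have htr2 : G.trace = t := by
    rw [ht, hG, Matrix.trace]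
    simp only [Matrix.diag_apply, Matrix.mul_apply, Matrix.conjTranspose_apply, star_trivial]
    rw [Finset.sum_comm]
    exact Finset.sum_congr rfl fun i _ => Finset.sum_congr rfl fun j _ => hsq i j
  -- determinant
  have hdet : M.det ^ 2 = ∏ i, ev i := by
    have h1 : G.det = M.det^2 := by
      rw [hG, Matrix.det_mul, Matrix.det_conjTranspose]; simp [pow_two]
    have h2 := hH.det_eq_prod_eigenvalues
    rw [h1] at h2; simpa using h2
  -- Rayleigh quotient with all-ones vector
  set x : Fin n → ℝ := fun _ => 1 with hx
  set U : Matrix (Fin n) (Fin n) ℝ := (hH.eigenvectorUnitary : Matrix (Fin n) (Fin n) ℝ) with hU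
  set y := x ᵥ* U with hy
  have hstar : star U *ᵥ x = y := by
    rw [Matrix.star_eq_conjTranspose, Matrix.conjTranspose_eq_transpose_of_trivial,
      Matrix.mulVec_transpose]
  have hQspec : x ⬝ᵥ G *ᵥ x = ∑ i, ev i * y i ^ 2 := by
    nth_rewrite 1 [hH.spectral_theorem]
    rw [Unitary.conjStarAlgAut_apply]
    rw [← Matrix.mulVec_mulVec, ← Matrix.mulVec_mulVec, hstar, Matrix.dotProduct_mulVec, ← hy]
    simp [Matrix.mulVec_diagonal, dotProduct]
    exact Finset.sum_congr rfl fun i _ => by ring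
  have hUU : U * Uᵀ = 1 := by
    rw [← Matrix.conjTranspose_eq_transpose_of_trivial, ← Matrix.star_eq_conjTranspose]
    exact Unitary.coe_mul_star_self hH.eigenvectorUnitary
  have hynorm : ∑ i, y i ^ 2 = ∑ i, x i ^ 2 := by
    have h : y ⬝ᵥ y = x ⬝ᵥ x := by
      nth_rewrite 2 [hy]
      rw [← Matrix.dotProduct_mulVec, Matrix.mulVec_vecMul, hUU, Matrix.one_mulVec]
    simpa [dotProduct, pow_two] using h
  have hxnorm : ∑ i, x i ^ 2 = (n:ℝ) := by simp [hx]
  have hQ1 : x ⬝ᵥ G *ᵥ x = ∑ i, (∑ j, M i j)^2 := by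
    rw [hG, ← Matrix.mulVec_mulVec, Matrix.dotProduct_mulVec, Matrix.vecMul_conjTranspose]
    simp [dotProduct, Matrix.mulVec, hx, pow_two]
  have hQlow : t^2 / n ≤ x ⬝ᵥ G *ᵥ x := by
    rw [hQ1, div_le_iff₀ hnpos]
    have hcs := sq_sum_le_card_mul_sum_sq (s := (Finset.univ : Finset (Fin n)))
      (f := fun i => ∑ j, M i j)
    rw [ht, Finset.card_univ, Fintype.card_fin] at *
    calc (∑ i, ∑ j, M i j)^2 ≤ (n:ℝ) * ∑ i, (∑ j, M i j)^2 := by exact_mod_cast hcs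
      _ = (∑ i, (∑ j, M i j)^2) * n := by ring
  obtain ⟨i₀, -, hmax⟩ := Finset.exists_max_image Finset.univ ev
    ⟨⟨0, by omega⟩, Finset.mem_univ _⟩
  set μ := ev i₀ with hμ
  have hQup : x ⬝ᵥ G *ᵥ x ≤ n * μ := by
    rw [hQspec]
    calc ∑ i, ev i * y i ^ 2 ≤ ∑ i, μ * y i ^ 2 :=
          Finset.sum_le_sum fun i _ =>
            mul_le_mul_of_nonneg_right (hmax i (Finset.mem_univ i)) (sq_nonneg _)
      _ = μ * ∑ i, y i ^ 2 := by rw [Finset.mul_sum]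
      _ = n * μ := by rw [hynorm, hxnorm]; ring
  have hμk : k^2 ≤ μ := by
    have h := le_trans hQlow hQup
    rw [hk, div_pow, div_le_iff₀ (by positivity)]
    rw [div_le_iff₀ hnpos] at h
    nlinarith
  have hμt : μ ≤ t := by
    calc μ ≤ ∑ i, ev i := Finset.single_le_sum (fun i _ => hevnn i) (Finset.mem_univ i₀)
      _ = t := by rw [← htr1, htr2]
  -- AM-GM on remaining eigenvalues
  set m : ℕ := n - 1 with hm
  have hmcast : ((m:ℕ):ℝ) = (n:ℝ) - 1 := by
    rw [hm]; push_cast [Nat.cast_sub (by omega : 1 ≤ n)]; ring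
  set s' := Finset.univ.erase i₀ with hs'
  have hcard : s'.card = m := by
    rw [hs', Finset.card_erase_of_mem (Finset.mem_univ _), Finset.card_univ, Fintype.card_fin]
  have hsum' : ∑ i ∈ s', ev i = t - μ := by
    rw [hs', Finset.sum_erase_eq_sub (Finset.mem_univ i₀), ← htr1, htr2]
  have hP' : ∏ i ∈ s', ev i ≤ ((t - μ)/((n:ℝ)-1))^m := by
    have h := amgm_prod s' ev (fun i _ => hevnn i) (by rw [hcard]; omega)
    rwa [hcard, hsum', hmcast] at h
  have hsplit : ∏ i, ev i = μ * ∏ i ∈ s', ev i :=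
    (Finset.mul_prod_erase Finset.univ ev (Finset.mem_univ i₀)).symm
  have hdetle : M.det^2 ≤ μ * ((t - μ)/((n:ℝ)-1))^m := by
    rw [hdet, hsplit]
    exact mul_le_mul_of_nonneg_left hP' (hevnn i₀)
  -- monotonicity step
  have hmono : μ * (t - μ)^m ≤ k^2 * (t - k^2)^m := by
    apply mono_step m t (k^2) μ (by positivity) hμk hμt
    rw [hmcast, htnk]
    nlinarith
  have hdetle2 : M.det^2 ≤ k^2 * ((t - k^2)/((n:ℝ)-1))^m := by
    calc M.det^2 ≤ μ * ((t - μ)/((n:ℝ)-1))^m := hdetle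
      _ = μ * (t-μ)^m / ((n:ℝ)-1)^m := by rw [div_pow]; ring
      _ ≤ k^2 * (t-k^2)^m / ((n:ℝ)-1)^m := by
          have hc : (0:ℝ) < ((n:ℝ)-1)^m := pow_pos (by linarith) m
          gcongr
      _ = k^2 * ((t - k^2)/((n:ℝ)-1))^m := by rw [div_pow]; ring
  -- rewrite the bound in terms of k and n
  have hfact : k^2 * ((t - k^2)/((n:ℝ)-1))^m
      = k^(n+1) * (((n:ℝ)-k)/((n:ℝ)-1))^m := by
    have h1 : t - k^2 = k * ((n:ℝ) - k) := by rw [htnk]; ring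
    have h2 : m + 2 = n + 1 := by omega
    rw [h1, ← h2, pow_add, mul_div_assoc, mul_pow]; ring
  set B : ℝ := ((n:ℝ)-k)/((n:ℝ)-1) with hB
  have hBnn : 0 ≤ B := div_nonneg (by linarith) (by linarith)
  set R : ℝ := k ^ (((n : ℝ) + 1) / 2) * B ^ (((n : ℝ) - 1) / 2) with hR
  have hRnn : 0 ≤ R :=
    mul_nonneg (Real.rpow_nonneg hkpos.le _) (Real.rpow_nonneg hBnn _)
  have hR2 : R^2 = k^(n+1) * B^m := by
    rw [hR, mul_pow]
    congr 1
    · rw [← Real.rpow_natCast (k ^ _) 2, ← Real.rpow_mul hkpos.le,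
        ← Real.rpow_natCast k (n+1)]
      congr 1; push_cast; ring
    · rw [← Real.rpow_natCast (B ^ _) 2, ← Real.rpow_mul hBnn,
        ← Real.rpow_natCast B m]
      congr 1; push_cast [hmcast]; ring
  have hfin : M.det^2 ≤ R^2 := by
    rw [hR2, ← hfact]; exact hdetle2
  calc |M.det| = Real.sqrt (M.det^2) := (Real.sqrt_sq_eq_abs _).symm
    _ ≤ Real.sqrt (R^2) := Real.sqrt_le_sqrt hfin
    _ = R := Real.sqrt_sq hRnn
end

section
/- Let n ≥ 2 be a natural number, ε > 0 a real number, and E a real n×n matrix with |E_{i,j}| ≤ ε for all i, j. Then |det(I − E)| ≤ (1 + 2ε + n·ε²)^(n/2). -/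
theorem brent_osborne_smith_bound (n : ℕ) (hn : 2 ≤ n) (ε : ℝ) (hε : 0 < ε)
    (E : Matrix (Fin n) (Fin n) ℝ) (hE : ∀ i j, |E i j| ≤ ε) :
    |((1 : Matrix (Fin n) (Fin n) ℝ) - E).det|
      ≤ (1 + 2 * ε + n * ε ^ 2) ^ ((n : ℝ) / 2) := by
  set c : ℝ := 1 + 2 * ε + n * ε ^ 2 with hc
  have hn0 : (0:ℝ) < n := by positivity
  have hc0 : (0:ℝ) < c := by positivity
  set A : Matrix (Fin n) (Fin n) ℝ := 1 - E with hA
  -- row sums of squares bounded by c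
  have hrow : ∀ i : Fin n, ∑ j, (A i j) ^ 2 ≤ c := by
    intro i
    have h1 : ∑ j, (A i j) ^ 2
        = (A i i) ^ 2 + ∑ j ∈ Finset.univ.erase i, (A i j) ^ 2 := by
      exact (Finset.add_sum_erase _ (fun j => A i j ^ 2) (Finset.mem_univ i)).symm
    have hdiag : (A i i) ^ 2 ≤ (1 + ε) ^ 2 := by
      have : |A i i| ≤ 1 + ε := by
        have : |(1 : ℝ) - E i i| ≤ 1 + |E i i| := by
          calc |(1:ℝ) - E i i| ≤ |(1:ℝ)| + |E i i| := abs_sub _ _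
          _ = 1 + |E i i| := by rw [abs_one]
        calc |A i i| = |(1:ℝ) - E i i| := by
              simp [hA, Matrix.sub_apply, Matrix.one_apply]
        _ ≤ 1 + |E i i| := this
        _ ≤ 1 + ε := by linarith [hE i i]
      calc (A i i) ^ 2 = |A i i| ^ 2 := (sq_abs _).symm
      _ ≤ (1 + ε) ^ 2 := by
          apply pow_le_pow_left₀ (abs_nonneg _) this
    have hoff : ∑ j ∈ Finset.univ.erase i, (A i j) ^ 2 ≤ (n - 1) * ε ^ 2 := by
      have : ∀ j ∈ Finset.univ.erase i, (A i j) ^ 2 ≤ ε ^ 2 := by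
        intro j hj
        have hji : j ≠ i := Finset.ne_of_mem_erase hj
        have : A i j = - E i j := by
          simp [hA, Matrix.sub_apply, Matrix.one_apply, (Ne.symm hji)]
        rw [this]
        calc (- E i j) ^ 2 = |E i j| ^ 2 := by rw [← sq_abs, abs_neg]
        _ ≤ ε ^ 2 := pow_le_pow_left₀ (abs_nonneg _) (hE i j) 2
      calc ∑ j ∈ Finset.univ.erase i, (A i j) ^ 2
          ≤ ∑ _j ∈ Finset.univ.erase i, ε ^ 2 := Finset.sum_le_sum this
      _ = (n - 1) * ε ^ 2 := by
          rw [Finset.sum_const, Finset.card_erase_of_mem (Finset.mem_univ i)]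
          simp only [Finset.card_univ, Fintype.card_fin, nsmul_eq_mul]
          have : ((n - 1 : ℕ) : ℝ) = (n : ℝ) - 1 := by
            have : 1 ≤ n := by omega
            push_cast [this]; ring
          rw [this]
    have : (1 + ε) ^ 2 + (n - 1) * ε ^ 2 = c := by rw [hc]; ring
    linarith
  set M : Matrix (Fin n) (Fin n) ℝ := A * A.conjTranspose with hM
  have hPSD : M.PosSemidef := Matrix.posSemidef_self_mul_conjTranspose A
  have hH : M.IsHermitian := hPSD.1
  -- trace of M
  have hMdiag : ∀ i, M i i = ∑ j, (A i j) ^ 2 := by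
    intro i
    simp [hM, Matrix.mul_apply, Matrix.conjTranspose_apply, sq]
  have htrace : M.trace ≤ n * c := by
    calc M.trace = ∑ i, M i i := rfl
    _ ≤ ∑ _i : Fin n, c := Finset.sum_le_sum (fun i _ => (hMdiag i) ▸ hrow i)
    _ = n * c := by simp
  -- trace = sum of eigenvalues
  have htr_eig : M.trace = ∑ i, hH.eigenvalues i := by
    nth_rewrite 1 [hH.spectral_theorem]
    rw [Unitary.conjStarAlgAut_apply, Matrix.trace_mul_cycle]
    rw [show (star (hH.eigenvectorUnitary : Matrix (Fin n) (Fin n) ℝ)) *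
        (hH.eigenvectorUnitary : Matrix (Fin n) (Fin n) ℝ) = 1 from
      Unitary.coe_star_mul_self _, one_mul, Matrix.trace_diagonal]
    simp
  -- det = prod of eigenvalues
  have hdet_eig : M.det = ∏ i, hH.eigenvalues i := by
    have := hH.det_eq_prod_eigenvalues
    simpa using this
  -- eigenvalues nonneg
  have heig_nonneg : ∀ i, 0 ≤ hH.eigenvalues i := hPSD.eigenvalues_nonneg
  -- AM-GM
  have hamgm : ∏ i, (hH.eigenvalues i) ^ ((n : ℝ)⁻¹)
      ≤ ∑ i, (n : ℝ)⁻¹ * hH.eigenvalues i :=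
    Real.geom_mean_le_arith_mean_weighted Finset.univ _ _
      (fun i _ => by positivity)
      (by simp [Finset.sum_const]; field_simp)
      (fun i _ => heig_nonneg i)
  have hsum : ∑ i, (n : ℝ)⁻¹ * hH.eigenvalues i ≤ c := by
    rw [← Finset.mul_sum, ← htr_eig]
    rw [inv_mul_le_iff₀ hn0, mul_comm]
    linarith [htrace]
  have hdetM : M.det ≤ c ^ n := by
    have hgm_nonneg : 0 ≤ ∏ i, (hH.eigenvalues i) ^ ((n : ℝ)⁻¹) :=
      Finset.prod_nonneg fun i _ => Real.rpow_nonneg (heig_nonneg i) _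
    have hpow : (∏ i, (hH.eigenvalues i) ^ ((n : ℝ)⁻¹)) ^ n = M.det := by
      rw [hdet_eig, ← Finset.prod_pow]
      refine Finset.prod_congr rfl fun i _ => ?_
      rw [← Real.rpow_natCast ((hH.eigenvalues i) ^ ((n : ℝ)⁻¹)) n,
        ← Real.rpow_mul (heig_nonneg i)]
      rw [inv_mul_cancel₀ (by positivity : (n:ℝ) ≠ 0), Real.rpow_one]
    calc M.det = (∏ i, (hH.eigenvalues i) ^ ((n : ℝ)⁻¹)) ^ n := hpow.symm
    _ ≤ c ^ n := pow_le_pow_left₀ hgm_nonneg (le_trans hamgm hsum) n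
  have hdetA : A.det ^ 2 = M.det := by
    rw [hM, Matrix.det_mul, Matrix.det_conjTranspose]
    simp [sq]
  calc |A.det| = Real.sqrt (A.det ^ 2) := (Real.sqrt_sq_eq_abs _).symm
  _ = Real.sqrt M.det := by rw [hdetA]
  _ ≤ Real.sqrt (c ^ n) := Real.sqrt_le_sqrt hdetM
  _ = c ^ ((n : ℝ) / 2) := by
      rw [Real.sqrt_eq_rpow, ← Real.rpow_natCast c n, ← Real.rpow_mul hc0.le]
      ring_nf
end

section
/- Let n ≥ 2 be a natural number, ε > 0 a real number, and E a real n×n matrix with E_{i,i} = 0 for all i and |E_{i,j}| ≤ ε for all i, j. Then |det(I − E)| ≤ (1 + (n−1)·ε²)^(n/2). -/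
open Matrix Finset

theorem brent_osborne_smith_bound_diag_zero (n : ℕ) (hn : 2 ≤ n) (ε : ℝ) (hε : 0 < ε)
    (E : Matrix (Fin n) (Fin n) ℝ) (hdiag : ∀ i, E i i = 0)
    (hE : ∀ i j, |E i j| ≤ ε) :
    |((1 : Matrix (Fin n) (Fin n) ℝ) - E).det|
      ≤ (1 + ((n : ℝ) - 1) * ε ^ 2) ^ ((n : ℝ) / 2) := by
  set A : Matrix (Fin n) (Fin n) ℝ := (1 : Matrix (Fin n) (Fin n) ℝ) - E with hA
  set B : ℝ := 1 + ((n : ℝ) - 1) * ε ^ 2 with hB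
  have hn0 : 0 < (n : ℝ) := by positivity
  have hB1 : (1 : ℝ) ≤ B := by
    have h1 : (1:ℝ) ≤ (n:ℝ) := by exact_mod_cast Nat.one_le_of_lt hn
    nlinarith [sq_nonneg ε]
  have hB0 : 0 ≤ B := le_trans zero_le_one hB1
  set M : Matrix (Fin n) (Fin n) ℝ := Aᴴ * A with hM
  have hPSD : M.PosSemidef := posSemidef_conjTranspose_mul_self A
  have hHerm := hPSD.1
  -- trace M = sum of squares of entries
  have htr : M.trace = ∑ j, ∑ i, (A i j) ^ 2 := by
    simp [Matrix.trace, hM, Matrix.mul_apply, Matrix.diag, sq, conjTranspose_apply]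
  -- column bound
  have hcol : ∀ j, ∑ i, (A i j) ^ 2 ≤ B := by
    intro j
    have : ∑ i, (A i j) ^ 2 = (A j j) ^ 2 + ∑ i ∈ univ.erase j, (A i j) ^ 2 := by
      rw [← Finset.add_sum_erase _ _ (mem_univ j)]
    rw [this]
    have hAjj : A j j = 1 := by
      simp [hA, hdiag j, Matrix.one_apply]
    have hoff : ∑ i ∈ univ.erase j, (A i j) ^ 2 ≤ ((n : ℝ) - 1) * ε ^ 2 := by
      have hcard : ((univ.erase j).card : ℝ) = (n : ℝ) - 1 := by
        rw [Finset.card_erase_of_mem (mem_univ j)]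
        simp [Nat.cast_sub (Nat.one_le_of_lt hn)]
      calc ∑ i ∈ univ.erase j, (A i j) ^ 2
          ≤ ∑ _i ∈ univ.erase j, ε ^ 2 := by
            apply Finset.sum_le_sum
            intro i hi
            have hij : i ≠ j := Finset.ne_of_mem_erase hi
            have : A i j = -E i j := by
              simp [hA, Matrix.one_apply_ne hij]
            rw [this, neg_pow]
            have := hE i j
            nlinarith [abs_nonneg (E i j), sq_abs (E i j)]
        _ = ((n : ℝ) - 1) * ε ^ 2 := by
            rw [Finset.sum_const, nsmul_eq_mul, hcard]
    rw [hAjj, one_pow]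
    linarith
  have htrB : M.trace ≤ (n : ℝ) * B := by
    rw [htr]
    calc ∑ j, ∑ i, (A i j) ^ 2 ≤ ∑ _j : Fin n, B := Finset.sum_le_sum fun j _ => hcol j
      _ = (n : ℝ) * B := by simp [mul_comm]
  -- trace = sum of eigenvalues
  have htr_eig : M.trace = ∑ i, hHerm.eigenvalues i := by
    nth_rewrite 1 [hHerm.spectral_theorem]
    rw [Unitary.conjStarAlgAut_apply, Matrix.trace_mul_cycle]
    have : (star (hHerm.eigenvectorUnitary : Matrix (Fin n) (Fin n) ℝ)) *
        (hHerm.eigenvectorUnitary : Matrix (Fin n) (Fin n) ℝ) = 1 :=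
      (Matrix.mem_unitaryGroup_iff').mp hHerm.eigenvectorUnitary.2
    rw [this, one_mul, Matrix.trace_diagonal]
    simp
  -- AM-GM: det M = ∏ eigenvalues ≤ (trace/n)^n ≤ B^n
  have hlam : ∀ i, 0 ≤ hHerm.eigenvalues i := hPSD.eigenvalues_nonneg
  have hdetM : M.det = ∏ i, hHerm.eigenvalues i := by
    have := hHerm.det_eq_prod_eigenvalues
    simpa using this
  have hgm : ∏ i, (hHerm.eigenvalues i) ^ ((n : ℝ)⁻¹) ≤
      ∑ i, (n : ℝ)⁻¹ * hHerm.eigenvalues i := by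
    apply Real.geom_mean_le_arith_mean_weighted
    · intro i _; positivity
    · rw [Finset.sum_const]; simp; field_simp
    · intro i _; exact hlam i
  have hsum : ∑ i, (n : ℝ)⁻¹ * hHerm.eigenvalues i ≤ B := by
    rw [← Finset.mul_sum, ← htr_eig]
    rw [inv_mul_le_iff₀ hn0]
    linarith [htrB]
  have hprod : ∏ i, hHerm.eigenvalues i ≤ B ^ (n : ℝ) := by
    have h1 : ∏ i, (hHerm.eigenvalues i) ^ ((n : ℝ)⁻¹) ≤ B := le_trans hgm hsum
    have h2 : (∏ i, (hHerm.eigenvalues i) ^ ((n : ℝ)⁻¹)) ^ (n : ℝ) ≤ B ^ (n : ℝ) := by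
      apply Real.rpow_le_rpow _ h1 (le_of_lt hn0)
      apply Finset.prod_nonneg
      intro i _
      exact Real.rpow_nonneg (hlam i) _
    calc ∏ i, hHerm.eigenvalues i
        = (∏ i, (hHerm.eigenvalues i) ^ ((n : ℝ)⁻¹)) ^ (n : ℝ) := by
          rw [← Real.finset_prod_rpow _ _ (fun i _ => Real.rpow_nonneg (hlam i) _)]
          apply Finset.prod_congr rfl
          intro i _
          rw [← Real.rpow_mul (hlam i), inv_mul_cancel₀ (ne_of_gt hn0), Real.rpow_one]
      _ ≤ B ^ (n : ℝ) := h2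
  -- det M = (det A)^2
  have hdetAM : M.det = (A.det) ^ 2 := by
    rw [hM, Matrix.det_mul, Matrix.det_conjTranspose, sq]
    simp
  have hsq : (A.det) ^ 2 ≤ B ^ (n : ℝ) := by
    rw [← hdetAM, hdetM]; exact hprod
  have habs : |A.det| = Real.sqrt ((A.det) ^ 2) := (Real.sqrt_sq_eq_abs _).symm
  rw [habs]
  calc Real.sqrt ((A.det) ^ 2) ≤ Real.sqrt (B ^ (n : ℝ)) := Real.sqrt_le_sqrt hsq
    _ = B ^ ((n : ℝ) / 2) := by
        rw [Real.sqrt_eq_rpow, ← Real.rpow_mul hB0]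
        ring_nf
end

section
/- Let A = (A_{i,j})_{i,j≥1} be an infinite array of real numbers such that the series ∑_i |A_{i,i}| and ∑_{i,j} |A_{i,j}|² converge. For each natural number n ≥ 2 let A(n) denote the n×n matrix of entries A_{i,j} with 1 ≤ i, j ≤ n. If the sequence det(I − A(n)) converges to a real number L as n → ∞, then |L| ≤ exp((1/2)·∑_{i,j=1}^∞ A_{i,j}² − ∑_{i=1}^∞ A_{i,i}). -/
open Filter

open Matrix Finset

theorem gramSchmidt_repr_diag {𝕜 E ι : Type*} [RCLike 𝕜] [NormedAddCommGroup E]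
    [InnerProductSpace 𝕜 E] [LinearOrder ι] [LocallyFiniteOrderBot ι] [WellFoundedLT ι]
    (b : Module.Basis ι 𝕜 E) (i : ι) : b.repr (InnerProductSpace.gramSchmidt 𝕜 (⇑b) i) i = 1 := by
  have hd := InnerProductSpace.gramSchmidt_def' 𝕜 (⇑b) i
  have h2 := congrArg (fun v => (b.repr v) i) hd
  simp only [map_add, map_sum, Finsupp.coe_finset_sum, Finset.sum_apply, Finsupp.add_apply,
    Module.Basis.repr_self, Finsupp.single_eq_same] at h2
  have hz : ∀ j ∈ Finset.Iio i, (b.repr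
      ((Submodule.span 𝕜 {InnerProductSpace.gramSchmidt 𝕜 (⇑b) j}).starProjection (b i))) i = 0 := by
    intro j hj
    obtain ⟨c, hc⟩ := Submodule.mem_span_singleton.mp
      (Submodule.starProjection_apply_mem (Submodule.span 𝕜 {InnerProductSpace.gramSchmidt 𝕜 (⇑b) j}) (b i))
    rw [← hc, _root_.map_smul]
    have h0 : b.repr (InnerProductSpace.gramSchmidt 𝕜 (⇑b) j) i = 0 := InnerProductSpace.gramSchmidt_triangular (Finset.mem_Iio.mp hj) b
    simp [h0]
  rw [Finset.sum_eq_zero hz, add_zero] at h2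
  exact h2.symm

theorem hadamard_aux {m : Type*} [Fintype m] [LinearOrder m] [LocallyFiniteOrderBot m]
    (M : Matrix m m ℝ) : M.det ^ 2 ≤ ∏ i, ∑ j, M i j ^ 2 := by
  by_cases h : IsUnit M.det
  · have hMu : Invertible M := M.invertibleOfIsUnitDet h
    have hMt : Invertible Mᵀ := M.invertibleTranspose
    have hS : (M * Mᴴ).PosDef := by
      refine Matrix.PosDef.of_dotProduct_mulVec_pos (Matrix.isHermitian_mul_conjTranspose_self M) fun x hx => ?_
      have hy : Mᵀ *ᵥ x ≠ 0 := by
        intro h0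
        exact hx (Matrix.mulVec_injective_of_invertible Mᵀ
          (h0.trans (Matrix.mulVec_zero Mᵀ).symm))
      have key : star x ⬝ᵥ (M * Mᴴ) *ᵥ x = (Mᵀ *ᵥ x) ⬝ᵥ (Mᵀ *ᵥ x) := by
        rw [Matrix.conjTranspose_eq_transpose_of_trivial, star_trivial, ← Matrix.mulVec_mulVec,
          Matrix.dotProduct_mulVec, Matrix.mulVec_transpose]
      rw [key]
      rcases (Finset.sum_nonneg fun i _ => mul_self_nonneg ((Mᵀ *ᵥ x) i)).lt_or_eq with h' | h'
      · exact h'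
      · exact absurd (dotProduct_self_eq_zero.mp h'.symm) hy
    -- diagonal entries of lowerInv are 1
    have hdiag1 : ∀ i, LDL.lowerInv hS i i = 1 := by
      intro i
      letI m1 := Matrix.toNormedAddCommGroup _ hS.transpose
      letI m2 := Matrix.toInnerProductSpace _ hS.transpose.posSemidef
      have := @gramSchmidt_repr_diag ℝ (m → ℝ) m _ m1 m2 _ _ _ (Pi.basisFun ℝ m) i
      rw [Pi.basisFun_repr] at this
      exact this
    have hlowtri : (LDL.lowerInv hS).BlockTriangular OrderDual.toDual :=
      fun i j hij => LDL.lowerInv_triangular hS hij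
    have hdetinv : (LDL.lowerInv hS).det = 1 := by
      rw [Matrix.det_of_lowerTriangular _ hlowtri]
      exact Finset.prod_eq_one fun i _ => hdiag1 i
    have hLtri : (LDL.lower hS).BlockTriangular OrderDual.toDual :=
      Matrix.blockTriangular_inv_of_blockTriangular hlowtri
    have hdetL : (LDL.lower hS).det = 1 := by
      rw [LDL.lower, Matrix.det_nonsing_inv, hdetinv, Ring.inverse_one]
    have hmul : LDL.lowerInv hS * LDL.lower hS = 1 := by
      rw [LDL.lower]
      exact Matrix.mul_nonsing_inv _ (by rw [hdetinv]; exact isUnit_one)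
    have hL1 : ∀ i, LDL.lower hS i i = 1 := by
      intro i
      have h1 : (LDL.lowerInv hS * LDL.lower hS) i i = (1 : ℝ) := by rw [hmul]; simp
      rw [Matrix.mul_apply] at h1
      rw [Finset.sum_eq_single i (fun k _ hk => ?_) (by simp)] at h1
      · rw [hdiag1 i, one_mul] at h1
        exact h1
      · rcases lt_or_gt_of_ne hk with hlt | hgt
        · rw [hLtri hlt, mul_zero]
        · rw [LDL.lowerInv_triangular hS hgt, zero_mul]
    have hd0 : ∀ k, 0 ≤ LDL.diagEntries hS k := by
      intro k
      have h2 := hS.posSemidef.dotProduct_mulVec_nonneg (star (LDL.lowerInv hS k))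
      have : LDL.diagEntries hS k =
          star (star (LDL.lowerInv hS k)) ⬝ᵥ ((M * Mᴴ) *ᵥ star (LDL.lowerInv hS k)) := by
        rw [LDL.diagEntries, EuclideanSpace.inner_toLp_toLp, dotProduct_comm]
      rw [this]
      exact h2
    -- S i i in terms of L and D
    have hSdiag : ∀ i, (M * Mᴴ) i i = ∑ k, LDL.diagEntries hS k * (LDL.lower hS i k) ^ 2 := by
      intro i
      conv_lhs => rw [← LDL.lower_conj_diag hS]
      rw [Matrix.mul_apply]
      refine Finset.sum_congr rfl fun k _ => ?_
      rw [LDL.diag, Matrix.mul_diagonal, Matrix.conjTranspose_apply, star_trivial]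
      ring
    have hdle : ∀ i, LDL.diagEntries hS i ≤ (M * Mᴴ) i i := by
      intro i
      rw [hSdiag i]
      have h3 := Finset.single_le_sum
        (f := fun k => LDL.diagEntries hS k * (LDL.lower hS i k) ^ 2)
        (fun k _ => mul_nonneg (hd0 k) (sq_nonneg _)) (Finset.mem_univ i)
      refine le_trans (le_of_eq ?_) h3
      rw [hL1 i]
      ring
    have hdet2 : M.det ^ 2 = ∏ i, LDL.diagEntries hS i := by
      have h1 : (M * Mᴴ).det = M.det ^ 2 := by
        rw [Matrix.det_mul, Matrix.det_conjTranspose, star_trivial, sq]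
      have h2 : (M * Mᴴ).det = ∏ i, LDL.diagEntries hS i := by
        conv_lhs => rw [← LDL.lower_conj_diag hS]
        rw [Matrix.det_mul, Matrix.det_mul, hdetL, Matrix.det_conjTranspose, hdetL,
          star_trivial, one_mul, mul_one, LDL.diag, Matrix.det_diagonal]
      rw [← h1, h2]
    rw [hdet2]
    refine Finset.prod_le_prod (fun i _ => hd0 i) fun i _ => ?_
    refine (hdle i).trans (le_of_eq ?_)
    simp [Matrix.mul_apply, Matrix.conjTranspose_apply, sq]
  · have h0 : M.det = 0 := by simpa [isUnit_iff_ne_zero] using h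
    rw [h0]
    simpa using Finset.prod_nonneg
      (fun i _ => Finset.sum_nonneg fun j (_ : j ∈ Finset.univ) => sq_nonneg (M i j))

theorem hadamard_fin (n : ℕ) (M : Matrix (Fin n) (Fin n) ℝ) :
    M.det ^ 2 ≤ ∏ i, ∑ j, M i j ^ 2 := by
  have h := hadamard_aux M
  convert h using 3

section MainSteps

set_option maxHeartbeats 1000000 in
theorem det_bound_step (A : ℕ → ℕ → ℝ) (n : ℕ) :
    |((1 : Matrix (Fin n) (Fin n) ℝ) - Matrix.of fun i j : Fin n => A i j).det| ≤
      Real.exp ((1 / 2) * (∑ p ∈ Finset.range n ×ˢ Finset.range n, (A p.1 p.2) ^ 2)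
        - ∑ i ∈ Finset.range n, A i i) := by
  set M : Matrix (Fin n) (Fin n) ℝ := (1 : Matrix (Fin n) (Fin n) ℝ) - Matrix.of fun i j : Fin n => A i j with hM
  have hrow : ∀ i : Fin n, ∑ j, M i j ^ 2 = 1 + (∑ j : Fin n, A (i:ℕ) (j:ℕ) ^ 2 - 2 * A i i) := by
    intro i
    have hentry : ∀ j : Fin n, M i j = (if i = j then (1:ℝ) else 0) - A i j := by
      intro j
      simp [hM, Matrix.sub_apply, Matrix.one_apply]
    have hexp : ∀ j : Fin n, M i j ^ 2 =
        (if i = j then (1:ℝ) else 0) - 2 * (if i = j then A i i else 0) + A i j ^ 2 := by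
      intro j
      rw [hentry j]
      split_ifs with hij
      · subst hij; ring
      · ring
    rw [Finset.sum_congr rfl fun j _ => hexp j]
    rw [Finset.sum_add_distrib, Finset.sum_sub_distrib]
    simp [Finset.sum_ite_eq]
    ring
  have hhad := hadamard_fin n M
  have hprod : ∏ i : Fin n, (1 + (∑ j : Fin n, A (i:ℕ) (j:ℕ) ^ 2 - 2 * A i i)) ≤
      Real.exp (∑ i : Fin n, (∑ j : Fin n, A (i:ℕ) (j:ℕ) ^ 2 - 2 * A i i)) := by
    rw [Real.exp_sum]
    refine Finset.prod_le_prod (fun i _ => ?_) (fun i _ => ?_)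
    · rw [← hrow i]
      exact Finset.sum_nonneg fun j _ => sq_nonneg _
    · have := Real.add_one_le_exp (∑ j : Fin n, A (i:ℕ) (j:ℕ) ^ 2 - 2 * A i i)
      linarith
  have hsum : ∑ i : Fin n, (∑ j : Fin n, A (i:ℕ) (j:ℕ) ^ 2 - 2 * A i i) =
      (∑ p ∈ Finset.range n ×ˢ Finset.range n, (A p.1 p.2) ^ 2)
        - 2 * ∑ i ∈ Finset.range n, A i i := by
    rw [Finset.sum_sub_distrib]
    congr 1
    · rw [Finset.sum_product]
      rw [← Fin.sum_univ_eq_sum_range (fun i => ∑ j ∈ Finset.range n, A i j ^ 2)]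
      exact Finset.sum_congr rfl fun i _ =>
        Fin.sum_univ_eq_sum_range (fun j => A (i:ℕ) j ^ 2) n
    · rw [Finset.mul_sum, ← Fin.sum_univ_eq_sum_range (fun i => 2 * A i i)]
  have hdet2 : M.det ^ 2 ≤ Real.exp ((∑ p ∈ Finset.range n ×ˢ Finset.range n, (A p.1 p.2) ^ 2)
      - 2 * ∑ i ∈ Finset.range n, A i i) := by
    rw [← hsum]
    refine hhad.trans ?_
    refine le_trans (le_of_eq ?_) hprod
    exact Finset.prod_congr rfl fun i _ => hrow i
  have key : Real.exp ((∑ p ∈ Finset.range n ×ˢ Finset.range n, (A p.1 p.2) ^ 2)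
      - 2 * ∑ i ∈ Finset.range n, A i i) =
      (Real.exp ((1 / 2) * (∑ p ∈ Finset.range n ×ˢ Finset.range n, (A p.1 p.2) ^ 2)
        - ∑ i ∈ Finset.range n, A i i)) ^ 2 := by
    rw [sq, ← Real.exp_add]
    congr 1
    ring
  calc |M.det| = Real.sqrt (M.det ^ 2) := (Real.sqrt_sq_eq_abs _).symm
    _ ≤ Real.sqrt ((Real.exp ((1 / 2) * (∑ p ∈ Finset.range n ×ˢ Finset.range n, (A p.1 p.2) ^ 2)
        - ∑ i ∈ Finset.range n, A i i)) ^ 2) := Real.sqrt_le_sqrt (by rw [← key]; exact hdet2)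
    _ = _ := Real.sqrt_sq (Real.exp_nonneg _)

end MainSteps

theorem vonKoch_infinite_determinant_bound (A : ℕ → ℕ → ℝ)
    (hdiag : Summable fun i => |A i i|)
    (hsq : Summable fun p : ℕ × ℕ => |A p.1 p.2| ^ 2)
    (L : ℝ)
    (hL : Tendsto
      (fun n : ℕ =>
        ((1 : Matrix (Fin n) (Fin n) ℝ) - Matrix.of fun i j : Fin n => A i j).det)
      atTop (nhds L)) :
    |L| ≤ Real.exp ((1 / 2) * (∑' p : ℕ × ℕ, (A p.1 p.2) ^ 2) - ∑' i, A i i) := by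
  have hsq' : Summable fun p : ℕ × ℕ => (A p.1 p.2) ^ 2 := by
    simpa [sq_abs] using hsq
  have hfin : Tendsto (fun n : ℕ => Finset.range n ×ˢ Finset.range n) atTop atTop := by
    refine Filter.tendsto_atTop_finset_of_monotone (fun a b hab => ?_) (fun p => ?_)
    · exact Finset.product_subset_product (Finset.range_subset_range.2 hab) (Finset.range_subset_range.2 hab)
    · exact ⟨max p.1 p.2 + 1, by
        simp only [Finset.mem_product, Finset.mem_range]
        omega⟩
  have hS : Tendsto (fun n : ℕ => ∑ p ∈ Finset.range n ×ˢ Finset.range n, (A p.1 p.2) ^ 2)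
      atTop (nhds (∑' p : ℕ × ℕ, (A p.1 p.2) ^ 2)) := hsq'.hasSum.comp hfin
  have hT : Tendsto (fun n : ℕ => ∑ i ∈ Finset.range n, A i i)
      atTop (nhds (∑' i, A i i)) := hdiag.of_abs.hasSum.tendsto_sum_nat
  have hU : Tendsto (fun n : ℕ =>
      Real.exp ((1 / 2) * (∑ p ∈ Finset.range n ×ˢ Finset.range n, (A p.1 p.2) ^ 2)
        - ∑ i ∈ Finset.range n, A i i)) atTop
      (nhds (Real.exp ((1 / 2) * (∑' p : ℕ × ℕ, (A p.1 p.2) ^ 2) - ∑' i, A i i))) :=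
    (Real.continuous_exp.tendsto _).comp ((hS.const_mul _).sub hT)
  exact le_of_tendsto_of_tendsto' hL.abs hU (fun n => det_bound_step A n)
end
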